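/- arXiv:2411.08797 — 9 statements merged into one kernel-verified Lean document; each statement's English description precedes it below -/
import Mathlib

section
/- Let X be a set and f : X → X an acyclic function (i.e., f^k(x) ≠ x for all x ∈ X and k ≥ 1), and let r be a positive integer. Let D_r be the directed graph on ℕ with an edge from k to ℓ iff (k > 0 and ℓ = k − 1) or (k = 0 and ℓ ≥ r). Then there exists an r-forward-independent hitting set for f if and only if there exists a map φ : X → ℕ such that for every x ∈ X there is an edge in D_r from φ(x) to φ(f(x)). -/
set_option linter.unusedVariables false

def Acyclic {X : Type*} (f : X → X) : Prop := ∀ x : X, ∀ k : ℕ, 1 ≤ k → f^[k] x ≠ x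

def Hitting {X : Type*} (f : X → X) (H : Set X) : Prop :=
  ∀ x : X, ∃ k : ℕ, 1 ≤ k ∧ f^[k] x ∈ H

def FwdIndep {X : Type*} (f : X → X) (r : ℕ) (H : Set X) : Prop :=
  ∀ x ∈ H, ∀ k : ℕ, 1 ≤ k → f^[k] x ∈ H → r < k

def funGraph {X : Type*} (f : X → X) : SimpleGraph X where
  Adj x y := x ≠ y ∧ (f x = y ∨ f y = x)
  symm := ⟨fun x y h => ⟨h.1.symm, h.2.symm⟩⟩
  loopless := ⟨fun x h => h.1 rfl⟩

/-- `x` and `y` are reachable from one another and at graph distance at most `r`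
in the graph generated by `f`. -/
def distLE {X : Type*} (f : X → X) (r : ℕ) (x y : X) : Prop :=
  (funGraph f).Reachable x y ∧ (funGraph f).dist x y ≤ r

/-- The generating relation of the equivalence relation `F_t(U)`. -/
def classRel {X : Type*} (f : X → X) (t : ℕ) (U : Set X) : X → X → Prop :=
  fun a b => a ∈ U ∧ b ∈ U ∧ distLE f t a b

/-- The ball of radius `t` around `x` in the graph generated by `f`. -/
def ball {X : Type*} (f : X → X) (t : ℕ) (x : X) : Set X := {y | distLE f t x y}

/-- A directed path of length `k` from `u` to `w` in the digraph `E`. -/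
def DiPath {V : Type*} (E : V → V → Prop) (k : ℕ) (u w : V) : Prop :=
  ∃ p : ℕ → V, p 0 = u ∧ p k = w ∧ ∀ i < k, E (p i) (p (i+1))

/-- The digraph `D_r` on ℕ. -/
def Drel (r : ℕ) (k l : ℕ) : Prop := (0 < k ∧ l = k - 1) ∨ (k = 0 ∧ r ≤ l)

/-- A directed path of length `k` from `u` to `w` staying inside `A`. -/
def PathIn {V : Type*} (E : V → V → Prop) (A : Set V) (k : ℕ) (u w : V) : Prop :=
  ∃ p : ℕ → V, p 0 = u ∧ p k = w ∧ (∀ i ≤ k, p i ∈ A) ∧ ∀ i < k, E (p i) (p (i+1))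

/-- `A` is a strong connectivity component of the digraph `E`. -/
def IsSCC {V : Type*} (E : V → V → Prop) (A : Set V) : Prop :=
  (∀ v ∈ A, ∀ w ∈ A, ∃ k, PathIn E A k v w) ∧
  ∀ B : Set V, A ⊆ B → (∀ v ∈ B, ∀ w ∈ B, ∃ k, PathIn E B k v w) → B = A

theorem stmt0 {X : Type*} (f : X → X) (hf : Acyclic f) (r : ℕ) (hr : 1 ≤ r) :
    (∃ H : Set X, FwdIndep f r H ∧ Hitting f H) ↔
    (∃ φ : X → ℕ, ∀ x, Drel r (φ x) (φ (f x))) := by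
  classical
  constructor
  · rintro ⟨H, hInd, hHit⟩
    have hex : ∀ x : X, ∃ k, 1 ≤ k ∧ f^[k] x ∈ H := hHit
    set ψ : X → ℕ := fun x => Nat.find (hex x) with hψ
    have hψ1 : ∀ x, 1 ≤ ψ x := fun x => (Nat.find_spec (hex x)).1
    have hψH : ∀ x, f^[ψ x] x ∈ H := fun x => (Nat.find_spec (hex x)).2
    have hψmin : ∀ x k, 1 ≤ k → f^[k] x ∈ H → ψ x ≤ k := by
      intro x k h1 h2
      exact Nat.find_le ⟨h1, h2⟩
    refine ⟨fun x => ψ x - 1, fun x => ?_⟩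
    show Drel r (ψ x - 1) (ψ (f x) - 1)
    rcases eq_or_lt_of_le (hψ1 x) with h1 | h2
    · -- ψ x = 1, so f x ∈ H
      have hfx : f x ∈ H := by
        have := hψH x
        rw [← h1] at this
        simpa using this
      have hk : f^[ψ (f x)] (f x) ∈ H := hψH (f x)
      have hrk : r < ψ (f x) := hInd (f x) hfx (ψ (f x)) (hψ1 (f x)) hk
      right
      constructor
      · omega
      · omega
    · -- ψ x ≥ 2
      have h2' : 2 ≤ ψ x := h2
      have hle : ψ (f x) ≤ ψ x - 1 := by
        apply hψmin
        · omega
        · have h : ψ x = (ψ x - 1) + 1 := by omega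
          rw [← Function.iterate_succ_apply]
          rw [Nat.succ_eq_add_one, ← h]
          exact hψH x
      have hge : ψ x - 1 ≤ ψ (f x) := by
        by_contra hc
        push_neg at hc
        have hmem : f^[ψ (f x) + 1] x ∈ H := by
          rw [Function.iterate_succ_apply]
          exact hψH (f x)
        have := hψmin x (ψ (f x) + 1) (by omega) hmem
        omega
      have heq : ψ (f x) = ψ x - 1 := le_antisymm hle hge
      left
      constructor
      · omega
      · omega
  · rintro ⟨φ, hφ⟩
    -- key lemma: φ decreases by exactly 1 along the orbit while positive
    have key : ∀ j x, j ≤ φ x → φ (f^[j] x) = φ x - j := by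
      intro j
      induction j with
      | zero => intro x _; simp
      | succ n ih =>
        intro x hj
        have hn : n ≤ φ x := by omega
        have h1 : φ (f^[n] x) = φ x - n := ih x hn
        have hpos : 0 < φ (f^[n] x) := by omega
        have hedge := hφ (f^[n] x)
        rcases hedge with ⟨_, h⟩ | ⟨h0, _⟩
        · rw [Function.iterate_succ_apply', h, h1]; omega
        · omega
    refine ⟨{x | φ x = 0}, ?_, ?_⟩
    · intro x hx k hk hfk
      simp only [Set.mem_setOf_eq] at hx hfk
      have hedge := hφ x
      rcases hedge with ⟨h0, _⟩ | ⟨_, hrle⟩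
      · omega
      · -- φ (f x) ≥ r; show k > r
        by_contra hc
        push_neg at hc
        have hk1 : k - 1 ≤ φ (f x) := by omega
        have := key (k - 1) (f x) hk1
        rw [← Function.iterate_succ_apply, Nat.succ_eq_add_one] at this
        have hk' : (k - 1) + 1 = k := by omega
        rw [hk'] at this
        omega
    · intro x
      refine ⟨φ (f x) + 1, by omega, ?_⟩
      simp only [Set.mem_setOf_eq]
      have := key (φ (f x)) (f x) le_rfl
      rw [← Function.iterate_succ_apply] at this
      rw [this]
      omega
end

section
/- Let X be a set, f : X → X an acyclic function, r a positive integer, A ⊆ X a hitting set for f, and suppose every equivalence class of the equivalence relation F_r(A) on A (generated by pairs (x,y) ∈ A² whose graph distance in the graph generated by f is at most r) has finite diameter. Let H = A \ ⋃_{j=1}^r f^{-j}(A). Then H is an r-forward-independent hitting set for f. -/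
set_option linter.unusedVariables false

lemma fwdWalk {X : Type*} (f : X → X) (hf : Acyclic f) (x : X) (k : ℕ) :
    ∃ w : (funGraph f).Walk x (f^[k] x), w.length = k := by
  induction k with
  | zero => exact ⟨SimpleGraph.Walk.nil, rfl⟩
  | succ k ih =>
    obtain ⟨w, hw⟩ := ih
    have hne : f^[k] x ≠ f^[k+1] x := by
      intro h
      exact hf (f^[k] x) 1 le_rfl (by simpa [Function.iterate_succ_apply'] using h.symm)
    have hadj : (funGraph f).Adj (f^[k] x) (f^[k+1] x) :=
      ⟨hne, Or.inl (by rw [Function.iterate_succ_apply'])⟩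
    exact ⟨w.concat hadj, by rw [SimpleGraph.Walk.length_concat, hw]⟩

lemma distLE_fwd {X : Type*} (f : X → X) (hf : Acyclic f) (x : X) (k : ℕ) :
    distLE f k x (f^[k] x) := by
  obtain ⟨w, hw⟩ := fwdWalk f hf x k
  exact ⟨⟨w⟩, le_trans (SimpleGraph.dist_le w) hw.le⟩

lemma walk_decomp {X : Type*} (f : X → X) {u v : X} (w : (funGraph f).Walk u v) :
    ∃ s t, s + t = w.length ∧ f^[s] v = f^[t] u := by
  induction w with
  | nil => exact ⟨0, 0, rfl, rfl⟩
  | @cons u b v h w ih =>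
    obtain ⟨s, t, hst, heq⟩ := ih
    rcases h.2 with h1 | h2
    · exact ⟨s, t + 1, by simp [SimpleGraph.Walk.length_cons]; omega,
        by rw [Function.iterate_succ_apply, h1, heq]⟩
    · refine ⟨s + 1, t, by simp [SimpleGraph.Walk.length_cons]; omega, ?_⟩
      rw [Function.iterate_succ_apply', heq, ← h2]
      exact (Function.iterate_succ_apply' f t b).symm.trans (Function.iterate_succ_apply f t b)

lemma iterate_eq_iff {X : Type*} (f : X → X) (hf : Acyclic f) {x : X} {a b : ℕ}
    (h : f^[a] x = f^[b] x) : a = b := by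
  rcases Nat.lt_trichotomy a b with hlt | he | hgt
  · obtain ⟨c, hc⟩ := Nat.exists_eq_add_of_lt hlt
    exfalso
    apply hf (f^[a] x) (c+1) (by omega)
    rw [← Function.iterate_add_apply, show c+1+a = b by omega, ← h]
  · exact he
  · obtain ⟨c, hc⟩ := Nat.exists_eq_add_of_lt hgt
    exfalso
    apply hf (f^[b] x) (c+1) (by omega)
    rw [← Function.iterate_add_apply, show c+1+b = a by omega, h]

theorem stmt1 {X : Type*} (f : X → X) (hf : Acyclic f) (r : ℕ) (hr : 1 ≤ r)
    (A : Set X) (hA : Hitting f A)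
    (hdiam : ∀ x ∈ A, ∃ m : ℕ, ∀ y z, Relation.EqvGen (classRel f r A) x y →
      Relation.EqvGen (classRel f r A) x z → distLE f m y z)
    (H : Set X) (hH : H = A \ ⋃ j ∈ Finset.Icc 1 r, (fun y => f^[j] y) ⁻¹' A) :
    FwdIndep f r H ∧ Hitting f H := by
  subst hH
  constructor
  · intro x hx k hk hkx
    by_contra hle
    push_neg at hle
    exact hx.2 (Set.mem_biUnion (Finset.mem_Icc.mpr ⟨hk, hle⟩) hkx.1)
  · intro x
    by_contra hcon
    push_neg at hcon
    obtain ⟨k₀, hk₀, ha⟩ := hA x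
    obtain ⟨m, hm⟩ := hdiam (f^[k₀] x) ha
    have key : ∀ n : ℕ, ∃ k, k₀ ≤ k ∧ n ≤ k ∧ f^[k] x ∈ A ∧
        Relation.EqvGen (classRel f r A) (f^[k₀] x) (f^[k] x) := by
      intro n
      induction n with
      | zero => exact ⟨k₀, le_rfl, Nat.zero_le _, ha, Relation.EqvGen.refl _⟩
      | succ n ih =>
        obtain ⟨k, hkk, hnk, hkA, hEq⟩ := ih
        have hmem : f^[k] x ∈ ⋃ j ∈ Finset.Icc 1 r, (fun y => f^[j] y) ⁻¹' A := by
          by_contra hns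
          exact hcon k (le_trans hk₀ hkk) ⟨hkA, hns⟩
        simp only [Set.mem_iUnion, Finset.mem_Icc, Set.mem_preimage] at hmem
        obtain ⟨j, ⟨hj1, hjr⟩, hjA⟩ := hmem
        have hiter : f^[j] (f^[k] x) = f^[j + k] x := (Function.iterate_add_apply f j k x).symm
        refine ⟨j + k, by omega, by omega, by rw [← hiter]; exact hjA, ?_⟩
        refine hEq.trans _ _ _ (Relation.EqvGen.rel _ _ ?_)
        have hd := distLE_fwd f hf (f^[k] x) j
        rw [hiter] at hd
        exact ⟨hkA, by rw [← hiter]; exact hjA, hd.1, hd.2.trans hjr⟩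
    obtain ⟨k, hkk, hnk, hkA, hEq⟩ := key (k₀ + m + 1)
    have hd : distLE f m (f^[k₀] x) (f^[k] x) := hm _ _ (Relation.EqvGen.refl _) hEq
    have hrw : f^[k] x = f^[k - k₀] (f^[k₀] x) := by
      rw [← Function.iterate_add_apply, Nat.sub_add_cancel hkk]
    rw [hrw] at hd
    obtain ⟨p, hp⟩ := hd.1.exists_walk_length_eq_dist
    obtain ⟨s, t, hst, heq⟩ := walk_decomp f p
    have hteq : s + (k - k₀) = t :=
      iterate_eq_iff f hf (by rw [Function.iterate_add_apply]; exact heq)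
    have hdm := hd.2
    omega
end

section
/- Let x, y : ℕ → ℕ be strictly increasing sequences, let r be a positive integer, and set x(−r) = 0 by convention. Suppose that y ≤^∞ x, i.e., the set {n ∈ ℕ : y(n) ≤ x(n)} is infinite. Then there exists n ∈ ℕ such that the interval [x(2rn − r), x(2rn + r)) contains at least 2r elements of the range of y. -/
set_option linter.unusedVariables false

theorem stmt8 (x y : ℕ → ℕ) (hx : StrictMono x) (hy : StrictMono y)
    (r : ℕ) (hr : 1 ≤ r) (hdom : {n : ℕ | y n ≤ x n}.Infinite) :
    ∃ n : ℕ, 2*r ≤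
      (Set.range y ∩ Set.Ico (if n = 0 then 0 else x (2*r*n - r)) (x (2*r*n + r))).ncard := by
  by_contra hcon
  push_neg at hcon
  -- upper bound by induction
  have upper : ∀ N : ℕ, (Set.range y ∩ Set.Ico 0 (x (2*r*N + r))).ncard ≤ (N+1)*(2*r-1) := by
    intro N
    induction N with
    | zero =>
      have h0 := hcon 0
      simp only [if_pos rfl] at h0
      have : (Set.range y ∩ Set.Ico 0 (x (2*r*0 + r))).ncard < 2*r := h0
      omega
    | succ N ih =>
      have key : 2*r*(N+1) - r = 2*r*N + r := by
        have h2 : 2*r*(N+1) = 2*r*N + 2*r := by ring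
        omega
      have hle : x (2*r*N + r) ≤ x (2*r*(N+1) + r) := by
        apply hx.monotone
        have h2 : 2*r*(N+1) = 2*r*N + 2*r := by ring
        omega
      have hsplit : Set.Ico 0 (x (2*r*(N+1) + r)) =
          Set.Ico 0 (x (2*r*N + r)) ∪ Set.Ico (x (2*r*N + r)) (x (2*r*(N+1) + r)) := by
        rw [Set.Ico_union_Ico_eq_Ico (Nat.zero_le _) hle]
      have hN1 := hcon (N+1)
      rw [if_neg (Nat.succ_ne_zero N), key] at hN1
      calc (Set.range y ∩ Set.Ico 0 (x (2*r*(N+1) + r))).ncard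
          = ((Set.range y ∩ Set.Ico 0 (x (2*r*N + r))) ∪
             (Set.range y ∩ Set.Ico (x (2*r*N + r)) (x (2*r*(N+1) + r)))).ncard := by
            rw [hsplit, Set.inter_union_distrib_left]
        _ ≤ (Set.range y ∩ Set.Ico 0 (x (2*r*N + r))).ncard +
             (Set.range y ∩ Set.Ico (x (2*r*N + r)) (x (2*r*(N+1) + r))).ncard :=
            Set.ncard_union_le _ _
        _ ≤ (N+1)*(2*r-1) + (2*r-1) := by
            have := hN1
            omega
        _ = (N+1+1)*(2*r-1) := by ring
  -- pick a large m with y m ≤ x m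
  obtain ⟨m, hm, hmbig⟩ := hdom.exists_gt (2*r*(4*r))
  set q := m / (2*r) with hq
  have hq1 : 2*r*q ≤ m := Nat.mul_div_le m (2*r) |>.trans_eq rfl
  have hq2 : m < 2*r*q + 2*r := by
    have h1 := Nat.div_add_mod m (2*r)
    have h2 : m % (2*r) < 2*r := Nat.mod_lt m (by omega)
    rw [← hq] at h1
    linarith
  have hq3 : 4*r ≤ q := by
    have h1 : 2*r*(4*r) < 2*r*q + 2*r := lt_trans hmbig hq2
    have h2 : 2*r*(4*r) < 2*r*(q+1) := by
      calc 2*r*(4*r) < 2*r*q + 2*r := h1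
        _ = 2*r*(q+1) := by ring
    have := Nat.lt_of_mul_lt_mul_left h2
    omega
  set N := q + 1 with hN
  -- lower bound: y '' Iic m ⊆ range y ∩ Ico 0 (x (2*r*N + r))
  have hmlt : m < 2*r*N + r := by
    have : 2*r*N = 2*r*q + 2*r := by rw [hN]; ring
    omega
  have hfin : (Set.range y ∩ Set.Ico 0 (x (2*r*N + r))).Finite :=
    (Set.finite_Ico 0 _).inter_of_right _
  have hsub : y '' Set.Iic m ⊆ Set.range y ∩ Set.Ico 0 (x (2*r*N + r)) := by
    rintro _ ⟨i, hi, rfl⟩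
    refine ⟨Set.mem_range_self i, Nat.zero_le _, ?_⟩
    calc y i ≤ y m := hy.monotone hi
      _ ≤ x m := hm
      _ < x (2*r*N + r) := hx hmlt
  have hcard : (y '' Set.Iic m).ncard = m + 1 := by
    rw [Set.ncard_image_of_injective _ hy.injective]
    have : (Set.Iic m) = ↑(Finset.Iic m) := by simp
    rw [this, Set.ncard_coe_finset, Nat.card_Iic]
  have hlow : m + 1 ≤ (Set.range y ∩ Set.Ico 0 (x (2*r*N + r))).ncard := by
    rw [← hcard]
    exact Set.ncard_le_ncard hsub hfin
  have hup := upper N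
  -- contradiction
  have : m + 1 ≤ (N+1)*(2*r-1) := hlow.trans hup
  have hexp : (N+1)*(2*r-1) = (q+2)*(2*r-1) := by rw [hN]
  obtain ⟨s, hs⟩ : ∃ s, 2*r = s+1 := ⟨2*r-1, by omega⟩
  have h1 : m + 1 ≤ (q+2)*s := by
    rw [hexp, hs] at this; simpa using this
  have h2 : (s+1)*q ≤ m := by rw [hs] at hq1; exact hq1
  have h3 : 2*s + 2 ≤ q := by omega
  nlinarith [h1, h2, h3]
end

section
/- There is no Borel map φ : [ℕ]^ℕ → ℕ that is a homomorphism from the shift digraph to D_r, for any positive integer r. Equivalently, there is no Borel r-forward-independent hitting set for the shift map S on [ℕ]^ℕ. -/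
set_option linter.unusedVariables false

/-! ### A formalization of the Galvin–Prikry theorem, and its application -/

open Set

namespace GP

def ext' (s : Finset ℕ) (B : Set ℕ) : Set (Set ℕ) :=
  {x | ∃ z : Set ℕ, z ⊆ B ∧ z.Infinite ∧ (∀ a ∈ s, ∀ b ∈ z, a < b) ∧ x = ↑s ∪ z}

def CRam (X : Set (Set ℕ)) : Prop :=
  ∀ (s : Finset ℕ) (A : Set ℕ), A.Infinite →
    ∃ B, B ⊆ A ∧ B.Infinite ∧ (ext' s B ⊆ X ∨ ∀ x ∈ ext' s B, x ∉ X)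

lemma ext'_mono {s : Finset ℕ} {B C : Set ℕ} (h : B ⊆ C) : ext' s B ⊆ ext' s C := by
  rintro x ⟨z, hzB, hzi, hord, rfl⟩
  exact ⟨z, hzB.trans h, hzi, hord, rfl⟩

lemma inter_Ioi_infinite {A : Set ℕ} (hA : A.Infinite) (n : ℕ) : (A ∩ Ioi n).Infinite := by
  have : A \ Iic n ⊆ A ∩ Ioi n := by
    intro b hb
    exact ⟨hb.1, by simpa [Set.mem_Iic, not_le] using hb.2⟩
  exact (hA.diff (finite_Iic n)).mono this

lemma above_infinite {A : Set ℕ} (hA : A.Infinite) (s : Finset ℕ) :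
    (A ∩ {b | ∀ c ∈ s, c < b}).Infinite := by
  refine (inter_Ioi_infinite hA (s.sup id)).mono ?_
  rintro b ⟨hbA, hb⟩
  exact ⟨hbA, fun c hc => lt_of_le_of_lt (Finset.le_sup (f := id) hc) hb⟩

lemma shrink_finset {α : Type*} (Q : α → Set ℕ → Prop)
    (hmono : ∀ (x : α) (B C : Set ℕ), C ⊆ B → Q x B → Q x C)
    (hstep : ∀ (x : α) (A : Set ℕ), A.Infinite → ∃ B, B ⊆ A ∧ B.Infinite ∧ Q x B)
    (T : Finset α) : ∀ (A : Set ℕ), A.Infinite → ∃ B, B ⊆ A ∧ B.Infinite ∧ ∀ x ∈ T, Q x B := by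
  classical
  induction T using Finset.induction with
  | empty => exact fun A hA => ⟨A, le_refl _, hA, by simp⟩
  | @insert a T' hx ih =>
      intro A hA
      obtain ⟨B, hBA, hBi, hB⟩ := ih A hA
      obtain ⟨C, hCB, hCi, hC⟩ := hstep a B hBi
      refine ⟨C, hCB.trans hBA, hCi, ?_⟩
      intro x hxmem
      rcases Finset.mem_insert.1 hxmem with rfl | hxT
      · exact hC
      · exact hmono x B C hCB (hB x hxT)

lemma chain_construction (A₀ : Set ℕ) (h₀ : A₀.Infinite)
    (P : Finset ℕ → Set ℕ → Prop)
    (step : ∀ (u : Finset ℕ) (A : Set ℕ), A.Infinite → ∃ B, B ⊆ A ∧ B.Infinite ∧ P u B) :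
    ∃ (a : ℕ → ℕ) (A : ℕ → Set ℕ),
      (∀ k, (A k).Infinite) ∧ (∀ k, A (k+1) ⊆ A k) ∧ (A 0 ⊆ A₀) ∧
      (∀ k, a k ∈ A k) ∧ (∀ k, ∀ b ∈ A (k+1), a k < b) ∧
      (∀ k, P (Finset.image a (Finset.range k)) (A k)) := by
  classical
  let St := {p : Finset ℕ × Set ℕ // p.2.Infinite ∧ P p.1 p.2}
  have init : ∃ B, B ⊆ A₀ ∧ B.Infinite ∧ P ∅ B := step ∅ A₀ h₀
  let s0 : St := ⟨(∅, init.choose), init.choose_spec.2.1, init.choose_spec.2.2⟩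
  have hs0 : s0.1.2 ⊆ A₀ := init.choose_spec.1
  have nextex : ∀ (p : St), ∃ B, B ⊆ (p.1.2 ∩ Ioi (sInf p.1.2)) ∧ B.Infinite ∧
      P (insert (sInf p.1.2) p.1.1) B := fun p =>
    step _ _ (inter_Ioi_infinite p.2.1 _)
  let nxt : St → St := fun p =>
    ⟨(insert (sInf p.1.2) p.1.1, (nextex p).choose),
      (nextex p).choose_spec.2.1, (nextex p).choose_spec.2.2⟩
  let g : ℕ → St := fun k => nxt^[k] s0
  have hg_succ : ∀ k, g (k+1) = nxt (g k) := fun k => Function.iterate_succ_apply' _ _ _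
  let a : ℕ → ℕ := fun k => sInf (g k).1.2
  let A : ℕ → Set ℕ := fun k => (g k).1.2
  have hInf : ∀ k, (A k).Infinite := fun k => (g k).2.1
  have hmem : ∀ k, a k ∈ A k := fun k => Nat.sInf_mem (hInf k).nonempty
  have hsub : ∀ k, A (k+1) ⊆ A k ∩ Ioi (a k) := by
    intro k
    have := (nextex (g k)).choose_spec.1
    have he : A (k+1) = (nextex (g k)).choose := by
      show (g (k+1)).1.2 = _
      rw [hg_succ k]
    rw [he]
    exact this
  have hu : ∀ k, (g k).1.1 = Finset.image a (Finset.range k) := by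
    intro k
    induction k with
    | zero => simp [g, s0]
    | succ n ih =>
        have h2 : (g (n+1)).1.1 = insert (a n) (g n).1.1 := by
          rw [hg_succ n]
        rw [h2, ih, Finset.range_add_one, Finset.image_insert]
  refine ⟨a, A, hInf, fun k => (hsub k).trans inter_subset_left, hs0, hmem,
    fun k b hb => ((hsub k) hb).2, ?_⟩
  intro k
  have := (g k).2.2
  rwa [hu k] at this

/-! #### Galvin's lemma -/

def accepts (X : Set (Set ℕ)) (B : Set ℕ) (t : Finset ℕ) : Prop := ext' t B ⊆ X

def rejects (X : Set (Set ℕ)) (B : Set ℕ) (t : Finset ℕ) : Prop :=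
  ∀ C, C ⊆ B → C.Infinite → ¬ accepts X C t

lemma accepts_mono {X : Set (Set ℕ)} {B C : Set ℕ} {t : Finset ℕ} (h : C ⊆ B)
    (ha : accepts X B t) : accepts X C t := (ext'_mono h).trans ha

lemma rejects_mono {X : Set (Set ℕ)} {B C : Set ℕ} {t : Finset ℕ} (h : C ⊆ B)
    (hr : rejects X B t) : rejects X C t := fun D hD hDi => hr D (hD.trans h) hDi

lemma decide_one (X : Set (Set ℕ)) (t : Finset ℕ) (A : Set ℕ) (hA : A.Infinite) :
    ∃ B, B ⊆ A ∧ B.Infinite ∧ (accepts X B t ∨ rejects X B t) := by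
  by_cases h : ∃ C, C ⊆ A ∧ C.Infinite ∧ accepts X C t
  · obtain ⟨C, hCA, hCi, hC⟩ := h
    exact ⟨C, hCA, hCi, Or.inl hC⟩
  · refine ⟨A, le_refl _, hA, Or.inr ?_⟩
    intro C hCA hCi hC
    exact h ⟨C, hCA, hCi, hC⟩

def memOpen (D : Set (Finset ℕ)) : Set (Set ℕ) :=
  {x | ∃ (n : ℕ) (t : Finset ℕ), t ∈ D ∧ x ∩ Iio n = ↑t}

theorem CRam_memOpen (D : Set (Finset ℕ)) : CRam (memOpen D) := by
  classical
  set X := memOpen D with hX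
  intro s A hA
  set A₀ := A ∩ {b | ∀ c ∈ s, c < b} with hA₀def
  have h₀ : A₀.Infinite := above_infinite hA s
  -- First fusion chain: decide accept/reject for all finite extensions of s
  obtain ⟨a, AA, hAAinf, hAAdec, hAA0, haMem, haLt, hP⟩ :=
    chain_construction A₀ h₀
      (fun u B => ∀ t : Finset ℕ, t ⊆ s ∪ u → (accepts X B t ∨ rejects X B t))
      (by
        intro u A' hA'
        obtain ⟨B, hBA, hBi, hB⟩ := shrink_finset
          (fun t B => accepts X B t ∨ rejects X B t)
          (fun t B C hCB h => h.imp (accepts_mono hCB) (rejects_mono hCB))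
          (fun t A'' hA'' => decide_one X t A'' hA'')
          (s ∪ u).powerset A' hA'
        exact ⟨B, hBA, hBi, fun t ht => hB t (Finset.mem_powerset.2 ht)⟩)
  have hchain : ∀ {i j : ℕ}, i ≤ j → AA j ⊆ AA i := by
    intro i j h
    induction h with
    | refl => exact le_refl _
    | step h ih => exact (hAAdec _).trans ih
  have haStrict : StrictMono a :=
    strictMono_nat_of_lt_succ (fun n => haLt n _ (haMem (n+1)))
  have haInAA : ∀ {k m : ℕ}, k ≤ m → a m ∈ AA k := fun h => hchain h (haMem _)
  have hrangeAA0 : Set.range a ⊆ AA 0 := by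
    rintro b ⟨m, rfl⟩
    exact haInAA (Nat.zero_le m)
  have hrangeA : Set.range a ⊆ A := fun b hb => ((hAA0 (hrangeAA0 hb))).1
  have haAbove : ∀ (m : ℕ), ∀ c ∈ s, c < a m := by
    intro m c hc
    exact (hAA0 (haInAA (Nat.zero_le m))).2 c hc
  -- goodness / badness
  set GoodT : Finset ℕ → Prop :=
    fun t => ∃ k, (∀ b ∈ Set.range a, (∀ c ∈ t, c < b) → b ∈ AA k) ∧ accepts X (AA k) t
    with hGoodT
  set BadT : Finset ℕ → Prop :=
    fun t => ∃ k, (∀ b ∈ Set.range a, (∀ c ∈ t, c < b) → b ∈ AA k) ∧ rejects X (AA k) t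
    with hBadT
  have dich : ∀ t : Finset ℕ, s ⊆ t → ↑t ⊆ ↑s ∪ Set.range a → GoodT t ∨ BadT t := by
    intro t hst hts
    by_cases hempty : t \ s = ∅
    · have htsub : t ⊆ s := Finset.sdiff_eq_empty_iff_subset.1 hempty
      have h0 := hP 0 t (fun c hc => Finset.mem_union_left _ (htsub hc))
      have htail : ∀ b ∈ Set.range a, (∀ c ∈ t, c < b) → b ∈ AA 0 :=
        fun b hb _ => hrangeAA0 hb
      exact h0.imp (fun h => ⟨0, htail, h⟩) (fun h => ⟨0, htail, h⟩)
    · have hne : (t \ s).Nonempty := Finset.nonempty_iff_ne_empty.2 hempty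
      set m := (t \ s).max' hne with hm
      have hmts : m ∈ t \ s := Finset.max'_mem _ _
      have hmt : m ∈ t := (Finset.mem_sdiff.1 hmts).1
      have hms : m ∉ s := (Finset.mem_sdiff.1 hmts).2
      have hmem2 : (m : ℕ) ∈ (↑s : Set ℕ) ∪ Set.range a := hts hmt
      have hmr : (m : ℕ) ∈ Set.range a := by
        rcases hmem2 with h | h
        · exact absurd (by simpa using h) hms
        · exact h
      obtain ⟨j, hj⟩ := hmr
      have hcont : t ⊆ s ∪ Finset.image a (Finset.range (j+1)) := by
        intro c hc
        by_cases hcs : c ∈ s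
        · exact Finset.mem_union_left _ hcs
        · have hcr : (c : ℕ) ∈ Set.range a := by
            rcases hts hc with h | h
            · exact absurd (by simpa using h) hcs
            · exact h
          obtain ⟨i, hi⟩ := hcr
          have hle : a i ≤ a j := by
            rw [hi, hj]
            exact Finset.le_max' _ _ (Finset.mem_sdiff.2 ⟨hc, hcs⟩)
          have hij : i ≤ j := haStrict.le_iff_le.1 hle
          exact Finset.mem_union_right _
            (Finset.mem_image.2 ⟨i, Finset.mem_range.2 (Nat.lt_succ_of_le hij), hi⟩)
      have htail : ∀ b ∈ Set.range a, (∀ c ∈ t, c < b) → b ∈ AA (j+1) := by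
        rintro b ⟨i, rfl⟩ hb
        have h1 : a j < a i := by
          rw [hj]
          exact hb m hmt
        exact haInAA (haStrict.lt_iff_lt.1 h1)
      exact (hP (j+1) t hcont).imp (fun h => ⟨j+1, htail, h⟩) (fun h => ⟨j+1, htail, h⟩)
  -- Claim 1
  have claim1 : ∀ t : Finset ℕ, BadT t →
      {b : ℕ | b ∈ Set.range a ∧ (∀ c ∈ t, c < b) ∧ GoodT (insert b t)}.Finite := by
    intro t hbad
    obtain ⟨k₀, tail₀, hrej⟩ := hbad
    by_contra hfin
    have hinf : {b : ℕ | b ∈ Set.range a ∧ (∀ c ∈ t, c < b) ∧ GoodT (insert b t)}.Infinite := hfin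
    set C := {b : ℕ | b ∈ Set.range a ∧ (∀ c ∈ t, c < b) ∧ GoodT (insert b t)} with hC
    have hCsub : C ⊆ AA k₀ := fun b hb => tail₀ b hb.1 hb.2.1
    apply hrej C hCsub hinf
    rintro x ⟨z, hzC, hzi, hord, rfl⟩
    have hzne : z.Nonempty := hzi.nonempty
    set b := sInf z with hbdef
    have hbz : b ∈ z := Nat.sInf_mem hzne
    obtain ⟨hbr, hbt, k₁, tail₁, hacc₁⟩ := hzC hbz
    apply hacc₁
    have hord' : ∀ c ∈ insert b t, ∀ e ∈ z \ ({b} : Set ℕ), c < e := by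
      intro c hc e he
      rcases Finset.mem_insert.1 hc with rfl | hct
      · exact lt_of_le_of_ne (Nat.sInf_le he.1) (Ne.symm he.2)
      · exact hord c hct e he.1
    refine ⟨z \ {b}, ?_, hzi.diff (Set.finite_singleton b), hord', ?_⟩
    · intro e he
      exact tail₁ e (hzC he.1).1 (fun c hc => hord' c hc e he)
    · rw [Finset.coe_insert, Set.insert_union, ← Set.union_insert,
        Set.insert_diff_singleton, Set.insert_eq_self.2 hbz]
  -- the set of "exceptional" points relative to a finite set u
  set EE : Finset ℕ → Set ℕ := fun u => ⋃ t ∈ (s ∪ u).powerset,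
    {b : ℕ | b ∈ Set.range a ∧ s ⊆ t ∧ (∀ c ∈ t, c < b) ∧ GoodT (insert b t)} with hEE
  -- invariant for the second fusion
  set Inv : Finset ℕ → Prop := fun v =>
    ↑v ⊆ Set.range a ∧ ∀ t : Finset ℕ, s ⊆ t → ↑t ⊆ (↑s : Set ℕ) ∪ ↑v → BadT t with hInv
  have hEEfin : ∀ v : Finset ℕ, Inv v → (EE v).Finite := by
    intro v hv
    refine Set.Finite.biUnion (Finset.finite_toSet _) ?_
    intro t ht
    by_cases hst : s ⊆ t
    · have htv : (↑t : Set ℕ) ⊆ (↑s : Set ℕ) ∪ ↑v := by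
        intro c hc
        have := Finset.mem_powerset.1 ht hc
        rcases Finset.mem_union.1 this with h | h
        · exact Or.inl h
        · exact Or.inr h
      have hbadt : BadT t := hv.2 t hst htv
      refine (claim1 t hbadt).subset ?_
      rintro b ⟨h1, _, h3, h4⟩
      exact ⟨h1, h3, h4⟩
    · convert Set.finite_empty using 1
      ext b
      simp only [Set.mem_setOf_eq, Set.mem_empty_iff_false, iff_false]
      rintro ⟨_, h2, _⟩
      exact hst h2
  have hInvInsert : ∀ (v : Finset ℕ) (b : ℕ), Inv v → b ∈ Set.range a → b ∉ EE v →
      (∀ e ∈ s ∪ v, e < b) → Inv (insert b v) := by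
    intro v b hv hbr hbE hbab
    constructor
    · rw [Finset.coe_insert]
      exact Set.insert_subset hbr hv.1
    · intro t hst hts
      by_cases hbt : b ∈ t
      · set t' := t.erase b with ht'
        have hbs : b ∉ s := fun h => lt_irrefl b (hbab b (Finset.mem_union_left _ h))
        have hst' : s ⊆ t' := by
          intro c hc
          refine Finset.mem_erase.2 ⟨?_, hst hc⟩
          exact ne_of_lt (hbab c (Finset.mem_union_left _ hc))
        have hts' : (↑t' : Set ℕ) ⊆ (↑s : Set ℕ) ∪ ↑v := by
          intro c hc
          have hc' := Finset.mem_erase.1 hc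
          rcases hts hc'.2 with h | h
          · exact Or.inl h
          · rw [Finset.coe_insert] at h
            rcases h with h | h
            · exact absurd h hc'.1
            · exact Or.inr h
        have hbad' : BadT t' := hv.2 t' hst' hts'
        have hteq : t = insert b t' := (Finset.insert_erase hbt).symm
        have hnotgood : ¬ GoodT (insert b t') := by
          intro hgood
          apply hbE
          have ht'pow : t' ∈ (s ∪ v).powerset := by
            refine Finset.mem_powerset.2 ?_
            intro c hc
            rcases hts' hc with h | h
            · exact Finset.mem_union_left _ h
            · exact Finset.mem_union_right _ h
          refine Set.mem_biUnion ht'pow ⟨hbr, hst', ?_, hgood⟩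
          intro c hc
          rcases hts' hc with h | h
          · exact hbab c (Finset.mem_union_left _ h)
          · exact hbab c (Finset.mem_union_right _ h)
        have htsr : (↑t : Set ℕ) ⊆ (↑s : Set ℕ) ∪ Set.range a := by
          intro c hc
          rcases hts hc with h | h
          · exact Or.inl h
          · rw [Finset.coe_insert] at h
            rcases h with h | h
            · subst h; exact Or.inr hbr
            · exact Or.inr (hv.1 h)
        rcases dich t hst htsr with hg | hb
        · rw [hteq] at hg
          exact absurd hg hnotgood
        · exact hb
      · refine hv.2 t hst ?_
        intro c hc
        rcases hts hc with h | h
        · exact Or.inl h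
        · rw [Finset.coe_insert] at h
          rcases h with h | h
          · exact absurd (h ▸ hc) (by simpa [h] using hbt)
          · exact Or.inr h
  -- dichotomy at s itself
  rcases dich s (le_refl s) (fun c hc => Or.inl hc) with hgs | hbs
  · -- positive branch: some AA k accepts s
    obtain ⟨k, _, hacc⟩ := hgs
    refine ⟨AA k, ?_, hAAinf k, Or.inl hacc⟩
    exact (hchain (Nat.zero_le k)).trans (hAA0.trans inter_subset_left)
  -- negative branch: build the second fusion sequence
  obtain ⟨c, A₂, hA₂inf, hA₂dec, hA₂0, hcMem, hcLt, hP₂⟩ :=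
    chain_construction (Set.range a) (Set.infinite_range_of_injective haStrict.injective)
      (fun u B => Inv u → ∀ b ∈ B, b ∉ EE u ∧ ∀ e ∈ s ∪ u, e < b)
      (by
        intro u A' hA'
        by_cases hInvu : Inv u
        · have hE : (EE u).Finite := hEEfin u hInvu
          refine ⟨(A' \ EE u) ∩ {b | ∀ e ∈ s ∪ u, e < b}, ?_, above_infinite (hA'.diff hE) _, ?_⟩
          · exact (Set.inter_subset_left).trans diff_subset
          · rintro _ b ⟨⟨_, hbE⟩, hbab⟩
            exact ⟨hbE, hbab⟩
        · exact ⟨A', le_refl _, hA', fun h => absurd h hInvu⟩)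
  have hchain₂ : ∀ {i j : ℕ}, i ≤ j → A₂ j ⊆ A₂ i := by
    intro i j h
    induction h with
    | refl => exact le_refl _
    | step h ih => exact (hA₂dec _).trans ih
  have hcStrict : StrictMono c :=
    strictMono_nat_of_lt_succ (fun n => hcLt n _ (hcMem (n+1)))
  have hcInA₂ : ∀ {k m : ℕ}, k ≤ m → c m ∈ A₂ k := fun h => hchain₂ h (hcMem _)
  have hcRange : ∀ m, c m ∈ Set.range a := fun m => hA₂0 (hcInA₂ (Nat.zero_le m))
  have hInvk : ∀ k, Inv (Finset.image c (Finset.range k)) := by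
    intro k
    induction k with
    | zero =>
        constructor
        · simp
        · intro t hst hts
          have hts' : t ⊆ s := by
            intro x hx
            have := hts hx
            simpa using this
          have : t = s := Finset.Subset.antisymm hts' hst
          rw [this]
          exact hbs
    | succ n ih =>
        have heq : Finset.image c (Finset.range (n+1)) =
            insert (c n) (Finset.image c (Finset.range n)) := by
          rw [Finset.range_add_one, Finset.image_insert]
        rw [heq]
        have hspec := hP₂ n ih (c n) (hcMem n)
        exact hInvInsert _ (c n) ih (hcRange n) hspec.1 hspec.2
  set CC := Set.range c with hCC
  have hCCsubA : CC ⊆ A := by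
    rintro _ ⟨m, rfl⟩
    exact hrangeA (hcRange m)
  have hCrel : ∀ t : Finset ℕ, s ⊆ t → (↑t : Set ℕ) ⊆ (↑s : Set ℕ) ∪ CC → BadT t := by
    intro t hst hts
    set K := t.sup id + 1 with hK
    refine (hInvk K).2 t hst ?_
    intro x hx
    rcases hts hx with h | h
    · exact Or.inl h
    · obtain ⟨i, hi⟩ := h
      have hik : i < K := by
        have h1 : i ≤ c i := hcStrict.le_apply
        have h2 : x ≤ t.sup id := Finset.le_sup (f := id) (Finset.mem_coe.1 hx)
        exact Nat.lt_succ_of_le (le_trans (hi ▸ h1) h2)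
      refine Or.inr ?_
      rw [Finset.coe_image]
      exact ⟨i, by simpa using hik, hi⟩
  -- final: ext' s CC is disjoint from X
  refine ⟨CC, hCCsubA, Set.infinite_range_of_injective hcStrict.injective, Or.inr ?_⟩
  rintro x ⟨z, hzC, hzi, hord, rfl⟩ hxX
  obtain ⟨n, t, htD, hcut⟩ := hxX
  -- t'' = s ∪ (z ∩ Iio n)
  have hzfin : (z ∩ Iio n).Finite := (Set.finite_Iio n).subset inter_subset_right
  set t'' : Finset ℕ := s ∪ hzfin.toFinset with ht''
  have ht''coe : (↑t'' : Set ℕ) = ↑s ∪ (z ∩ Iio n) := by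
    rw [ht'', Finset.coe_union, Set.Finite.coe_toFinset]
  have hbad : BadT t'' := by
    refine hCrel t'' Finset.subset_union_left ?_
    rw [ht''coe]
    exact Set.union_subset_union_right _ ((inter_subset_left).trans hzC)
  obtain ⟨k, _, hrej⟩ := hbad
  set W := AA k ∩ Ioi (max n (t''.sup id)) with hW
  refine hrej W inter_subset_left (inter_Ioi_infinite (hAAinf k) _) ?_
  rintro y ⟨w, hwW, hwi, hword, rfl⟩
  refine ⟨n, t, htD, ?_⟩
  have hw_n : ∀ e ∈ w, n ≤ e := by
    intro e he
    have := (hwW he).2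
    simp only [Set.mem_Ioi] at this
    exact le_of_lt (lt_of_le_of_lt (le_max_left _ _) this)
  have hcut2 : (↑t'' ∪ w) ∩ Iio n = (↑t'' : Set ℕ) ∩ Iio n := by
    ext e
    simp only [Set.mem_inter_iff, Set.mem_union, Set.mem_Iio]
    constructor
    · rintro ⟨h1 | h1, h2⟩
      · exact ⟨h1, h2⟩
      · exact absurd h2 (not_lt.2 (hw_n e h1))
    · rintro ⟨h1, h2⟩
      exact ⟨Or.inl h1, h2⟩
  rw [hcut2, ht''coe, ← hcut]
  ext e
  simp only [Set.mem_inter_iff, Set.mem_union, Set.mem_Iio]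
  constructor
  · rintro ⟨h1 | ⟨h1, _⟩, h2⟩
    · exact ⟨Or.inl h1, h2⟩
    · exact ⟨Or.inr h1, h2⟩
  · rintro ⟨h1 | h1, h2⟩
    · exact ⟨Or.inl h1, h2⟩
    · exact ⟨Or.inr ⟨h1, h2⟩, h2⟩

theorem CRam_iUnion (X : ℕ → Set (Set ℕ)) (hX : ∀ n, CRam (X n)) : CRam (⋃ n, X n) := by
  classical
  intro s A hA
  set A₀ := A ∩ {b | ∀ c ∈ s, c < b} with hA₀def
  have h₀ : A₀.Infinite := above_infinite hA s
  obtain ⟨a, AA, hAAinf, hAAdec, hAA0, haMem, haLt, hPraw⟩ :=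
    chain_construction A₀ h₀
      (fun u B => ∀ (t : Finset ℕ) (m : ℕ), t ⊆ s ∪ u → m ≤ u.card →
        (ext' t B ⊆ X m ∨ ∀ x ∈ ext' t B, x ∉ X m))
      (by
        intro u A' hA'
        obtain ⟨B, hBA, hBi, hB⟩ := shrink_finset
          (fun p : Finset ℕ × ℕ => fun B => ext' p.1 B ⊆ X p.2 ∨ ∀ x ∈ ext' p.1 B, x ∉ X p.2)
          (by
            rintro ⟨t, m⟩ B C hCB h
            rcases h with h | h
            · exact Or.inl ((ext'_mono hCB).trans h)
            · exact Or.inr (fun x hx => h x (ext'_mono hCB hx)))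
          (by
            rintro ⟨t, m⟩ A'' hA''
            obtain ⟨B, h1, h2, h3⟩ := hX m t A'' hA''
            exact ⟨B, h1, h2, h3⟩)
          ((s ∪ u).powerset ×ˢ Finset.range (u.card + 1)) A' hA'
        refine ⟨B, hBA, hBi, ?_⟩
        intro t m ht hm
        exact hB (t, m) (Finset.mem_product.2
          ⟨Finset.mem_powerset.2 ht, Finset.mem_range.2 (Nat.lt_succ_of_le hm)⟩))
  have hchain : ∀ {i j : ℕ}, i ≤ j → AA j ⊆ AA i := by
    intro i j h
    induction h with
    | refl => exact le_refl _
    | step h ih => exact (hAAdec _).trans ih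
  have haStrict : StrictMono a :=
    strictMono_nat_of_lt_succ (fun n => haLt n _ (haMem (n+1)))
  have haInAA : ∀ {k m : ℕ}, k ≤ m → a m ∈ AA k := fun h => hchain h (haMem _)
  have hrangeA : Set.range a ⊆ A := by
    rintro b ⟨m, rfl⟩
    exact (hAA0 (haInAA (Nat.zero_le m))).1
  have hP : ∀ (k : ℕ) (t : Finset ℕ) (m : ℕ), t ⊆ s ∪ Finset.image a (Finset.range k) →
      m ≤ k → (ext' t (AA k) ⊆ X m ∨ ∀ x ∈ ext' t (AA k), x ∉ X m) := by
    intro k t m ht hm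
    have hcard : (Finset.image a (Finset.range k)).card = k := by
      rw [Finset.card_image_of_injective _ haStrict.injective, Finset.card_range]
    exact hPraw k t m ht (by rw [hcard]; exact hm)
  set GoodU : Finset ℕ → Prop := fun t => ∃ (m k : ℕ),
    (∀ b ∈ Set.range a, (∀ c ∈ t, c < b) → b ∈ AA k) ∧ ext' t (AA k) ⊆ X m with hGoodU
  set DD : Set (Finset ℕ) := {t | s ⊆ t ∧ GoodU t} with hDD
  obtain ⟨C, hCB, hCi, hdY⟩ := CRam_memOpen DD s (Set.range a)
    (Set.infinite_range_of_injective haStrict.injective)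
  refine ⟨C, hCB.trans hrangeA, hCi, ?_⟩
  rcases hdY with hpos | hneg
  · -- positive branch
    left
    intro x hx
    have hxY := hpos hx
    obtain ⟨z, hzC, hzi, hord, rfl⟩ := hx
    obtain ⟨n₁, t, ⟨hst, m, k, htail, hacc⟩, hcut⟩ := hxY
    refine Set.mem_iUnion.2 ⟨m, hacc ?_⟩
    set w := ((↑s : Set ℕ) ∪ z) \ Iio n₁ with hw
    have htIio : (↑t : Set ℕ) ⊆ Iio n₁ := by
      rw [← hcut]
      exact inter_subset_right
    refine ⟨w, ?_, ?_, ?_, ?_⟩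
    · intro e he
      have hez : e ∈ z := by
        rcases he.1 with h | h
        · exact absurd (htIio (Finset.mem_coe.2 (hst (Finset.mem_coe.1 h)))) he.2
        · exact h
      refine htail e (hCB (hzC hez)) ?_
      intro c hc
      have hcn : c < n₁ := htIio (Finset.mem_coe.2 hc)
      have hen : n₁ ≤ e := not_lt.1 he.2
      exact lt_of_lt_of_le hcn hen
    · exact (hzi.mono subset_union_right).diff (finite_Iio n₁)
    · intro c hc e he
      have hcn : c < n₁ := htIio (Finset.mem_coe.2 hc)
      exact lt_of_lt_of_le hcn (not_lt.1 he.2)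
    · rw [← hcut]
      exact (Set.inter_union_diff _ _).symm
  · -- negative branch
    right
    rintro x hx hxU
    obtain ⟨n₀, hxn₀⟩ := Set.mem_iUnion.1 hxU
    have hxnotY := hneg x hx
    obtain ⟨z, hzC, hzi, hord, rfl⟩ := hx
    -- indices of z
    have hzr : z ⊆ Set.range a := hzC.trans hCB
    have hIinf : {i : ℕ | a i ∈ z}.Infinite := by
      intro hfin
      apply hzi
      refine (hfin.image a).subset ?_
      intro e he
      obtain ⟨i, rfl⟩ := hzr he
      exact Set.mem_image_of_mem a he
    obtain ⟨j, hjz, hjn⟩ := hIinf.exists_gt n₀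
    set d := a j with hd
    have hdz : d ∈ z := hjz
    have hcne : {e | e ∈ z ∧ d < e}.Nonempty := by
      obtain ⟨e, hez, hde⟩ := hzi.exists_gt d
      exact ⟨e, hez, hde⟩
    set c' := sInf {e | e ∈ z ∧ d < e} with hc'
    have hc'mem : c' ∈ z ∧ d < c' := Nat.sInf_mem hcne
    have hzfin : (z ∩ Iic d).Finite := (Set.finite_Iic d).subset inter_subset_right
    set t : Finset ℕ := s ∪ hzfin.toFinset with ht
    have htcoe : (↑t : Set ℕ) = ↑s ∪ (z ∩ Iic d) := by
      rw [ht, Finset.coe_union, Set.Finite.coe_toFinset]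
    have hdt : (d : ℕ) ∈ (↑t : Set ℕ) := by
      rw [htcoe]
      exact Or.inr ⟨hdz, le_refl d⟩
    have htail : ∀ b ∈ Set.range a, (∀ c ∈ t, c < b) → b ∈ AA (j+1) := by
      rintro b ⟨i, rfl⟩ hb
      have h1 : a j < a i := hb d (Finset.mem_coe.1 hdt)
      exact haInAA (haStrict.lt_iff_lt.1 h1)
    have hcont : t ⊆ s ∪ Finset.image a (Finset.range (j+1)) := by
      intro e he
      rcases Finset.mem_union.1 he with h | h
      · exact Finset.mem_union_left _ h
      · have he2 : (e : ℕ) ∈ z ∩ Iic d := by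
          rwa [Set.Finite.mem_toFinset] at h
        obtain ⟨i, hi⟩ := hzr he2.1
        have hij : i ≤ j := haStrict.le_iff_le.1 (by rw [hi]; exact he2.2)
        exact Finset.mem_union_right _
          (Finset.mem_image.2 ⟨i, Finset.mem_range.2 (Nat.lt_succ_of_le hij), hi⟩)
    have hcutx : ((↑s : Set ℕ) ∪ z) ∩ Iio c' = ↑t := by
      rw [htcoe]
      ext e
      simp only [Set.mem_inter_iff, Set.mem_union, Set.mem_Iio, Set.mem_Iic,
        Set.mem_setOf_eq]
      constructor
      · rintro ⟨h1 | h1, h2⟩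
        · exact Or.inl h1
        · refine Or.inr ⟨h1, ?_⟩
          by_contra hde
          push_neg at hde
          have hmemset : e ∈ {e | e ∈ z ∧ d < e} := ⟨h1, hde⟩
          exact absurd (Nat.sInf_le hmemset) (not_le.2 h2)
      · rintro (h1 | h1)
        · exact ⟨Or.inl h1, hord e h1 c' hc'mem.1⟩
        · exact ⟨Or.inr h1.1, lt_of_le_of_lt h1.2 hc'mem.2⟩
    have hnotgood : ¬ GoodU t := by
      intro hgood
      exact hxnotY ⟨c', t, ⟨Finset.subset_union_left, hgood⟩, hcutx⟩
    rcases hP (j+1) t n₀ hcont (Nat.le_succ_of_le (le_of_lt hjn)) with hcase | hcase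
    · exact hnotgood ⟨n₀, j+1, htail, hcase⟩
    · refine hcase _ ?_ hxn₀
      set w := {e | e ∈ z ∧ d < e} with hwdef
      have hwAA : w ⊆ AA (j+1) := by
        intro e he
        refine htail e (hzr he.1) ?_
        intro c hc
        have : (c : ℕ) ∈ (↑s : Set ℕ) ∪ (z ∩ Iic d) := by
          rw [← htcoe]
          exact Finset.mem_coe.2 hc
        rcases this with h | h
        · exact lt_trans (hord c h d hdz) he.2
        · exact lt_of_le_of_lt h.2 he.2
      refine ⟨w, hwAA, ?_, ?_, ?_⟩
      · have : z \ Iic d ⊆ w := by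
          intro e he
          exact ⟨he.1, by simpa [Set.mem_Iic, not_le] using he.2⟩
        exact (hzi.diff (Set.finite_Iic d)).mono this
      · intro c hc e he
        have : (c : ℕ) ∈ (↑s : Set ℕ) ∪ (z ∩ Iic d) := by
          rw [← htcoe]
          exact Finset.mem_coe.2 hc
        rcases this with h | h
        · exact lt_trans (hord c h d hdz) he.2
        · exact lt_of_le_of_lt h.2 he.2
      · rw [htcoe]
        ext e
        simp only [Set.mem_union, Set.mem_inter_iff, Set.mem_Iic, hwdef, Set.mem_setOf_eq]
        constructor
        · rintro (h | h)
          · exact Or.inl (Or.inl h)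
          · rcases le_or_gt e d with hle | hlt
            · exact Or.inl (Or.inr ⟨h, hle⟩)
            · exact Or.inr ⟨h, hlt⟩
        · rintro ((h | h) | h)
          · exact Or.inl h
          · exact Or.inr h.1
          · exact Or.inr h.1


lemma infinite_of_mem_ext' {s : Finset ℕ} {B : Set ℕ} {x : Set ℕ} (h : x ∈ ext' s B) :
    x.Infinite := by
  obtain ⟨z, _, hzi, _, rfl⟩ := h
  exact hzi.mono subset_union_right

lemma CRam_compl {X : Set (Set ℕ)} (h : CRam X) : CRam Xᶜ := by
  intro s A hA
  obtain ⟨B, hBA, hBi, hd⟩ := h s A hA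
  refine ⟨B, hBA, hBi, ?_⟩
  rcases hd with hd | hd
  · exact Or.inr fun x hx hxc => hxc (hd hx)
  · exact Or.inl fun x hx => hd x hx

lemma CRam_empty : CRam (∅ : Set (Set ℕ)) := by
  intro s A hA
  exact ⟨A, le_refl _, hA, Or.inr fun x _ hx => hx⟩

lemma CRam_congr {X Y : Set (Set ℕ)} (h : ∀ x : Set ℕ, x.Infinite → (x ∈ X ↔ x ∈ Y))
    (hX : CRam X) : CRam Y := by
  intro s A hA
  obtain ⟨B, hBA, hBi, hd⟩ := hX s A hA
  refine ⟨B, hBA, hBi, ?_⟩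
  rcases hd with hd | hd
  · exact Or.inl fun x hx => (h x (infinite_of_mem_ext' hx)).1 (hd hx)
  · exact Or.inr fun x hx hxY => hd x hx ((h x (infinite_of_mem_ext' hx)).2 hxY)

def CRσ : MeasurableSpace (Set ℕ) where
  MeasurableSet' := CRam
  measurableSet_empty := CRam_empty
  measurableSet_compl := fun _ h => CRam_compl h
  measurableSet_iUnion := fun f h => CRam_iUnion f h

lemma CRam_nth_eq (k m : ℕ) : CRam {x : Set ℕ | Nat.nth (· ∈ x) k = m} := by
  classical
  refine CRam_congr (X := memOpen
    {t : Finset ℕ | m ∈ t ∧ (∀ e ∈ t, e < m + 1) ∧ t.card = k + 1}) ?_ (CRam_memOpen _)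
  intro x hx
  have hp : {i : ℕ | i ∈ x}.Infinite := by
    rwa [Set.setOf_mem_eq]
  constructor
  · rintro ⟨n, t, ⟨hmt, htlt, hcard⟩, hcut⟩
    have hmxn : (m : ℕ) ∈ x ∩ Iio n := by
      rw [hcut]
      exact Finset.mem_coe.2 hmt
    have hxt : x ∩ Iio (m+1) = ↑t := by
      have h1 : x ∩ Iio (m+1) = (x ∩ Iio n) ∩ Iio (m+1) := by
        ext e
        simp only [Set.mem_inter_iff, Set.mem_Iio]
        constructor
        · rintro ⟨h1, h2⟩
          exact ⟨⟨h1, lt_of_lt_of_le h2 (Nat.succ_le_of_lt hmxn.2)⟩, h2⟩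
        · rintro ⟨⟨h1, _⟩, h3⟩
          exact ⟨h1, h3⟩
      rw [h1, hcut]
      ext e
      simp only [Set.mem_inter_iff, Finset.mem_coe, Set.mem_Iio]
      exact ⟨fun h => h.1, fun h => ⟨h, htlt e h⟩⟩
    have hmx : (m : ℕ) ∈ x := hmxn.1
    have hfil : (Finset.range (m+1)).filter (· ∈ x) = t := by
      ext e
      simp only [Finset.mem_filter, Finset.mem_range]
      constructor
      · rintro ⟨h1, h2⟩
        exact Finset.mem_coe.1 (hxt ▸ (⟨h2, h1⟩ : e ∈ x ∩ Iio (m+1)))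
      · intro h
        have : e ∈ x ∩ Iio (m+1) := hxt ▸ Finset.mem_coe.2 h
        exact ⟨this.2, this.1⟩
    have hcount : Nat.count (· ∈ x) (m+1) = k + 1 := by
      rw [Nat.count_eq_card_filter_range, hfil, hcard]
    have hcm : Nat.count (· ∈ x) m = k := by
      have h2 := Nat.count_succ (p := (· ∈ x)) m
      rw [if_pos hmx] at h2
      omega
    have h3 := Nat.nth_count (p := (· ∈ x)) hmx
    rwa [hcm] at h3
  · intro hnth
    have hfin : (x ∩ Iio (m+1)).Finite := (Set.finite_Iio (m+1)).subset inter_subset_right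
    have hmx : (m : ℕ) ∈ x := by
      have := Nat.nth_mem_of_infinite hp k
      rwa [hnth] at this
    refine ⟨m+1, hfin.toFinset, ⟨?_, ?_, ?_⟩, ?_⟩
    · rw [Set.Finite.mem_toFinset]
      exact ⟨hmx, Nat.lt_succ_self m⟩
    · intro e he
      rw [Set.Finite.mem_toFinset] at he
      exact he.2
    · have hfil : (Finset.range (m+1)).filter (· ∈ x) = hfin.toFinset := by
        ext e
        simp only [Finset.mem_filter, Finset.mem_range, Set.Finite.mem_toFinset,
          Set.mem_inter_iff, Set.mem_Iio]
        tauto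
      have hcm : Nat.count (· ∈ x) m = k := by
        have := Nat.count_nth_of_infinite hp k
        rwa [hnth] at this
      have hcount : Nat.count (· ∈ x) (m+1) = k + 1 := by
        have h2 := Nat.count_succ (p := (· ∈ x)) m
        rw [if_pos hmx] at h2
        omega
      rw [← hfil, ← Nat.count_eq_card_filter_range, hcount]
    · rw [Set.Finite.coe_toFinset]

lemma CRam_enum_preimage {M : Set (ℕ → ℕ)} (hM : MeasurableSet M) :
    CRam ((fun (x : Set ℕ) (k : ℕ) => Nat.nth (· ∈ x) k) ⁻¹' M) := by
  letI : MeasurableSpace (Set ℕ) := CRσ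
  have hmeas : Measurable (fun (x : Set ℕ) (k : ℕ) => Nat.nth (· ∈ x) k) := by
    rw [measurable_pi_iff]
    intro k
    apply measurable_to_countable'
    intro m
    change CRam _
    exact CRam_nth_eq k m
  exact hmeas hM

lemma strictMono_eq_of_range_eq {f g : ℕ → ℕ} (hf : StrictMono f) (hg : StrictMono g)
    (h : Set.range f = Set.range g) : f = g := by
  funext n
  induction n using Nat.strong_induction_on with
  | _ n ih =>
    have h1 : f n ∈ Set.range g := h ▸ Set.mem_range_self n
    have h2 : g n ∈ Set.range f := h.symm ▸ Set.mem_range_self n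
    obtain ⟨j, hj⟩ := h1
    obtain ⟨i, hi⟩ := h2
    have hjn : n ≤ j := by
      by_contra hlt
      push_neg at hlt
      have : g j = f j := (ih j hlt).symm
      have : f n = f j := by rw [← hj, this]
      have := hf.injective this
      omega
    have hin : n ≤ i := by
      by_contra hlt
      push_neg at hlt
      have : f i = g i := ih i hlt
      have : g n = g i := by rw [← hi, this]
      have := hg.injective this
      omega
    have hle1 : g n ≤ f n := by
      rw [← hj]
      exact hg.monotone hjn
    have hle2 : f n ≤ g n := by
      rw [← hi]
      exact hf.monotone hin
    omega

/-- The enumeration of the "tail" of `B` starting at its `k`-th element. -/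
lemma tail_enum {B : Set ℕ} (hB : {i : ℕ | i ∈ B}.Infinite) (k : ℕ) :
    {b ∈ B | Nat.nth (· ∈ B) k ≤ b}.Infinite ∧ {b ∈ B | Nat.nth (· ∈ B) k ≤ b} ⊆ B ∧
    (fun n => Nat.nth (· ∈ {b ∈ B | Nat.nth (· ∈ B) k ≤ b}) n)
      = fun n => Nat.nth (· ∈ B) (n + k) := by
  classical
  set T := {b ∈ B | Nat.nth (· ∈ B) k ≤ b} with hT
  set g : ℕ → ℕ := fun n => Nat.nth (· ∈ B) (n + k) with hg
  have hmono := Nat.nth_strictMono hB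
  have hgmono : StrictMono g := fun a b hab => hmono (by omega)
  have hrange : Set.range g = T := by
    ext b
    constructor
    · rintro ⟨n, rfl⟩
      exact ⟨Nat.nth_mem_of_infinite hB (n+k), hmono.monotone (by omega)⟩
    · rintro ⟨hbB, hbk⟩
      have : b ∈ Set.range (Nat.nth (· ∈ B)) := by
        rw [Nat.range_nth_of_infinite hB]
        exact hbB
      obtain ⟨i, hi⟩ := this
      have hki : k ≤ i := by
        rw [← hi] at hbk
        exact hmono.le_iff_le.1 hbk
      exact ⟨i - k, by rw [hg]; simp only []; rw [Nat.sub_add_cancel hki]; exact hi⟩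
  have hTinf : T.Infinite := by
    rw [← hrange]
    exact Set.infinite_range_of_injective hgmono.injective
  refine ⟨hTinf, fun b hb => hb.1, ?_⟩
  have hTinf' : {i : ℕ | i ∈ T}.Infinite := by rwa [Set.setOf_mem_eq]
  apply strictMono_eq_of_range_eq (Nat.nth_strictMono hTinf') hgmono
  rw [Nat.range_nth_of_infinite hTinf', Set.setOf_mem_eq, hrange]

end GP

theorem stmt9 (r : ℕ) (hr : 1 ≤ r)
    (S : {x : ℕ → ℕ // StrictMono x} → {x : ℕ → ℕ // StrictMono x})
    (hS : ∀ x n, (S x).1 n = x.1 (n+1)) :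
    ¬ ∃ φ : {x : ℕ → ℕ // StrictMono x} → ℕ, Measurable φ ∧
      ∀ x, Drel r (φ x) (φ (S x)) := by
  classical
  rintro ⟨φ, hφm, hom⟩
  -- extract a measurable set in the function space representing φ⁻¹ {0}
  obtain ⟨M, hMmeas, hMeq⟩ := hφm (measurableSet_singleton (0 : ℕ))
  have hmemM : ∀ x : {x : ℕ → ℕ // StrictMono x}, x.1 ∈ M ↔ φ x = 0 := by
    intro x
    have := Set.ext_iff.1 hMeq x
    simpa using this
  -- iterates of the shift
  have hiter : ∀ (x : {x : ℕ → ℕ // StrictMono x}) (k n : ℕ), (S^[k] x).1 n = x.1 (n + k) := by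
    intro x k
    induction k generalizing x with
    | zero => intro n; rfl
    | succ k ih =>
        intro n
        rw [Function.iterate_succ_apply]
        rw [ih (S x) n, hS]
        ring_nf
  -- dynamics of φ along the shift
  have L1 : ∀ (x : {x : ℕ → ℕ // StrictMono x}) (j : ℕ), φ x = j →
      ∀ i, i ≤ j → φ (S^[i] x) = j - i := by
    intro x j hj i
    induction i with
    | zero => intro _; simpa using hj
    | succ i ih =>
        intro hij
        have hi : i ≤ j := Nat.le_of_succ_le hij
        have hprev : φ (S^[i] x) = j - i := ih hi
        have hpos : 0 < j - i := by omega
        have := hom (S^[i] x)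
        rw [hprev] at this
        rcases this with ⟨_, h2⟩ | ⟨h1, _⟩
        · rw [Function.iterate_succ_apply']
          rw [h2]
          omega
        · omega
  have L2 : ∀ x : {x : ℕ → ℕ // StrictMono x}, ∃ k, 1 ≤ k ∧ φ (S^[k] x) = 0 := by
    intro x
    by_cases hj : 1 ≤ φ x
    · refine ⟨φ x, hj, ?_⟩
      have := L1 x (φ x) rfl (φ x) le_rfl
      omega
    · have hx0 : φ x = 0 := by omega
      have := hom x
      rw [hx0] at this
      rcases this with ⟨h1, _⟩ | ⟨_, h2⟩
      · omega
      · refine ⟨φ (S x) + 1, by omega, ?_⟩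
        have h3 := L1 (S x) (φ (S x)) rfl (φ (S x)) le_rfl
        rw [Function.iterate_succ_apply]
        omega
  have L3 : ∀ x : {x : ℕ → ℕ // StrictMono x}, φ x = 0 → φ (S x) ≠ 0 := by
    intro x hx0
    have := hom x
    rw [hx0] at this
    rcases this with ⟨h1, _⟩ | ⟨_, h2⟩
    · omega
    · omega
  -- apply the Galvin–Prikry (completely Ramsey) property
  obtain ⟨B, _, hBinf, hd⟩ := GP.CRam_enum_preimage hMmeas ∅ Set.univ Set.infinite_univ
  have hBinf' : {i : ℕ | i ∈ B}.Infinite := by rwa [Set.setOf_mem_eq]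
  have hmemext : ∀ x : Set ℕ, x ⊆ B → x.Infinite → x ∈ GP.ext' ∅ B := by
    intro x hxB hxi
    exact ⟨x, hxB, hxi, by simp, by simp⟩
  -- the element of the sequence space enumerating B
  set F : Set ℕ → (ℕ → ℕ) := fun x => fun n => Nat.nth (· ∈ x) n with hF
  have hFB : StrictMono (F B) := Nat.nth_strictMono hBinf'
  set xh : {x : ℕ → ℕ // StrictMono x} := ⟨F B, hFB⟩ with hxh
  -- tails
  have htail : ∀ k : ℕ, ∃ T : Set ℕ, T ⊆ B ∧ T.Infinite ∧ F T = (S^[k] xh).1 := by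
    intro k
    obtain ⟨h1, h2, h3⟩ := GP.tail_enum hBinf' k
    refine ⟨{b ∈ B | Nat.nth (· ∈ B) k ≤ b}, h2, h1, ?_⟩
    funext n
    rw [hiter xh k n]
    show Nat.nth (· ∈ _) n = _
    rw [congrFun h3 n]
  rcases hd with hpos | hneg
  · -- every infinite subset of B is in the preimage: contradiction with L3
    have hB0 : φ xh = 0 := by
      have := hpos (hmemext B (le_refl _) hBinf)
      exact (hmemM xh).1 this
    obtain ⟨T, hTB, hTinf, hTF⟩ := htail 1
    have hT0 : φ (S^[1] xh) = 0 := by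
      have hmem := hpos (hmemext T hTB hTinf)
      have : F T ∈ M := hmem
      rw [hTF] at this
      exact (hmemM _).1 this
    rw [Function.iterate_one] at hT0
    exact L3 xh hB0 hT0
  · -- no infinite subset of B is in the preimage: contradiction with hitting
    obtain ⟨k, hk1, hk0⟩ := L2 xh
    obtain ⟨T, hTB, hTinf, hTF⟩ := htail k
    have hmem : F T ∈ M := by
      rw [hTF]
      exact (hmemM _).2 hk0
    exact hneg T (hmemext T hTB hTinf) hmem
end

section
/- Let X be a set, f : X → X an acyclic function, t and d positive integers, and E an equivalence relation on X such that each E-class has finite ρ_f-diameter and each ball B_{2t(d+1)}(x) meets at most d+1 E-classes. Let A = {x ∈ X : (x, f^k(x)) ∉ E for all k ≥ 1}. Then A is a hitting set for f. -/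
set_option linter.unusedVariables false

lemma walk_iter {X : Type*} (f : X → X) :
    ∀ {a b : X} (w : (funGraph f).Walk a b),
      ∃ i j : ℕ, i + j ≤ w.length ∧ f^[i] a = f^[j] b := by
  intro a b w
  induction w with
  | nil => exact ⟨0, 0, by simp, rfl⟩
  | @cons a b c h w ih =>
    obtain ⟨i, j, hij, heq⟩ := ih
    rcases h.2 with hab | hba
    · refine ⟨i + 1, j, ?_, ?_⟩
      · simp only [SimpleGraph.Walk.length_cons]; omega
      · rw [Function.iterate_succ_apply, hab, heq]
    · rcases i with _ | i'
      · refine ⟨0, j + 1, ?_, ?_⟩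
        · simp only [SimpleGraph.Walk.length_cons]; omega
        · simp only [Function.iterate_zero_apply] at heq
          simp [Function.iterate_succ_apply', ← heq, hba]
      · refine ⟨i', j, ?_, ?_⟩
        · simp only [SimpleGraph.Walk.length_cons]; omega
        · rw [Function.iterate_succ_apply, hba] at heq
          exact heq

theorem stmt11 {X : Type*} (f : X → X) (hf : Acyclic f)
    (t d : ℕ) (ht : 1 ≤ t) (hd : 1 ≤ d)
    (E : X → X → Prop) (hE : Equivalence E)
    (hdiam : ∀ x : X, ∃ m : ℕ, ∀ y z, E x y → E x z → distLE f m y z)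
    (hball : ∀ x : X, ∃ s : Finset X, s.card ≤ d + 1 ∧
      ∀ y ∈ ball f (2*t*(d+1)) x, ∃ z ∈ s, E y z) :
    Hitting f {x : X | ∀ k : ℕ, 1 ≤ k → ¬ E x (f^[k] x)} := by
  intro x
  by_contra hcon
  push_neg at hcon
  simp only [Set.mem_setOf_eq] at hcon
  push_neg at hcon
  -- hcon : ∀ k, 1 ≤ k → ∃ m, 1 ≤ m ∧ E (f^[k] x) (f^[m] (f^[k] x))
  have hstep : ∀ k : ℕ, 1 ≤ k → ∃ m : ℕ, 1 ≤ m ∧ E (f^[k] x) (f^[m + k] x) := by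
    intro k hk
    obtain ⟨m, hm1, hm2⟩ := hcon k hk
    exact ⟨m, hm1, by rwa [Function.iterate_add_apply]⟩
  have claim : ∀ j : ℕ, ∃ k : ℕ, j + 1 ≤ k ∧ E (f x) (f^[k] x) := by
    intro j
    induction j with
    | zero =>
      obtain ⟨m, hm1, hm2⟩ := hstep 1 le_rfl
      exact ⟨m + 1, by omega, by simpa using hm2⟩
    | succ j ih =>
      obtain ⟨k, hk1, hk2⟩ := ih
      obtain ⟨m, hm1, hm2⟩ := hstep k (by omega)
      exact ⟨m + k, by omega, hE.trans hk2 hm2⟩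
  obtain ⟨m, hm⟩ := hdiam (f x)
  obtain ⟨k, hk1, hk2⟩ := claim (m + 1)
  have hdle : distLE f m (f x) (f^[k] x) := hm (f x) (f^[k] x) (hE.refl _) hk2
  obtain ⟨hr, hdist⟩ := hdle
  obtain ⟨p, hp⟩ := hr.exists_walk_length_eq_dist
  obtain ⟨i, j, hij, heq⟩ := walk_iter f p
  rw [hp] at hij
  have hij' : i + j ≤ m := le_trans hij hdist
  rw [← Function.iterate_succ_apply, ← Function.iterate_add_apply] at heq
  -- heq : f^[i+1] x = f^[j + k] x
  have hlt : i + 1 < j + k := by omega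
  have : f^[j + k - (i + 1)] (f^[i + 1] x) = f^[i + 1] x := by
    rw [← Function.iterate_add_apply]
    rw [show j + k - (i + 1) + (i + 1) = j + k by omega]
    exact heq.symm
  exact hf (f^[i + 1] x) (j + k - (i + 1)) (by omega) this
end

section
/- Let t be a positive integer, set s = 6t and r = 4s², let f : X → X be an acyclic function, and let H ⊆ X be an r-forward-independent hitting set. Define the coloring c_H : X → {0,1} as in the construction below, and set U_i = c_H^{-1}({i}). Then X = U_0 ⊔ U_1, and for each i ∈ {0,1}, every equivalence class of F_t(U_i) (the equivalence relation on U_i generated by pairs at ρ_f-distance at most t) has ρ_f-diameter at most 28t + 7. -/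
set_option linter.unusedVariables false
set_option maxHeartbeats 1000000

namespace S12

variable {X : Type*} {f : X → X}

theorem iter_inj (hf : Acyclic f) {x : X} {p q : ℕ} (h : f^[p] x = f^[q] x) : p = q := by
  rcases lt_trichotomy p q with hlt | he | hlt
  · exfalso
    apply hf (f^[p] x) (q - p) (by omega)
    rw [← Function.iterate_add_apply, (by omega : q - p + p = q)]
    exact h.symm
  · exact he
  · exfalso
    apply hf (f^[q] x) (p - q) (by omega)
    rw [← Function.iterate_add_apply, (by omega : p - q + q = p)]
    exact h

section KL
variable {H : Set X} {k : X → ℕ} {r : ℕ}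

theorem k_unique (hk : ∀ x, 1 ≤ k x ∧ f^[k x] x ∈ H ∧ ∀ j, 1 ≤ j → j < k x → f^[j] x ∉ H) (x : X) {n : ℕ} (h1 : 1 ≤ n) (h2 : f^[n] x ∈ H)
    (h3 : ∀ j, 1 ≤ j → j < n → f^[j] x ∉ H) : n = k x := by
  rcases lt_trichotomy n (k x) with h|h|h
  · exact absurd h2 ((hk x).2.2 n h1 h)
  · exact h
  · exact absurd (hk x).2.1 (h3 _ (hk x).1 h)

theorem k_iter (hk : ∀ x, 1 ≤ k x ∧ f^[k x] x ∈ H ∧ ∀ j, 1 ≤ j → j < k x → f^[j] x ∉ H) (x : X) {j : ℕ} (hj : j < k x) : k (f^[j] x) = k x - j := by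
  symm
  apply k_unique hk
  · omega
  · rw [← Function.iterate_add_apply, (show k x - j + j = k x by omega)]
    exact (hk x).2.1
  · intro l h1 h2
    rw [← Function.iterate_add_apply]
    exact (hk x).2.2 (l + j) (by omega) (by omega)

theorem anchor_gt (hk : ∀ x, 1 ≤ k x ∧ f^[k x] x ∈ H ∧ ∀ j, 1 ≤ j → j < k x → f^[j] x ∉ H) (hInd : FwdIndep f r H) (x : X) : r < k (f^[k x] x) := by
  have h1 : f^[k x] x ∈ H := (hk x).2.1
  have h2 : f^[k (f^[k x] x)] (f^[k x] x) ∈ H := (hk (f^[k x] x)).2.1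
  exact hInd _ h1 _ (hk (f^[k x] x)).1 h2

theorem notH_iter (hk : ∀ x, 1 ≤ k x ∧ f^[k x] x ∈ H ∧ ∀ j, 1 ≤ j → j < k x → f^[j] x ∉ H) (x : X) {j : ℕ} (h1 : 1 ≤ j) (h2 : j < k x) : f^[j] x ∉ H :=
  (hk x).2.2 j h1 h2

end KL

theorem divlow (a b : ℕ) : a / b * b ≤ a := Nat.div_mul_le_self a b

theorem divhigh (a : ℕ) {b : ℕ} (hb : 0 < b) : a < a / b * b + b := by
  have h := Nat.div_add_mod a b
  have h2 : a % b < b := Nat.mod_lt _ hb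
  have h3 : b * (a / b) = a / b * b := Nat.mul_comm _ _
  omega

theorem div_eq_of_close {b K K' u : ℕ} (hb : 0 < b) (hu : u < b) (h1 : K ≤ K')
    (h2 : K' ≤ K + u) (hp : K / b % 2 = K' / b % 2) : K / b = K' / b := by
  have l1 := divlow K b
  have l2 := divhigh K hb
  have q1 : K / b ≤ K' / b := Nat.div_le_div_right h1
  have q2 : K' / b ≤ K / b + 1 := by
    by_contra hq
    push_neg at hq
    have h3 : (K / b + 2) * b ≤ K' / b * b := Nat.mul_le_mul_right _ (by omega)
    have h4 := divlow K' b
    have e : (K / b + 2) * b = K / b * b + 2 * b := by ring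
    omega
  omega


theorem funnel (f : X → X) {x z : X} {α kx v : ℕ} (hzx : f^[α] x = z) (hα : α ≤ kx)
    (hv : v ≤ kx - α) : f^[kx - v] x = f^[kx - α - v] z := by
  rw [← hzx, ← Function.iterate_add_apply]
  congr 1
  omega

theorem key {X : Type*} (f : X → X) (hf : Acyclic f) (t : ℕ) (ht : 1 ≤ t)
    (s r : ℕ) (hs : s = 6*t) (hrr : r = 4*s^2)
    (H : Set X) (hInd : FwdIndep f r H)
    (k : X → ℕ)
    (hk : ∀ x, 1 ≤ k x ∧ f^[k x] x ∈ H ∧ ∀ j, 1 ≤ j → j < k x → f^[j] x ∉ H)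
    (m : ℕ) (a : ℕ → ℕ) (ha0 : a 0 = 0) (haTop : a (2*m+1) = r/2)
    (hsize : ∀ i ≤ 2*m, a (i+1) = a i + s ∨ a (i+1) = a i + s + 1)
    (c : X → ℕ) (hc01 : ∀ x, c x = 0 ∨ c x = 1)
    (hcBig : ∀ x, r/2 ≤ k x → c x = (k x / s) % 2)
    (hcT0 : ∀ x, k x < r/2 → c (f^[k x] x) = 0 → c x = (k x / s) % 2)
    (hcT1 : ∀ x, k x < r/2 → c (f^[k x] x) = 1 →
      ∀ i ≤ 2*m, a i ≤ k x → k x < a (i+1) → c x = (i+1) % 2)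
    (i : ℕ) :
    ∃ C : X → X, (∀ x, ∃ n, n ≤ 14*t ∧ C x = f^[n] x) ∧
      (∀ x y, c x = i → c y = i → ∀ α β, α + β ≤ t → f^[α] x = f^[β] y → C x = C y) := by
  classical
  have hs0 : 0 < s := by omega
  have hT : t ≤ t*t := Nat.le_mul_of_pos_left t (by omega)
  have hr144 : r = 144*(t*t) := by rw [hrr, hs]; ring
  have hs36 : s*s = 36*(t*t) := by rw [hs]; ring
  have hr2 : r/2 = 2*(s*s) := by
    have e : 4*s^2 = 2*(s*s)*2 := by ring
    rw [hrr, e]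
    omega
  set jd : X → ℕ := fun x => Nat.findGreatest (fun j => a j ≤ k x) (2*m) with hjd
  have hjdDef : ∀ x, jd x = Nat.findGreatest (fun j => a j ≤ k x) (2*m) := fun _ => rfl
  set B : X → ℕ := fun x => if r/2 ≤ k x ∨ c (f^[k x] x) = 0 then k x / s * s else a (jd x)
    with hB
  set W : X → X := fun x => f^[k x - (B x - t)] x with hW
  set Cf : X → X := fun w =>
    if h : ∃ d, d ≤ s + 2*t ∧ w ∈ H ∧ (k (f^[d] w) + t) % s = 0 ∧
        ((k (f^[d] w) + t) / s) % 2 = i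
    then f^[h.choose] w else w with hCf
  have haStep : ∀ j, j ≤ 2*m → a j + s ≤ a (j+1) ∧ a (j+1) ≤ a j + s + 1 := by
    intro j hj
    rcases hsize j hj with h|h <;> omega
  have haMono : ∀ d j, j + d ≤ 2*m+1 → a j + d*s ≤ a (j+d) := by
    intro d
    induction d with
    | zero => intro j _; simp
    | succ n ih =>
      intro j hj
      have h1 := ih j (by omega)
      have h2 := (haStep (j+n) (by omega)).1
      have h3 : a j + (n+1)*s = a j + n*s + s := by ring
      rw [(show j + (n+1) = (j+n) + 1 by omega)]
      omega
  have hjd3 : ∀ x, jd x ≤ 2*m := by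
    intro x
    rw [hjdDef]
    exact Nat.findGreatest_le _
  have hjd1 : ∀ x, a (jd x) ≤ k x := by
    intro x
    rw [hjdDef]
    exact Nat.findGreatest_spec (P := fun j => a j ≤ k x) (m := 0) (Nat.zero_le _)
      (by show a 0 ≤ k x; rw [ha0]; exact Nat.zero_le _)
  have hjd2 : ∀ x, k x < r/2 → k x < a (jd x + 1) := by
    intro x hx
    rcases Nat.lt_or_ge (jd x) (2*m) with h|h
    · by_contra hcon
      push_neg at hcon
      have hg := Nat.findGreatest_is_greatest (P := fun j => a j ≤ k x) (n := 2*m)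
        (k := jd x + 1) (by rw [← hjdDef x]; omega) (by omega)
      exact hg hcon
    · have hje : jd x = 2*m := le_antisymm (hjd3 x) h
      rw [hje, haTop]
      exact hx
  have hjdu : ∀ x j, j ≤ 2*m → a j ≤ k x → k x < a (j+1) → jd x = j := by
    intro x j hj h1 h2
    have hge : j ≤ jd x := by
      rw [hjdDef]
      exact Nat.le_findGreatest hj h1
    rcases Nat.eq_or_lt_of_le hge with h|h
    · exact h.symm
    · exfalso
      have hmono := haMono (jd x - (j+1)) (j+1) (by have := hjd3 x; omega)
      rw [(show j + 1 + (jd x - (j+1)) = jd x by omega)] at hmono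
      have h4 := hjd1 x
      omega
  have colorBlock : ∀ x, (r/2 ≤ k x ∨ c (f^[k x] x) = 0) → c x = (k x / s) % 2 := by
    intro x hx
    rcases Nat.lt_or_ge (k x) (r/2) with h|h
    · rcases hx with h'|h'
      · omega
      · exact hcT0 x h h'
    · exact hcBig x h
  have colorInt : ∀ x, ¬(r/2 ≤ k x ∨ c (f^[k x] x) = 0) → c x = (jd x + 1) % 2 := by
    intro x hx
    push_neg at hx
    have hc1 : c (f^[k x] x) = 1 := by
      rcases hc01 (f^[k x] x) with h|h
      · exact absurd h hx.2
      · exact h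
    exact hcT1 x hx.1 hc1 (jd x) (hjd3 x) (hjd1 x) (hjd2 x hx.1)
  have hBle : ∀ x, B x ≤ k x := by
    intro x
    simp only [hB]
    split
    · exact divlow _ _
    · exact hjd1 x
  have hWlow : ∀ x, B x ≤ t → W x = f^[k x] x := by
    intro x hx
    simp only [hW]
    congr 1
    omega
  have hkW : ∀ x, t < B x → k (W x) = B x - t := by
    intro x hx
    have h1 := hBle x
    have hk1 := (hk x).1
    simp only [hW]
    rw [k_iter hk x (by omega)]
    omega
  have hWnotH : ∀ x, t < B x → W x ∉ H := by
    intro x hx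
    have h1 := hBle x
    have hk1 := (hk x).1
    simp only [hW]
    exact notH_iter hk x (by omega) (by omega)
  have hCfW : ∀ w, w ∉ H → Cf w = w := by
    intro w hw
    simp only [hCf]
    rw [dif_neg]
    rintro ⟨d, _, hmem, _⟩
    exact hw hmem
  have hCfH : ∀ g d, g ∈ H → r < k g → d ≤ s + 2*t →
      (k (f^[d] g) + t) % s = 0 → ((k (f^[d] g) + t) / s) % 2 = i → Cf g = f^[d] g := by
    intro g d hmem hr hd hm hp
    have huniq : ∀ d1 d2, d1 ≤ d2 → d2 ≤ s + 2*t →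
        (k (f^[d1] g) + t) % s = 0 → ((k (f^[d1] g) + t) / s) % 2 = i →
        (k (f^[d2] g) + t) % s = 0 → ((k (f^[d2] g) + t) / s) % 2 = i → d1 = d2 := by
      intro d1 d2 h12 hd2 hm1 hp1 hm2 hp2
      have hkd1 : k (f^[d1] g) = k g - d1 := k_iter hk g (by omega)
      have hkd2 : k (f^[d2] g) = k g - d2 := k_iter hk g (by omega)
      rw [hkd1] at hm1 hp1
      rw [hkd2] at hm2 hp2
      have hdv1 : s ∣ (k g - d1 + t) := Nat.dvd_of_mod_eq_zero hm1
      have hdv2 : s ∣ (k g - d2 + t) := Nat.dvd_of_mod_eq_zero hm2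
      have hdvd : s ∣ (d2 - d1) := by
        have he : (k g - d1 + t) - (k g - d2 + t) = d2 - d1 := by omega
        rw [← he]
        exact Nat.dvd_sub hdv1 hdv2
      obtain ⟨u, hu⟩ := hdvd
      have hu01 : u = 0 ∨ u = 1 := by
        by_contra hcon
        push_neg at hcon
        have h2u : 2 ≤ u := by omega
        have := Nat.mul_le_mul_left s h2u
        omega
      rcases hu01 with h|h
      · rw [h, Nat.mul_zero] at hu
        omega
      · exfalso
        rw [h, Nat.mul_one] at hu
        have he : k g - d1 + t = (k g - d2 + t) + s := by omega
        rw [he, Nat.add_div_right _ hs0] at hp1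
        omega
    have hE : ∃ d', d' ≤ s + 2*t ∧ g ∈ H ∧ (k (f^[d'] g) + t) % s = 0 ∧
        ((k (f^[d'] g) + t) / s) % 2 = i := ⟨d, hd, hmem, hm, hp⟩
    simp only [hCf]
    rw [dif_pos hE]
    obtain ⟨hc1, _, hc3, hc4⟩ := hE.choose_spec
    rcases le_total hE.choose d with h|h
    · rw [huniq hE.choose d h hd hc3 hc4 hm hp]
    · rw [huniq d hE.choose h hc1 hm hp hc3 hc4]
  have hCfA : ∀ g, g ∈ H → c g = i → Cf g = W g := by
    intro g hmem hcg
    have hrg : r < k g := hInd g hmem (k g) (hk g).1 (hk g).2.1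
    have hPg : r/2 ≤ k g ∨ c (f^[k g] g) = 0 := Or.inl (by omega)
    have hBg : B g = k g / s * s := by simp only [hB]; rw [if_pos hPg]
    have l1 := divlow (k g) s
    have l2 := divhigh (k g) hs0
    have hbt : t < B g := by omega
    have hkWg : k (W g) = B g - t := hkW g hbt
    have hWg : W g = f^[k g - (B g - t)] g := by simp only [hW]
    rw [hWg]
    refine hCfH g (k g - (B g - t)) hmem hrg (by omega) ?_ ?_
    · rw [← hWg, hkWg, (show B g - t + t = B g by omega), hBg]
      exact Nat.mul_mod_left _ _
    · rw [← hWg, hkWg, (show B g - t + t = B g by omega), hBg, Nat.mul_div_cancel _ hs0]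
      rw [← hcBig g (by omega)]
      exact hcg
  have hMix : ∀ x y α β, c x = c y → α + β ≤ t → α < k x → β < k y → f^[α] x = f^[β] y →
      (r/2 ≤ k x ∨ c (f^[k x] x) = 0) → ¬(r/2 ≤ k y ∨ c (f^[k y] y) = 0) → False := by
    intro x y α β hcxy hab hax hby hmeet hPx hPy
    have hkzx : k (f^[α] x) = k x - α := k_iter hk x hax
    have hkzy : k (f^[β] y) = k y - β := k_iter hk y hby
    have hkk : k x - α = k y - β := by rw [← hkzx, ← hkzy, hmeet]
    have hanch : f^[k x] x = f^[k y] y := by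
      have e1 : f^[k x] x = f^[k x - α] (f^[α] x) := by
        rw [← Function.iterate_add_apply]
        congr 1
        omega
      have e2 : f^[k y] y = f^[k y - β] (f^[β] y) := by
        rw [← Function.iterate_add_apply]
        congr 1
        omega
      rw [e1, e2, hmeet, hkk]
    push_neg at hPy
    have hxbig : r/2 ≤ k x := by
      rcases hPx with h|h
      · exact h
      · exfalso
        rw [hanch] at h
        exact hPy.2 h
    have hkxlt : k x < r/2 + t := by omega
    have hdx : k x / s = 2*s := by
      apply Nat.div_eq_of_lt_le
      · have e : 2*s*s = 2*(s*s) := by ring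
        omega
      · have e : (2*s+1)*s = 2*(s*s)+s := by ring
        omega
    have hcx := colorBlock x (Or.inl hxbig)
    have hcx0 : c x = 0 := by
      rw [hcx, hdx]
      omega
    have hcy := colorInt y (by push_neg; exact hPy)
    have hjdy : jd y = 2*m := by
      apply hjdu y (2*m) le_rfl
      · have h1 := (haStep (2*m) le_rfl).1
        omega
      · rw [haTop]
        exact hPy.1
    rw [hjdy] at hcy
    omega
  have hSA : ∀ x y α β, c x = c y → α + β ≤ t → α < k x → β < k y →
      f^[α] x = f^[β] y → W x = W y := by
    intro x y α β hcxy hab hax hby hmeet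
    have hkzx : k (f^[α] x) = k x - α := k_iter hk x hax
    have hkzy : k (f^[β] y) = k y - β := k_iter hk y hby
    have hkk : k x - α = k y - β := by rw [← hkzx, ← hkzy, hmeet]
    by_cases hPx : r/2 ≤ k x ∨ c (f^[k x] x) = 0
    · by_cases hPy : r/2 ≤ k y ∨ c (f^[k y] y) = 0
      · have hcbx := colorBlock x hPx
        have hcby := colorBlock y hPy
        have hdiv : k x / s = k y / s := by
          rcases le_total (k x) (k y) with h|h
          · exact div_eq_of_close (u := t) hs0 (by omega) h (by omega)
              (by rw [← hcbx, ← hcby]; exact hcxy)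
          · exact (div_eq_of_close (u := t) hs0 (by omega) h (by omega)
              (by rw [← hcby, ← hcbx]; exact hcxy.symm)).symm
        have hBx : B x = k x / s * s := by simp only [hB]; rw [if_pos hPx]
        have hBy : B y = k y / s * s := by simp only [hB]; rw [if_pos hPy]
        have hBeq : B x = B y := by rw [hBx, hBy, hdiv]
        have hblex := hBle x
        have hbley := hBle y
        have e1 := funnel f (z := f^[α] x) rfl (le_of_lt hax) (v := B x - t) (by omega)
        have e2 := funnel f (z := f^[β] y) rfl (le_of_lt hby) (v := B y - t) (by omega)
        simp only [hW]
        rw [e1, e2, hmeet, hkk, hBeq]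
      · exact absurd (hMix x y α β hcxy hab hax hby hmeet hPx hPy) (fun h => h)
    · by_cases hPy : r/2 ≤ k y ∨ c (f^[k y] y) = 0
      · exact absurd (hMix y x β α hcxy.symm (by omega) hby hax hmeet.symm hPy hPx)
          (fun h => h)
      · have hcix := colorInt x hPx
        have hciy := colorInt y hPy
        push_neg at hPx hPy
        have hj1 : jd y ≤ jd x + 1 := by
          by_contra hcon
          push_neg at hcon
          have hy3 := hjd3 y
          have h1 := (haStep (jd x) (by omega)).1
          have h2 := (haStep (jd x + 1) (by omega)).1
          rw [(show jd x + 1 + 1 = jd x + 2 by omega)] at h2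
          have h3 := haMono (jd y - (jd x + 2)) (jd x + 2) (by omega)
          rw [(show jd x + 2 + (jd y - (jd x + 2)) = jd y by omega)] at h3
          have h4 := hjd1 y
          have h5 := hjd2 x hPx.1
          omega
        have hj2 : jd x ≤ jd y + 1 := by
          by_contra hcon
          push_neg at hcon
          have hx3 := hjd3 x
          have h1 := (haStep (jd y) (by omega)).1
          have h2 := (haStep (jd y + 1) (by omega)).1
          rw [(show jd y + 1 + 1 = jd y + 2 by omega)] at h2
          have h3 := haMono (jd x - (jd y + 2)) (jd y + 2) (by omega)
          rw [(show jd y + 2 + (jd x - (jd y + 2)) = jd x by omega)] at h3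
          have h4 := hjd1 x
          have h5 := hjd2 y hPy.1
          omega
        have hjeq : jd x = jd y := by omega
        have hBx : B x = a (jd x) := by
          simp only [hB]
          rw [if_neg (not_or.mpr ⟨by omega, hPx.2⟩)]
        have hBy : B y = a (jd y) := by
          simp only [hB]
          rw [if_neg (not_or.mpr ⟨by omega, hPy.2⟩)]
        have hBeq : B x = B y := by rw [hBx, hBy, hjeq]
        have hblex := hBle x
        have hbley := hBle y
        have e1 := funnel f (z := f^[α] x) rfl (le_of_lt hax) (v := B x - t) (by omega)
        have e2 := funnel f (z := f^[β] y) rfl (le_of_lt hby) (v := B y - t) (by omega)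
        simp only [hW]
        rw [e1, e2, hmeet, hkk, hBeq]
  have hanchcol : ∀ x, c x = i → k x ≤ t → c (f^[k x] x) = i := by
    intro x hcx hkxt
    by_cases hPx : r/2 ≤ k x ∨ c (f^[k x] x) = 0
    · have hcbx := colorBlock x hPx
      have hq0 : k x / s = 0 := Nat.div_eq_of_lt (by omega)
      rcases hPx with h|h
      · omega
      · rw [h]
        rw [hcbx, hq0] at hcx
        omega
    · have hcix := colorInt x hPx
      have hjx0 : jd x = 0 := by
        apply hjdu x 0 (by omega)
        · rw [ha0]
          exact Nat.zero_le _
        · have h1 := (haStep 0 (by omega)).1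
          omega
      rw [hjx0] at hcix
      push_neg at hPx
      rcases hc01 (f^[k x] x) with h|h
      · exact absurd h hPx.2
      · rw [h]
        omega
  have hstep : ∀ x y α β, c x = i → c y = i → α + β ≤ t → f^[α] x = f^[β] y → k x ≤ α →
      Cf (W x) = Cf (W y) := by
    intro x y α β hcx hcy hab hmeet hxa
    have hk1x := (hk x).1
    have hkxt : k x ≤ t := by omega
    have hWx : W x = f^[k x] x := hWlow x (le_trans (hBle x) hkxt)
    have hmemh : f^[k x] x ∈ H := (hk x).2.1
    have hrh : r < k (f^[k x] x) := anchor_gt hk hInd x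
    have hch : c (f^[k x] x) = i := hanchcol x hcx hkxt
    have he : f^[α] x = f^[α - k x] (f^[k x] x) := by
      rw [← Function.iterate_add_apply]
      congr 1
      omega
    by_cases hyb : k y ≤ β
    · have hk1y := (hk y).1
      have hkyt : k y ≤ t := by omega
      have hWy : W y = f^[k y] y := hWlow y (le_trans (hBle y) hkyt)
      have hmemh' : f^[k y] y ∈ H := (hk y).2.1
      have hrh' : r < k (f^[k y] y) := anchor_gt hk hInd y
      have hch' : c (f^[k y] y) = i := hanchcol y hcy hkyt
      have he' : f^[β] y = f^[β - k y] (f^[k y] y) := by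
        rw [← Function.iterate_add_apply]
        congr 1
        omega
      have hmeet' : f^[α - k x] (f^[k x] x) = f^[β - k y] (f^[k y] y) := by
        rw [← he, ← he', hmeet]
      have hWeq : W (f^[k x] x) = W (f^[k y] y) :=
        hSA _ _ _ _ (by rw [hch, hch']) (by omega) (by omega) (by omega) hmeet'
      rw [hWx, hWy, hCfA _ hmemh hch, hCfA _ hmemh' hch', hWeq]
    · push_neg at hyb
      have hkzy : k (f^[β] y) = k y - β := k_iter hk y hyb
      have hkzh : k (f^[α - k x] (f^[k x] x)) = k (f^[k x] x) - (α - k x) :=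
        k_iter hk (f^[k x] x) (by omega)
      have hky : k y - β = k (f^[k x] x) - (α - k x) := by
        rw [← hkzy, ← hkzh, ← he, hmeet]
      have hkybig : r/2 ≤ k y := by omega
      have hPy : r/2 ≤ k y ∨ c (f^[k y] y) = 0 := Or.inl hkybig
      have hBy : B y = k y / s * s := by simp only [hB]; rw [if_pos hPy]
      have l1 := divlow (k y) s
      have l2 := divhigh (k y) hs0
      have hbty : t < B y := by omega
      have hkWy : k (W y) = B y - t := hkW y hbty
      have hWyd : W y = f^[k y - (B y - t)] y := by simp only [hW]
      have hfun1 : f^[k y - (B y - t)] y = f^[(k y - β) - (B y - t)] (f^[β] y) :=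
        funnel f rfl (by omega) (by omega)
      have hfun2 : f^[(k y - β) - (B y - t)] (f^[β] y) =
          f^[k (f^[k x] x) - (B y - t)] (f^[k x] x) := by
        rw [← hmeet, he, ← Function.iterate_add_apply]
        congr 1
        omega
      have hWyh : W y = f^[k (f^[k x] x) - (B y - t)] (f^[k x] x) := by
        rw [hWyd, hfun1, hfun2]
      have hd0 : k (f^[k x] x) - (B y - t) ≤ s + 2*t := by omega
      have hdp1 : (k (f^[k (f^[k x] x) - (B y - t)] (f^[k x] x)) + t) % s = 0 := by
        rw [← hWyh, hkWy, (show B y - t + t = B y by omega), hBy]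
        exact Nat.mul_mod_left _ _
      have hdp2 : ((k (f^[k (f^[k x] x) - (B y - t)] (f^[k x] x)) + t) / s) % 2 = i := by
        rw [← hWyh, hkWy, (show B y - t + t = B y by omega), hBy,
          Nat.mul_div_cancel _ hs0]
        rw [← hcBig y hkybig]
        exact hcy
      have hCfh0 : Cf (f^[k x] x) = f^[k (f^[k x] x) - (B y - t)] (f^[k x] x) :=
        hCfH _ _ hmemh hrh hd0 hdp1 hdp2
      rw [hWx, hCfh0, ← hWyh, hCfW (W y) (hWnotH y hbty)]
  refine ⟨fun x => Cf (W x), ?_, ?_⟩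
  · intro x
    show ∃ n, n ≤ 14*t ∧ Cf (W x) = f^[n] x
    by_cases hbt : t < B x
    · refine ⟨k x - (B x - t), ?_, ?_⟩
      · by_cases hPx : r/2 ≤ k x ∨ c (f^[k x] x) = 0
        · have hBx : B x = k x / s * s := by simp only [hB]; rw [if_pos hPx]
          have l1 := divlow (k x) s
          have l2 := divhigh (k x) hs0
          omega
        · have hBx : B x = a (jd x) := by simp only [hB]; rw [if_neg hPx]
          push_neg at hPx
          have h5 := hjd2 x hPx.1
          have h6 := (haStep (jd x) (hjd3 x)).2
          have h4 := hjd1 x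
          omega
      · rw [hCfW (W x) (hWnotH x hbt)]
    · push_neg at hbt
      have hWx : W x = f^[k x] x := hWlow x hbt
      have hkxs : k x ≤ s := by
        by_cases hPx : r/2 ≤ k x ∨ c (f^[k x] x) = 0
        · have hBx : B x = k x / s * s := by simp only [hB]; rw [if_pos hPx]
          have hq0 : k x / s = 0 := by
            by_contra hq
            have h1 : 1 ≤ k x / s := Nat.one_le_iff_ne_zero.mpr hq
            have h2 := Nat.mul_le_mul_right s h1
            omega
          have h3 := divhigh (k x) hs0
          rw [hq0] at h3
          omega
        · have hBx : B x = a (jd x) := by simp only [hB]; rw [if_neg hPx]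
          push_neg at hPx
          have hjx0 : jd x = 0 := by
            rcases Nat.eq_zero_or_pos (jd x) with h|h
            · exact h
            · exfalso
              have hx3 := hjd3 x
              have h3 := haMono (jd x - 1) 1 (by omega)
              rw [(show 1 + (jd x - 1) = jd x by omega)] at h3
              have h1 := (haStep 0 (by omega)).1
              simp only [Nat.zero_add] at h1
              rw [ha0] at h1
              omega
          have h5 := hjd2 x hPx.1
          rw [hjx0] at h5
          have h6 := (haStep 0 (by omega)).2
          rw [ha0] at h6
          omega
      rw [hWx]
      by_cases hE : ∃ d, d ≤ s + 2*t ∧ (f^[k x] x) ∈ H ∧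
          (k (f^[d] (f^[k x] x)) + t) % s = 0 ∧ ((k (f^[d] (f^[k x] x)) + t) / s) % 2 = i
      · have hch : Cf (f^[k x] x) = f^[hE.choose] (f^[k x] x) := by
          simp only [hCf]
          rw [dif_pos hE]
        refine ⟨hE.choose + k x, ?_, ?_⟩
        · have := hE.choose_spec.1
          omega
        · rw [hch, Function.iterate_add_apply]
      · have hch : Cf (f^[k x] x) = f^[k x] x := by
          simp only [hCf]
          rw [dif_neg hE]
        exact ⟨k x, by omega, by rw [hch]⟩
  · intro x y hcx hcy α β hab hmeet
    show Cf (W x) = Cf (W y)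
    by_cases hax : k x ≤ α
    · exact hstep x y α β hcx hcy hab hmeet hax
    · by_cases hby : k y ≤ β
      · exact (hstep y x β α hcy hcx (by omega) hmeet.symm hby).symm
      · push_neg at hax hby
        have hWeq := hSA x y α β (by rw [hcx, hcy]) hab hax hby hmeet
        rw [hWeq]

variable {X : Type*} {f : X → X}

theorem cancel (hf : Acyclic f) {x y : X} {p q p' q' : ℕ} (h1 : f^[p] x = f^[q] y)
    (h2 : f^[p'] x = f^[q'] y) (hpp : p ≤ p') : q' = q + (p' - p) := by
  have h3 : f^[(p' - p) + p] x = f^[(p' - p) + q] y := by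
    rw [Function.iterate_add_apply, h1, ← Function.iterate_add_apply]
  rw [(show p' = (p' - p) + p by omega)] at h2
  have := iter_inj hf (x := y) (p := q') (q := (p' - p) + q) (by rw [← h2, h3])
  omega

theorem orbit_walk (hf : Acyclic f) (x : X) (p : ℕ) :
    ∃ w : (funGraph f).Walk x (f^[p] x), w.length = p := by
  induction p with
  | zero => exact ⟨SimpleGraph.Walk.nil.copy rfl (by simp), by simp⟩
  | succ n ih =>
    obtain ⟨w, hw⟩ := ih
    have hadj : (funGraph f).Adj (f^[n] x) (f^[n+1] x) := by
      refine ⟨fun h => hf (f^[n] x) 1 le_rfl ?_, Or.inl ?_⟩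
      · rw [Function.iterate_succ_apply'] at h
        exact h.symm
      · rw [Function.iterate_succ_apply']
    exact ⟨w.concat hadj, by rw [SimpleGraph.Walk.length_concat, hw]⟩

theorem distLE_of_meet (hf : Acyclic f) {x y : X} {p q n : ℕ} (h : f^[p] x = f^[q] y)
    (hpq : p + q ≤ n) : distLE f n x y := by
  obtain ⟨w1, hw1⟩ := orbit_walk hf x p
  obtain ⟨w2, hw2⟩ := orbit_walk hf y q
  refine ⟨⟨w1.append ((w2.copy rfl h.symm).reverse)⟩, ?_⟩
  calc (funGraph f).dist x y ≤ (w1.append ((w2.copy rfl h.symm).reverse)).length :=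
      SimpleGraph.dist_le _
    _ ≤ n := by
      rw [SimpleGraph.Walk.length_append, SimpleGraph.Walk.length_reverse,
        SimpleGraph.Walk.length_copy, hw1, hw2]
      omega

theorem meet_of_walk (hf : Acyclic f) {x y : X} (w : (funGraph f).Walk x y) :
    ∃ p q, p + q ≤ w.length ∧ f^[p] x = f^[q] y := by
  induction w with
  | nil => exact ⟨0, 0, by simp, rfl⟩
  | cons hadj w ih =>
    obtain ⟨p, q, hpq, hmeet⟩ := ih
    rcases hadj.2 with h1 | h1
    · refine ⟨p + 1, q, by simp at hpq ⊢; omega, ?_⟩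
      rw [Function.iterate_succ_apply, h1, hmeet]
    · rcases Nat.eq_zero_or_pos p with hp | hp
      · subst hp
        refine ⟨0, q + 1, by simp at hpq ⊢; omega, ?_⟩
        simp only [Function.iterate_zero_apply] at hmeet ⊢
        rw [Function.iterate_succ_apply', ← hmeet, h1]
      · refine ⟨p - 1, q, by simp at hpq ⊢; omega, ?_⟩
        have e : p = (p - 1) + 1 := by omega
        rw [e, Function.iterate_succ_apply] at hmeet
        rw [← h1]
        exact hmeet

theorem meet_of_distLE (hf : Acyclic f) {x y : X} {n : ℕ} (h : distLE f n x y) :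
    ∃ p q, p + q ≤ n ∧ f^[p] x = f^[q] y := by
  obtain ⟨w, hw⟩ := h.1.exists_walk_length_eq_dist
  obtain ⟨p, q, hpq, hm⟩ := meet_of_walk hf w
  have hn := h.2
  exact ⟨p, q, by omega, hm⟩
end S12

theorem stmt12 {X : Type*} (f : X → X) (hf : Acyclic f) (t : ℕ) (ht : 1 ≤ t)
    (s r : ℕ) (hs : s = 6*t) (hrr : r = 4*s^2)
    (H : Set X) (hHit : Hitting f H) (hInd : FwdIndep f r H)
    (k : X → ℕ)
    (hk : ∀ x, 1 ≤ k x ∧ f^[k x] x ∈ H ∧ ∀ j, 1 ≤ j → j < k x → f^[j] x ∉ H)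
    (m : ℕ) (a : ℕ → ℕ) (ha0 : a 0 = 0) (haTop : a (2*m+1) = r/2)
    (hsize : ∀ i ≤ 2*m, a (i+1) = a i + s ∨ a (i+1) = a i + s + 1)
    (c : X → ℕ) (hc01 : ∀ x, c x = 0 ∨ c x = 1)
    (hcBig : ∀ x, r/2 ≤ k x → c x = (k x / s) % 2)
    (hcT0 : ∀ x, k x < r/2 → c (f^[k x] x) = 0 → c x = (k x / s) % 2)
    (hcT1 : ∀ x, k x < r/2 → c (f^[k x] x) = 1 →
      ∀ i ≤ 2*m, a i ≤ k x → k x < a (i+1) → c x = (i+1) % 2) :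
    ({x | c x = 0} ∪ {x | c x = 1}) = Set.univ ∧
    ∀ i ≤ 1, ∀ y z : X, Relation.EqvGen (classRel f t {x | c x = i}) y z →
      distLE f (28*t+7) y z := by
  constructor
  · ext x
    simp only [Set.mem_union, Set.mem_setOf_eq, Set.mem_univ, iff_true]
    exact hc01 x
  · intro i hi y z hEq
    obtain ⟨C, hCb, hCstep⟩ := S12.key f hf t ht s r hs hrr H hInd k hk m a ha0 haTop
      hsize c hc01 hcBig hcT0 hcT1 i
    have hP : y = z ∨ C y = C z := by
      induction hEq with
      | rel u v huv =>
        obtain ⟨hu, hv, hd⟩ := huv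
        obtain ⟨p, q, hpq, hm⟩ := S12.meet_of_distLE hf hd
        exact Or.inr (hCstep u v hu hv p q hpq hm)
      | refl u => exact Or.inl rfl
      | symm u v _ ih =>
        rcases ih with h|h
        · exact Or.inl h.symm
        · exact Or.inr h.symm
      | trans u v w _ _ ih1 ih2 =>
        rcases ih1 with h1|h1 <;> rcases ih2 with h2|h2
        · exact Or.inl (h1.trans h2)
        · exact Or.inr (by rw [h1]; exact h2)
        · exact Or.inr (by rw [← h2]; exact h1)
        · exact Or.inr (h1.trans h2)
    rcases hP with h|h
    · subst h
      exact ⟨SimpleGraph.Reachable.refl _, by rw [SimpleGraph.dist_self]; omega⟩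
    · obtain ⟨ny, hny, hCy⟩ := hCb y
      obtain ⟨nz, hnz, hCz⟩ := hCb z
      have hm : f^[ny] y = f^[nz] z := by rw [← hCy, ← hCz, h]
      exact S12.distLE_of_meet hf hm (by omega)
end

section
/- Let t be a positive integer, f : X → X an acyclic function, and H an r-forward-independent hitting set for f, where r = 4(6t)². With c_H and the function ℓ(x) (minimal ℓ ≥ 1 such that c_H(x) ≠ c_H(f^ℓ(x))) defined as in the two-coloring construction, one has ℓ(x) ≤ 2s + 2 for every x ∈ X, where s = 6t. -/
set_option linter.unusedVariables false

theorem stmt13 {X : Type*} (f : X → X) (hf : Acyclic f) (t : ℕ) (ht : 1 ≤ t)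
    (s r : ℕ) (hs : s = 6*t) (hrr : r = 4*s^2)
    (H : Set X) (hHit : Hitting f H) (hInd : FwdIndep f r H)
    (k : X → ℕ)
    (hk : ∀ x, 1 ≤ k x ∧ f^[k x] x ∈ H ∧ ∀ j, 1 ≤ j → j < k x → f^[j] x ∉ H)
    (m : ℕ) (a : ℕ → ℕ) (ha0 : a 0 = 0) (haTop : a (2*m+1) = r/2)
    (hsize : ∀ i ≤ 2*m, a (i+1) = a i + s ∨ a (i+1) = a i + s + 1)
    (c : X → ℕ) (hc01 : ∀ x, c x = 0 ∨ c x = 1)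
    (hcBig : ∀ x, r/2 ≤ k x → c x = (k x / s) % 2)
    (hcT0 : ∀ x, k x < r/2 → c (f^[k x] x) = 0 → c x = (k x / s) % 2)
    (hcT1 : ∀ x, k x < r/2 → c (f^[k x] x) = 1 →
      ∀ i ≤ 2*m, a i ≤ k x → k x < a (i+1) → c x = (i+1) % 2)
    (L : X → ℕ)
    (hL : ∀ x, 1 ≤ L x ∧ c (f^[L x] x) ≠ c x ∧ ∀ j, 1 ≤ j → j < L x → c (f^[j] x) = c x) :
    ∀ x : X, L x ≤ 2*s + 2 := by
  -- numeric facts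
  have hs6 : 6 ≤ s := by omega
  have hs0 : 0 < s := by omega
  have hsq : s^2 = s*s := sq s
  have hrhalf : r/2 = 2*(s*s) := by rw [hrr, hsq]; generalize s*s = n; omega
  have h12 : 12*s ≤ r/2 := by rw [hrhalf]; nlinarith
  have hreq : r/2 + r/2 = r := by rw [hrhalf, hrr, hsq]; generalize s*s = n; omega
  -- hitting-time of iterates
  have hitlem : ∀ (y : X) (j : ℕ), j < k y → k (f^[j] y) = k y - j := by
    intro y j hj
    obtain ⟨g1, g2, g3⟩ := hk y
    obtain ⟨h1, h2, h3⟩ := hk (f^[j] y)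
    have e1 : f^[k y - j] (f^[j] y) = f^[k y] y := by
      rw [← Function.iterate_add_apply]; congr 1; omega
    have hub : k (f^[j] y) ≤ k y - j := by
      by_contra hcon
      push_neg at hcon
      exact h3 (k y - j) (by omega) hcon (by rw [e1]; exact g2)
    have hlb : ¬ (j + k (f^[j] y) < k y) := by
      intro hcon
      refine g3 (k (f^[j] y) + j) (by omega) (by omega) ?_
      rw [Function.iterate_add_apply]; exact h2
    omega
  have hitz : ∀ (y : X) (j : ℕ), j < k y → f^[k (f^[j] y)] (f^[j] y) = f^[k y] y := by
    intro y j hj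
    rw [hitlem y j hj, ← Function.iterate_add_apply]
    congr 1
    omega
  -- interval facts
  have astep : ∀ i ≤ 2*m, a i + s ≤ a (i+1) ∧ a (i+1) ≤ a i + s + 1 := by
    intro i hi; rcases hsize i hi with h | h <;> omega
  have amono : ∀ j, j ≤ 2*m+1 → ∀ i, i ≤ j → a i ≤ a j := by
    intro j
    induction j with
    | zero => intro _ i hi; rw [Nat.le_zero.mp hi]
    | succ n ih =>
      intro hj i hi
      by_cases h : i ≤ n
      · have h1 := astep n (by omega)
        have h2 := ih (by omega) i h
        omega
      · have h' : i = n + 1 := by omega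
        rw [h']
  have afind : ∀ j, j ≤ 2*m+1 → ∀ n, n < a j → ∃ i, i < j ∧ a i ≤ n ∧ n < a (i+1) := by
    intro j
    induction j with
    | zero => intro _ n hn; rw [ha0] at hn; omega
    | succ p ih =>
      intro hj n hn
      by_cases h : n < a p
      · obtain ⟨i, h1, h2, h3⟩ := ih (by omega) n h
        exact ⟨i, by omega, h2, h3⟩
      · exact ⟨p, by omega, by omega, hn⟩
  have ha1 : a 0 + s ≤ a 1 ∧ a 1 ≤ a 0 + s + 1 := astep 0 (by omega)
  have e01 : a (0+1) = a 1 := rfl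
  -- division helper
  have divlem : ∀ n : ℕ, s ≤ n → (n - (n % s + 1)) / s = n / s - 1 := by
    intro n hn
    obtain ⟨q', hq'⟩ : ∃ q', n / s = q' + 1 :=
      ⟨n / s - 1, by have := (Nat.one_le_div_iff hs0).mpr hn; omega⟩
    have hmod := Nat.mod_lt n hs0
    have hdm := Nat.div_add_mod n s
    have e : n - (n % s + 1) = s * q' + (s - 1) := by
      rw [hq', Nat.mul_succ] at hdm; omega
    rw [e, hq', Nat.mul_add_div hs0, Nat.div_eq_of_lt (by omega)]
    omega
  intro x
  obtain ⟨hK1, hKH, hKmin⟩ := hk x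
  -- reduction: enough to find two points in the window with distinct colors
  have pair : ∀ j1 j2 : ℕ, j1 ≤ 2*s+2 → j2 ≤ 2*s+2 →
      c (f^[j1] x) ≠ c (f^[j2] x) → L x ≤ 2*s + 2 := by
    intro j1 j2 h1 h2 hne
    by_contra hcon
    push_neg at hcon
    obtain ⟨hL1, hL2, hL3⟩ := hL x
    have e : ∀ j, j ≤ 2*s+2 → c (f^[j] x) = c x := by
      intro j hj
      rcases Nat.eq_zero_or_pos j with h | h
      · subst h; rw [Function.iterate_zero_apply]
      · exact hL3 j h (by omega)
    rw [e j1 h1, e j2 h2] at hne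
    exact hne rfl
  by_cases hKle : k x ≤ 2*s+2
  · by_cases hKa : k x ≤ s + 2
    · -- short distance to the hit; use points after the hit point z
      set z := f^[k x] x with hzdef
      have hrz : r < k z := by
        obtain ⟨hz1, hz2, _⟩ := hk z
        exact hInd z hKH (k z) hz1 hz2
      have czb : ∀ j, j ≤ 2*s+2 → c (f^[j] z) = ((k z - j)/s) % 2 := by
        intro j hj
        have hjK : j < k z := by omega
        have h1 : k (f^[j] z) = k z - j := hitlem z j hjK
        have h2 : r/2 ≤ k (f^[j] z) := by rw [h1]; omega
        rw [hcBig _ h2, h1]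
      set i0 := k z % s + 1 with hi0def
      have hi0 : i0 ≤ s := by have := Nat.mod_lt (k z) hs0; omega
      have hdiv : (k z - i0)/s = k z / s - 1 := divlem (k z) (by omega)
      have hq1 : 1 ≤ k z / s := (Nat.one_le_div_iff hs0).mpr (by omega)
      apply pair (k x) (k x + i0) (by omega) (by omega)
      have e0 : f^[k x] x = f^[0] z := by
        rw [Function.iterate_zero_apply, hzdef]
      have e1 : f^[k x + i0] x = f^[i0] z := by
        rw [hzdef, ← Function.iterate_add_apply, Nat.add_comm (k x) i0]
      rw [e0, e1, czb 0 (by omega), czb i0 (by omega), Nat.sub_zero, hdiv]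
      omega
    · -- s+3 ≤ k x ≤ 2s+2 : use points before the hit
      rcases hc01 (f^[k x] x) with hcz0 | hcz1
      · have col : ∀ j, j < k x → c (f^[j] x) = ((k x - j)/s) % 2 := by
          intro j hj
          have h1 : k (f^[j] x) = k x - j := hitlem x j hj
          have h2 : k (f^[j] x) < r/2 := by rw [h1]; omega
          have h3 : c (f^[k (f^[j] x)] (f^[j] x)) = 0 := by
            rw [hitz x j hj]; exact hcz0
          rw [hcT0 _ h2 h3, h1]
        apply pair (k x - s) (k x - s + 1) (by omega) (by omega)
        rw [col _ (by omega), col _ (by omega)]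
        have e1 : k x - (k x - s) = s := by omega
        have e2 : k x - (k x - s + 1) = s - 1 := by omega
        rw [e1, e2, Nat.div_self hs0, Nat.div_eq_of_lt (by omega)]
        omega
      · have hm1 : 1 ≤ m := by
          by_contra h
          have hm0 : m = 0 := by omega
          rw [hm0] at haTop
          simp only [Nat.mul_zero, Nat.zero_add] at haTop
          omega
        have ha2 := astep 1 (by omega)
        have colT : ∀ j, j < k x → ∀ i, i ≤ 2*m → a i ≤ k x - j → k x - j < a (i+1) →
            c (f^[j] x) = (i+1) % 2 := by
          intro j hj i hi hlo hhi
          have h1 : k (f^[j] x) = k x - j := hitlem x j hj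
          have h2 : k (f^[j] x) < r/2 := by rw [h1]; omega
          have h3 : c (f^[k (f^[j] x)] (f^[j] x)) = 1 := by
            rw [hitz x j hj]; exact hcz1
          exact hcT1 _ h2 h3 i hi (by omega) (by omega)
        apply pair (k x - a 1) (k x - a 1 + 1) (by omega) (by omega)
        rw [colT _ (by omega) 1 (by omega) (by omega) (by omega),
            colT _ (by omega) 0 (by omega) (by omega) (by omega)]
        omega
  · -- k x ≥ 2s+3
    rcases hc01 (f^[k x] x) with hcz0 | hcz1
    · have col : ∀ j, j ≤ 2*s+2 → c (f^[j] x) = ((k x - j)/s) % 2 := by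
        intro j hj
        have hjK : j < k x := by omega
        have h1 : k (f^[j] x) = k x - j := hitlem x j hjK
        rcases le_or_gt (r/2) (k (f^[j] x)) with h | h
        · rw [hcBig _ h, h1]
        · have h3 : c (f^[k (f^[j] x)] (f^[j] x)) = 0 := by
            rw [hitz x j hjK]; exact hcz0
          rw [hcT0 _ h h3, h1]
      set j0 := k x % s + 1 with hj0def
      have hj0 : j0 ≤ s := by have := Nat.mod_lt (k x) hs0; omega
      have hdiv : (k x - j0)/s = k x / s - 1 := divlem (k x) (by omega)
      have hq1 : 1 ≤ k x / s := (Nat.one_le_div_iff hs0).mpr (by omega)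
      apply pair 0 j0 (by omega) (by omega)
      rw [col 0 (by omega), col j0 (by omega), Nat.sub_zero, hdiv]
      omega
    · by_cases hKb : r/2 + s ≤ k x
      · -- all points in the window have big hitting time
        have col : ∀ j, j ≤ s → c (f^[j] x) = ((k x - j)/s) % 2 := by
          intro j hj
          have hjK : j < k x := by omega
          have h1 : k (f^[j] x) = k x - j := hitlem x j hjK
          rw [hcBig _ (by rw [h1]; omega), h1]
        set j0 := k x % s + 1 with hj0def
        have hj0 : j0 ≤ s := by have := Nat.mod_lt (k x) hs0; omega
        have hdiv : (k x - j0)/s = k x / s - 1 := divlem (k x) (by omega)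
        have hq1 : 1 ≤ k x / s := (Nat.one_le_div_iff hs0).mpr (by omega)
        apply pair 0 j0 (by omega) (by omega)
        rw [col 0 (by omega), col j0 hj0, Nat.sub_zero, hdiv]
        omega
      · by_cases hKc : r/2 ≤ k x
        · -- the window straddles r/2
          have hstep2m := astep (2*m) le_rfl
          have hj2K : k x - r/2 < k x := by omega
          have hj1K : k x - r/2 + 1 < k x := by omega
          have c2 : c (f^[k x - r/2] x) = 0 := by
            have h1 : k (f^[k x - r/2] x) = r/2 := by rw [hitlem x _ hj2K]; omega
            rw [hcBig _ (by rw [h1]), h1, hrhalf]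
            have e : 2*(s*s) = s*(2*s) := by ring
            rw [e, Nat.mul_div_cancel_left _ hs0]
            omega
          have c1 : c (f^[k x - r/2 + 1] x) = (2*m+1) % 2 := by
            have h1 : k (f^[k x - r/2 + 1] x) = r/2 - 1 := by
              rw [hitlem x _ hj1K]; omega
            have h3 : c (f^[k (f^[k x - r/2 + 1] x)] (f^[k x - r/2 + 1] x)) = 1 := by
              rw [hitz x _ hj1K]; exact hcz1
            exact hcT1 _ (by omega) h3 (2*m) le_rfl (by omega) (by omega)
          apply pair (k x - r/2 + 1) (k x - r/2) (by omega) (by omega)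
          rw [c1, c2]
          omega
        · -- k x < r/2 : interval colors
          have hK2 : k x < r/2 := by omega
          obtain ⟨i, hilt, hlo, hhi⟩ := afind (2*m+1) le_rfl (k x) (by rw [haTop]; omega)
          have hi2m : i ≤ 2*m := by omega
          have hi1 : 1 ≤ i := by
            by_contra h
            have hi0 : i = 0 := by omega
            rw [hi0] at hhi
            have := ha1
            omega
          have hai1 : a 1 ≤ a i := amono i (by omega) 1 hi1
          have hstep := astep i hi2m
          have hstep' := astep (i-1) (by omega)
          have e : i - 1 + 1 = i := by omega
          rw [e] at hstep'
          have hj1K : k x - a i + 1 < k x := by omega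
          have cx : c x = (i+1) % 2 := hcT1 x hK2 hcz1 i hi2m hlo hhi
          have c1 : c (f^[k x - a i + 1] x) = i % 2 := by
            have h1 : k (f^[k x - a i + 1] x) = a i - 1 := by
              rw [hitlem x _ hj1K]; omega
            have h3 : c (f^[k (f^[k x - a i + 1] x)] (f^[k x - a i + 1] x)) = 1 := by
              rw [hitz x _ hj1K]; exact hcz1
            have h := hcT1 _ (by omega) h3 (i-1) (by omega) (by rw [h1]; omega)
              (by rw [h1, e]; omega)
            rw [e] at h
            exact h
          apply pair 0 (k x - a i + 1) (by omega) (by omega)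
          rw [Function.iterate_zero_apply, cx, c1]
          omega
end

section
/- Let t be a positive integer, f : X → X an acyclic function, and H a 4(6t)²-forward-independent hitting set for f. Then there exists an equivalence relation E on X such that every E-class has ρ_f-diameter at most 28t + 7 and, for every x ∈ X, the ball B_t(x) meets at most 2 E-classes. -/
set_option linter.unusedVariables false

set_option maxHeartbeats 1000000
namespace Stmt14Aux
variable {X : Type*}


noncomputable def nf (f : X → X) (H : Set X) (hHit : Hitting f H) (x : X) : ℕ :=
  @Nat.find (fun k => f^[k] x ∈ H) (Classical.decPred _)
    ((hHit x).imp (fun k hk => hk.2))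

lemma nf_mem (f : X → X) (H : Set X) (hHit : Hitting f H) (x : X) :
    f^[nf f H hHit x] x ∈ H :=
  @Nat.find_spec (fun k => f^[k] x ∈ H) (Classical.decPred _)
    ((hHit x).imp (fun k hk => hk.2))

lemma nf_le (f : X → X) (H : Set X) (hHit : Hitting f H) {x : X} {k : ℕ}
    (h : f^[k] x ∈ H) : nf f H hHit x ≤ k :=
  @Nat.find_min' (fun k => f^[k] x ∈ H) (Classical.decPred _)
    ((hHit x).imp (fun k hk => hk.2)) _ h

lemma nf_step (f : X → X) (H : Set X) (hHit : Hitting f H) {x : X}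
    (h : 0 < nf f H hHit x) : nf f H hHit (f x) + 1 = nf f H hHit x := by
  have h1 : f^[nf f H hHit x - 1] (f x) ∈ H := by
    have h2 : f^[(nf f H hHit x - 1) + 1] x ∈ H := by
      rw [show nf f H hHit x - 1 + 1 = nf f H hHit x by omega]
      exact nf_mem f H hHit x
    rwa [Function.iterate_succ_apply] at h2
  have h2 : nf f H hHit (f x) ≤ nf f H hHit x - 1 := nf_le f H hHit h1
  have h3 : f^[nf f H hHit (f x) + 1] x ∈ H := by
    rw [Function.iterate_succ_apply]; exact nf_mem f H hHit (f x)
  have h4 : nf f H hHit x ≤ nf f H hHit (f x) + 1 := nf_le f H hHit h3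
  omega

lemma nf_iterate (f : X → X) (H : Set X) (hHit : Hitting f H) {x : X} {s : ℕ}
    (h : s ≤ nf f H hHit x) : nf f H hHit (f^[s] x) + s = nf f H hHit x := by
  induction s with
  | zero => simp
  | succ k ih =>
    have hk : k ≤ nf f H hHit x := by omega
    have ih' := ih hk
    have hpos : 0 < nf f H hHit (f^[k] x) := by omega
    have hstep := nf_step f H hHit hpos
    rw [← Function.iterate_succ_apply' f k x] at hstep
    simp only [Nat.succ_eq_add_one] at hstep ⊢
    omega

lemma nf_gap (f : X → X) (H : Set X) (hHit : Hitting f H) {R : ℕ}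
    (hInd : FwdIndep f R H) {x : X} (hx : x ∈ H) : R ≤ nf f H hHit (f x) := by
  have h1 : f^[nf f H hHit (f x) + 1] x ∈ H := by
    rw [Function.iterate_succ_apply]; exact nf_mem f H hHit (f x)
  have := hInd x hx (nf f H hHit (f x) + 1) (by omega) h1
  omega

noncomputable def expo (f : X → X) (H : Set X) (hHit : Hitting f H) (t : ℕ) (z : X) : ℕ :=
  if 4*t ≤ nf f H hHit z then nf f H hHit z % (2*t) + 2*t
  else nf f H hHit z + 1 + (nf f H hHit (f^[nf f H hHit z + 1] z)) % (2*t) + 2*t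

noncomputable def anchor (f : X → X) (H : Set X) (hHit : Hitting f H) (t : ℕ) (z : X) : X :=
  f^[expo f H hHit t z] z

lemma expo_ge (f : X → X) (H : Set X) (hHit : Hitting f H) (t : ℕ) (z : X) :
    2*t ≤ expo f H hHit t z := by
  unfold expo; split <;> omega

lemma expo_le (f : X → X) (H : Set X) (hHit : Hitting f H) {t : ℕ} (ht : 1 ≤ t) (z : X) :
    expo f H hHit t z ≤ 8*t := by
  unfold expo; split
  · have := Nat.mod_lt (nf f H hHit z) (y := 2*t) (by omega); omega
  · have h1 := Nat.mod_lt (nf f H hHit (f^[nf f H hHit z + 1] z)) (y := 2*t) (by omega)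
    omega

lemma anchor_shift (f : X → X) (H : Set X) (hHit : Hitting f H) (t : ℕ) {x y : X} {i j : ℕ}
    (hm : f^[i] y = f^[j] x) (hi : i ≤ expo f H hHit t y) :
    anchor f H hHit t y = f^[expo f H hHit t y - i + j] x := by
  unfold anchor
  have h1 : f^[expo f H hHit t y] y = f^[(expo f H hHit t y - i) + i] y := by
    congr 1; omega
  rw [h1, Function.iterate_add_apply, hm, ← Function.iterate_add_apply]

lemma cross_data (f : X → X) (H : Set X) (hHit : Hitting f H) {R : ℕ}
    (hInd : FwdIndep f R H) (y : X) (i : ℕ) (hiy : nf f H hHit y < i) :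
    R ≤ nf f H hHit (f^[nf f H hHit y + 1] y) ∧
      f^[i] y = f^[i - (nf f H hHit y + 1)] (f^[nf f H hHit y + 1] y) := by
  constructor
  · have h := nf_gap f H hHit hInd (nf_mem f H hHit y)
    rw [Function.iterate_succ_apply']
    exact h
  · rw [← Function.iterate_add_apply]
    congr 1; omega

lemma same_hit (f : X → X) (H : Set X) (hHit : Hitting f H) {x y : X} {i j : ℕ}
    (hiy : i ≤ nf f H hHit y) (hjx : j ≤ nf f H hHit x) (hm : f^[i] y = f^[j] x) :
    f^[nf f H hHit y] y = f^[nf f H hHit x] x := by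
  have h1 := nf_iterate f H hHit hiy
  have h2 := nf_iterate f H hHit hjx
  have heq : nf f H hHit (f^[i] y) = nf f H hHit (f^[j] x) := by rw [hm]
  calc f^[nf f H hHit y] y = f^[(nf f H hHit y - i) + i] y := by congr 1; omega
    _ = f^[nf f H hHit y - i] (f^[i] y) := Function.iterate_add_apply f _ i y
    _ = f^[nf f H hHit y - i] (f^[j] x) := by rw [hm]
    _ = f^[(nf f H hHit y - i) + j] x := (Function.iterate_add_apply f _ j x).symm
    _ = f^[nf f H hHit x] x := by congr 1; omega

lemma div_window {L W v : ℕ} (hL : 0 < L) (h1 : W ≤ v) (h2 : v ≤ W + L) :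
    v / L = W / L ∨ v / L = W / L + 1 := by
  have h3 : W / L ≤ v / L := Nat.div_le_div_right h1
  have h4 : v / L ≤ W / L + 1 := by
    have := Nat.div_le_div_right (c := L) h2
    rwa [Nat.add_div_right _ hL] at this
  omega

lemma ball_anchors (f : X → X) (hf : Acyclic f) (t : ℕ) (ht : 1 ≤ t)
    (H : Set X) (hHit : Hitting f H) (hInd : FwdIndep f (4*(6*t)^2) H) (x : X) :
    ∃ m1 m2 : ℕ, ∀ y i j, i + j ≤ t → f^[i] y = f^[j] x →
      anchor f H hHit t y = f^[m1] x ∨ anchor f H hHit t y = f^[m2] x := by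
  have ht2 : 0 < 2*t := by omega
  have hr6 : 6*t ≤ 4*(6*t)^2 := by nlinarith
  rcases lt_or_ge (nf f H hHit x) t with hct | hct
  · -- CASE III : nf x < t
    have hgu : 4*(6*t)^2 ≤ nf f H hHit (f^[nf f H hHit x + 1] x) := by
      have h := nf_gap f H hHit hInd (nf_mem f H hHit x)
      rw [Function.iterate_succ_apply']
      exact h
    have hgu6 : 6*t ≤ nf f H hHit (f^[nf f H hHit x + 1] x) := le_trans hr6 hgu
    refine ⟨(nf f H hHit (f^[nf f H hHit x + 1] x) + 1 + nf f H hHit x + 2*t)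
        - 2*t*((nf f H hHit (f^[nf f H hHit x + 1] x) + 1 - t)/(2*t)),
      (nf f H hHit (f^[nf f H hHit x + 1] x) + 1 + nf f H hHit x)
        - 2*t*((nf f H hHit (f^[nf f H hHit x + 1] x) + 1 - t)/(2*t)), ?_⟩
    intro y i j hij hm
    have hie : i ≤ expo f H hHit t y := le_trans (by omega) (expo_ge f H hHit t y)
    have hAy := anchor_shift f H hHit t hm hie
    have hdmW := Nat.div_add_mod (nf f H hHit (f^[nf f H hHit x + 1] x) + 1 - t) (2*t)
    by_cases hjc : j ≤ nf f H hHit x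
    · by_cases hiy : i ≤ nf f H hHit y
      · -- (a2)
        have h1 := nf_iterate f H hHit hiy
        have h2 := nf_iterate f H hHit hjc
        have heq : nf f H hHit (f^[i] y) = nf f H hHit (f^[j] x) := by rw [hm]
        have hny4 : ¬ 4*t ≤ nf f H hHit y := by omega
        have hu_eq : f^[nf f H hHit y + 1] y = f^[nf f H hHit x + 1] x := by
          rw [Function.iterate_succ_apply', Function.iterate_succ_apply',
            same_hit f H hHit hiy hjc hm]
        have hexpo : expo f H hHit t y
            = nf f H hHit y + 1 + (nf f H hHit (f^[nf f H hHit x + 1] x)) % (2*t) + 2*t := by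
          unfold expo; rw [if_neg hny4, hu_eq]
        have hdm := Nat.div_add_mod (nf f H hHit (f^[nf f H hHit x + 1] x)) (2*t)
        have hq := div_window (L := 2*t) (W := nf f H hHit (f^[nf f H hHit x + 1] x) + 1 - t)
          (v := nf f H hHit (f^[nf f H hHit x + 1] x)) ht2 (by omega) (by omega)
        have hQPQ : 2*t*((nf f H hHit (f^[nf f H hHit x + 1] x))/(2*t))
            = 2*t*((nf f H hHit (f^[nf f H hHit x + 1] x) + 1 - t)/(2*t)) ∨
            2*t*((nf f H hHit (f^[nf f H hHit x + 1] x))/(2*t))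
            = 2*t*((nf f H hHit (f^[nf f H hHit x + 1] x) + 1 - t)/(2*t)) + 2*t := by
          rcases hq with h | h
          · exact Or.inl (by rw [h])
          · exact Or.inr (by rw [h, Nat.mul_succ])
        have hfin : expo f H hHit t y - i + j
            = (nf f H hHit (f^[nf f H hHit x + 1] x) + 1 + nf f H hHit x + 2*t)
              - 2*t*((nf f H hHit (f^[nf f H hHit x + 1] x) + 1 - t)/(2*t)) ∨
            expo f H hHit t y - i + j
            = (nf f H hHit (f^[nf f H hHit x + 1] x) + 1 + nf f H hHit x)
              - 2*t*((nf f H hHit (f^[nf f H hHit x + 1] x) + 1 - t)/(2*t)) := by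
          omega
        rcases hfin with h | h
        · left; rw [← h]; exact hAy
        · right; rw [← h]; exact hAy
      · -- contradiction
        exfalso
        obtain ⟨hguy, hwy⟩ := cross_data f H hHit hInd y i (by omega)
        have hguy6 : 6*t ≤ nf f H hHit (f^[nf f H hHit y + 1] y) := le_trans hr6 hguy
        have h3 := nf_iterate f H hHit
          (show i - (nf f H hHit y + 1) ≤ nf f H hHit (f^[nf f H hHit y + 1] y) by omega)
        have h2 := nf_iterate f H hHit hjc
        have heq : nf f H hHit (f^[i - (nf f H hHit y + 1)] (f^[nf f H hHit y + 1] y))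
            = nf f H hHit (f^[j] x) := by rw [← hwy, hm]
        omega
    · -- j > nf x
      have hwx : f^[j] x = f^[j - (nf f H hHit x + 1)] (f^[nf f H hHit x + 1] x) := by
        rw [← Function.iterate_add_apply]; congr 1; omega
      have hsu : j - (nf f H hHit x + 1) ≤ nf f H hHit (f^[nf f H hHit x + 1] x) := by omega
      have h2' := nf_iterate f H hHit hsu
      by_cases hiy : i ≤ nf f H hHit y
      · -- (b)
        have h1 := nf_iterate f H hHit hiy
        have heq : nf f H hHit (f^[i] y)
            = nf f H hHit (f^[j - (nf f H hHit x + 1)] (f^[nf f H hHit x + 1] x)) := by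
          rw [hm, hwx]
        have hny4 : 4*t ≤ nf f H hHit y := by omega
        have hexpo : expo f H hHit t y = nf f H hHit y % (2*t) + 2*t := by
          unfold expo; rw [if_pos hny4]
        have hdm := Nat.div_add_mod (nf f H hHit y) (2*t)
        have hq := div_window (L := 2*t) (W := nf f H hHit (f^[nf f H hHit x + 1] x) + 1 - t)
          (v := nf f H hHit y) ht2 (by omega) (by omega)
        have hQPQ : 2*t*((nf f H hHit y)/(2*t))
            = 2*t*((nf f H hHit (f^[nf f H hHit x + 1] x) + 1 - t)/(2*t)) ∨
            2*t*((nf f H hHit y)/(2*t))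
            = 2*t*((nf f H hHit (f^[nf f H hHit x + 1] x) + 1 - t)/(2*t)) + 2*t := by
          rcases hq with h | h
          · exact Or.inl (by rw [h])
          · exact Or.inr (by rw [h, Nat.mul_succ])
        have hfin : expo f H hHit t y - i + j
            = (nf f H hHit (f^[nf f H hHit x + 1] x) + 1 + nf f H hHit x + 2*t)
              - 2*t*((nf f H hHit (f^[nf f H hHit x + 1] x) + 1 - t)/(2*t)) ∨
            expo f H hHit t y - i + j
            = (nf f H hHit (f^[nf f H hHit x + 1] x) + 1 + nf f H hHit x)
              - 2*t*((nf f H hHit (f^[nf f H hHit x + 1] x) + 1 - t)/(2*t)) := by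
          omega
        rcases hfin with h | h
        · left; rw [← h]; exact hAy
        · right; rw [← h]; exact hAy
      · -- (c)
        obtain ⟨hguy, hwy⟩ := cross_data f H hHit hInd y i (by omega)
        have hguy6 : 6*t ≤ nf f H hHit (f^[nf f H hHit y + 1] y) := le_trans hr6 hguy
        have h3 := nf_iterate f H hHit
          (show i - (nf f H hHit y + 1) ≤ nf f H hHit (f^[nf f H hHit y + 1] y) by omega)
        have heq : nf f H hHit (f^[i - (nf f H hHit y + 1)] (f^[nf f H hHit y + 1] y))
            = nf f H hHit (f^[j - (nf f H hHit x + 1)] (f^[nf f H hHit x + 1] x)) := by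
          rw [← hwy, hm, hwx]
        have hny4 : ¬ 4*t ≤ nf f H hHit y := by omega
        have hexpo : expo f H hHit t y
            = nf f H hHit y + 1 + (nf f H hHit (f^[nf f H hHit y + 1] y)) % (2*t) + 2*t := by
          unfold expo; rw [if_neg hny4]
        have hdm := Nat.div_add_mod (nf f H hHit (f^[nf f H hHit y + 1] y)) (2*t)
        have hq := div_window (L := 2*t) (W := nf f H hHit (f^[nf f H hHit x + 1] x) + 1 - t)
          (v := nf f H hHit (f^[nf f H hHit y + 1] y)) ht2 (by omega) (by omega)
        have hQPQ : 2*t*((nf f H hHit (f^[nf f H hHit y + 1] y))/(2*t))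
            = 2*t*((nf f H hHit (f^[nf f H hHit x + 1] x) + 1 - t)/(2*t)) ∨
            2*t*((nf f H hHit (f^[nf f H hHit y + 1] y))/(2*t))
            = 2*t*((nf f H hHit (f^[nf f H hHit x + 1] x) + 1 - t)/(2*t)) + 2*t := by
          rcases hq with h | h
          · exact Or.inl (by rw [h])
          · exact Or.inr (by rw [h, Nat.mul_succ])
        have hfin : expo f H hHit t y - i + j
            = (nf f H hHit (f^[nf f H hHit x + 1] x) + 1 + nf f H hHit x + 2*t)
              - 2*t*((nf f H hHit (f^[nf f H hHit x + 1] x) + 1 - t)/(2*t)) ∨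
            expo f H hHit t y - i + j
            = (nf f H hHit (f^[nf f H hHit x + 1] x) + 1 + nf f H hHit x)
              - 2*t*((nf f H hHit (f^[nf f H hHit x + 1] x) + 1 - t)/(2*t)) := by
          omega
        rcases hfin with h | h
        · left; rw [← h]; exact hAy
        · right; rw [← h]; exact hAy
  · rcases lt_or_ge (nf f H hHit x) (5*t) with hc5 | hc5
    · -- CASE II : t ≤ nf x < 5t
      refine ⟨nf f H hHit x - 2*t,
        nf f H hHit x + 1 + (nf f H hHit (f^[nf f H hHit x + 1] x)) % (2*t) + 2*t, ?_⟩
      intro y i j hij hm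
      have hie : i ≤ expo f H hHit t y := le_trans (by omega) (expo_ge f H hHit t y)
      have hAy := anchor_shift f H hHit t hm hie
      have hjc : j ≤ nf f H hHit x := by omega
      have h2 := nf_iterate f H hHit hjc
      have hiy : i ≤ nf f H hHit y := by
        by_contra hiy
        obtain ⟨hguy, hwy⟩ := cross_data f H hHit hInd y i (by omega)
        have hguy6 : 6*t ≤ nf f H hHit (f^[nf f H hHit y + 1] y) := le_trans hr6 hguy
        have h3 := nf_iterate f H hHit
          (show i - (nf f H hHit y + 1) ≤ nf f H hHit (f^[nf f H hHit y + 1] y) by omega)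
        have heq : nf f H hHit (f^[i - (nf f H hHit y + 1)] (f^[nf f H hHit y + 1] y))
            = nf f H hHit (f^[j] x) := by rw [← hwy, hm]
        omega
      have h1 := nf_iterate f H hHit hiy
      have heq : nf f H hHit (f^[i] y) = nf f H hHit (f^[j] x) := by rw [hm]
      by_cases hny4 : 4*t ≤ nf f H hHit y
      · -- (a1)
        have hexpo : expo f H hHit t y = nf f H hHit y % (2*t) + 2*t := by
          unfold expo; rw [if_pos hny4]
        have hdiv : nf f H hHit y / (2*t) = 2 :=
          Nat.div_eq_of_lt_le (by omega) (by omega)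
        have hdm := Nat.div_add_mod (nf f H hHit y) (2*t)
        rw [hdiv] at hdm
        have hfin : expo f H hHit t y - i + j = nf f H hHit x - 2*t := by omega
        left; rw [← hfin]; exact hAy
      · -- (a2)
        have hu_eq : f^[nf f H hHit y + 1] y = f^[nf f H hHit x + 1] x := by
          rw [Function.iterate_succ_apply', Function.iterate_succ_apply',
            same_hit f H hHit hiy hjc hm]
        have hexpo : expo f H hHit t y
            = nf f H hHit y + 1 + (nf f H hHit (f^[nf f H hHit x + 1] x)) % (2*t) + 2*t := by
          unfold expo; rw [if_neg hny4, hu_eq]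
        have hfin : expo f H hHit t y - i + j
            = nf f H hHit x + 1 + (nf f H hHit (f^[nf f H hHit x + 1] x)) % (2*t) + 2*t := by
          omega
        right; rw [← hfin]; exact hAy
    · -- CASE I : 5t ≤ nf x
      refine ⟨(nf f H hHit x + 2*t) - 2*t*((nf f H hHit x - t)/(2*t)),
        nf f H hHit x - 2*t*((nf f H hHit x - t)/(2*t)), ?_⟩
      intro y i j hij hm
      have hie : i ≤ expo f H hHit t y := le_trans (by omega) (expo_ge f H hHit t y)
      have hAy := anchor_shift f H hHit t hm hie
      have hjc : j ≤ nf f H hHit x := by omega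
      have h2 := nf_iterate f H hHit hjc
      have hdmW := Nat.div_add_mod (nf f H hHit x - t) (2*t)
      by_cases hiy : i ≤ nf f H hHit y
      · -- (a1)
        have h1 := nf_iterate f H hHit hiy
        have heq : nf f H hHit (f^[i] y) = nf f H hHit (f^[j] x) := by rw [hm]
        have hny4 : 4*t ≤ nf f H hHit y := by omega
        have hexpo : expo f H hHit t y = nf f H hHit y % (2*t) + 2*t := by
          unfold expo; rw [if_pos hny4]
        have hdm := Nat.div_add_mod (nf f H hHit y) (2*t)
        have hq := div_window (L := 2*t) (W := nf f H hHit x - t)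
          (v := nf f H hHit y) ht2 (by omega) (by omega)
        have hQPQ : 2*t*((nf f H hHit y)/(2*t)) = 2*t*((nf f H hHit x - t)/(2*t)) ∨
            2*t*((nf f H hHit y)/(2*t)) = 2*t*((nf f H hHit x - t)/(2*t)) + 2*t := by
          rcases hq with h | h
          · exact Or.inl (by rw [h])
          · exact Or.inr (by rw [h, Nat.mul_succ])
        have hfin : expo f H hHit t y - i + j
            = (nf f H hHit x + 2*t) - 2*t*((nf f H hHit x - t)/(2*t)) ∨
            expo f H hHit t y - i + j
            = nf f H hHit x - 2*t*((nf f H hHit x - t)/(2*t)) := by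
          omega
        rcases hfin with h | h
        · left; rw [← h]; exact hAy
        · right; rw [← h]; exact hAy
      · -- (c)
        obtain ⟨hguy, hwy⟩ := cross_data f H hHit hInd y i (by omega)
        have hguy6 : 6*t ≤ nf f H hHit (f^[nf f H hHit y + 1] y) := le_trans hr6 hguy
        have h3 := nf_iterate f H hHit
          (show i - (nf f H hHit y + 1) ≤ nf f H hHit (f^[nf f H hHit y + 1] y) by omega)
        have heq : nf f H hHit (f^[i - (nf f H hHit y + 1)] (f^[nf f H hHit y + 1] y))
            = nf f H hHit (f^[j] x) := by rw [← hwy, hm]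
        have hny4 : ¬ 4*t ≤ nf f H hHit y := by omega
        have hexpo : expo f H hHit t y
            = nf f H hHit y + 1 + (nf f H hHit (f^[nf f H hHit y + 1] y)) % (2*t) + 2*t := by
          unfold expo; rw [if_neg hny4]
        have hdm := Nat.div_add_mod (nf f H hHit (f^[nf f H hHit y + 1] y)) (2*t)
        have hq := div_window (L := 2*t) (W := nf f H hHit x - t)
          (v := nf f H hHit (f^[nf f H hHit y + 1] y)) ht2 (by omega) (by omega)
        have hQPQ : 2*t*((nf f H hHit (f^[nf f H hHit y + 1] y))/(2*t))
            = 2*t*((nf f H hHit x - t)/(2*t)) ∨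
            2*t*((nf f H hHit (f^[nf f H hHit y + 1] y))/(2*t))
            = 2*t*((nf f H hHit x - t)/(2*t)) + 2*t := by
          rcases hq with h | h
          · exact Or.inl (by rw [h])
          · exact Or.inr (by rw [h, Nat.mul_succ])
        have hfin : expo f H hHit t y - i + j
            = (nf f H hHit x + 2*t) - 2*t*((nf f H hHit x - t)/(2*t)) ∨
            expo f H hHit t y - i + j
            = nf f H hHit x - 2*t*((nf f H hHit x - t)/(2*t)) := by
          omega
        rcases hfin with h | h
        · left; rw [← h]; exact hAy
        · right; rw [← h]; exact hAy


lemma iter_ne (f : X → X) (hf : Acyclic f) (x : X) {a b : ℕ} (hab : a < b) :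
    f^[a] x ≠ f^[b] x := by
  intro h
  have h2 : f^[b - a] (f^[a] x) = f^[a] x := by
    rw [← Function.iterate_add_apply, show b - a + a = b by omega, ← h]
  exact hf (f^[a] x) (b - a) (by omega) h2

lemma orbit_walk (f : X → X) (hf : Acyclic f) (x : X) (k : ℕ) :
    ∃ p : (funGraph f).Walk x (f^[k] x), p.length = k := by
  induction k with
  | zero => exact ⟨SimpleGraph.Walk.nil, rfl⟩
  | succ k ih =>
    obtain ⟨p, hp⟩ := ih
    have hadj : (funGraph f).Adj (f^[k] x) (f^[k+1] x) := by
      refine ⟨iter_ne f hf x (by omega), Or.inl ?_⟩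
      exact (Function.iterate_succ_apply' f k x).symm
    exact ⟨p.concat hadj, by rw [SimpleGraph.Walk.length_concat, hp]⟩

lemma merge_of_walk (f : X → X) {x y : X} (p : (funGraph f).Walk x y) :
    ∃ i j : ℕ, i + j ≤ p.length ∧ f^[i] x = f^[j] y := by
  induction p with
  | nil => exact ⟨0, 0, by simp, rfl⟩
  | @cons a b c h p ih =>
    obtain ⟨i, j, hij, hm⟩ := ih
    rcases h.2 with h1 | h2
    · refine ⟨i + 1, j, by simp only [SimpleGraph.Walk.length_cons]; omega, ?_⟩
      rw [Function.iterate_succ_apply, h1, hm]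
    · cases i with
      | zero =>
        refine ⟨0, j + 1, by simp only [SimpleGraph.Walk.length_cons]; omega, ?_⟩
        simp only [Function.iterate_zero_apply] at hm ⊢
        rw [Function.iterate_succ_apply', ← hm, h2]
      | succ i =>
        refine ⟨i, j, by simp only [SimpleGraph.Walk.length_cons]; omega, ?_⟩
        rw [← h2, ← Function.iterate_succ_apply, hm]

end Stmt14Aux

theorem stmt14 {X : Type*} (f : X → X) (hf : Acyclic f) (t : ℕ) (ht : 1 ≤ t)
    (H : Set X) (hHit : Hitting f H) (hInd : FwdIndep f (4*(6*t)^2) H) :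
    ∃ E : X → X → Prop, Equivalence E ∧
      (∀ y z, E y z → distLE f (28*t+7) y z) ∧
      ∀ x : X, ∃ s : Finset X, s.card ≤ 2 ∧ ∀ y ∈ ball f t x, ∃ z ∈ s, E y z := by
  classical
  refine ⟨fun y z => Stmt14Aux.anchor f H hHit t y = Stmt14Aux.anchor f H hHit t z,
    ⟨fun _ => rfl, fun h => h.symm, fun h1 h2 => h1.trans h2⟩, ?_, ?_⟩
  · intro y z hE
    obtain ⟨p, hp⟩ := Stmt14Aux.orbit_walk f hf y (Stmt14Aux.expo f H hHit t y)
    obtain ⟨q, hq⟩ := Stmt14Aux.orbit_walk f hf z (Stmt14Aux.expo f H hHit t z)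
    have hcast : f^[Stmt14Aux.expo f H hHit t z] z = f^[Stmt14Aux.expo f H hHit t y] y :=
      hE.symm
    refine ⟨⟨p.append (SimpleGraph.Walk.copy q.reverse hcast rfl)⟩, ?_⟩
    have hlen : (p.append (SimpleGraph.Walk.copy q.reverse hcast rfl)).length
        = Stmt14Aux.expo f H hHit t y + Stmt14Aux.expo f H hHit t z := by
      rw [SimpleGraph.Walk.length_append, SimpleGraph.Walk.length_copy,
        SimpleGraph.Walk.length_reverse, hp, hq]
    have hle := SimpleGraph.dist_le (p.append (SimpleGraph.Walk.copy q.reverse hcast rfl))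
    have e1 := Stmt14Aux.expo_le f H hHit ht y
    have e2 := Stmt14Aux.expo_le f H hHit ht z
    omega
  · intro x
    obtain ⟨m1, m2, hkey⟩ := Stmt14Aux.ball_anchors f hf t ht H hHit hInd x
    set w1 := if h : ∃ z : X, Stmt14Aux.anchor f H hHit t z = f^[m1] x then h.choose else x
      with hw1
    set w2 := if h : ∃ z : X, Stmt14Aux.anchor f H hHit t z = f^[m2] x then h.choose else x
      with hw2
    refine ⟨{w1, w2}, (Finset.card_insert_le _ _).trans (by simp), ?_⟩
    intro y hy
    obtain ⟨hreach, hdist⟩ := hy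
    obtain ⟨p, hp⟩ := hreach.exists_walk_length_eq_dist
    obtain ⟨i, j, hij, hm⟩ := Stmt14Aux.merge_of_walk f p
    rcases hkey y j i (by omega) hm.symm with h | h
    · have hex : ∃ z : X, Stmt14Aux.anchor f H hHit t z = f^[m1] x := ⟨y, h⟩
      refine ⟨w1, by simp, ?_⟩
      show Stmt14Aux.anchor f H hHit t y = Stmt14Aux.anchor f H hHit t w1
      rw [hw1, dif_pos hex, hex.choose_spec]
      exact h
    · have hex : ∃ z : X, Stmt14Aux.anchor f H hHit t z = f^[m2] x := ⟨y, h⟩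
      refine ⟨w2, by simp, ?_⟩
      show Stmt14Aux.anchor f H hHit t y = Stmt14Aux.anchor f H hHit t w2
      rw [hw2, dif_pos hex, hex.choose_spec]
      exact h
end

section
/- Suppose ψ : [ℕ]^ℕ → V(H) is a Borel map from the space of infinite subsets of ℕ into the vertex set of a finite digraph H such that (ψ(y), ψ(S(y))) is an edge of H for every y, where S is the shift map. Then H contains a loop, i.e., an edge (v, v). -/
set_option linter.unusedVariables false

set_option maxHeartbeats 1000000
section GalvinPrikry
namespace GP



abbrev M := {x : ℕ → ℕ // StrictMono x}

/-- every element of `s` is below every element of `A` -/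
def Ab (s : Finset ℕ) (A : Set ℕ) : Prop := ∀ m ∈ s, ∀ a ∈ A, m < a

def Cyl (s : Finset ℕ) (A : Set ℕ) : Set M :=
  {x | ↑s ⊆ Set.range x.1 ∧ Set.range x.1 ⊆ ↑s ∪ A}

def CR (X : Set M) : Prop :=
  ∀ s A, A.Infinite → Ab s A →
    ∃ B, B ⊆ A ∧ B.Infinite ∧ (Cyl s B ⊆ X ∨ Disjoint (Cyl s B) X)

lemma Cyl_mono {s : Finset ℕ} {A B : Set ℕ} (h : B ⊆ A) : Cyl s B ⊆ Cyl s A :=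
  fun x hx => ⟨hx.1, hx.2.trans (Set.union_subset_union_right _ h)⟩

lemma Ab_mono {s : Finset ℕ} {A B : Set ℕ} (h : Ab s A) (hBA : B ⊆ A) : Ab s B :=
  fun m hm a ha => h m hm a (hBA ha)

lemma Ab_mono_left {s t : Finset ℕ} {A : Set ℕ} (hts : t ⊆ s) (h : Ab s A) : Ab t A :=
  fun m hm a ha => h m (hts hm) a ha

lemma inf_inter_Ioi {A : Set ℕ} (h : A.Infinite) (a : ℕ) : (A ∩ Set.Ioi a).Infinite := by
  have : A ∩ Set.Ioi a = A \ Set.Iic a := by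
    ext k; simp only [Set.mem_inter_iff, Set.mem_Ioi, Set.mem_diff, Set.mem_Iic, not_le]
  rw [this]
  exact h.diff (Set.finite_Iic a)

lemma not_mem_of_Ab {s : Finset ℕ} {A : Set ℕ} (h : Ab s A) {k : ℕ} (hk : k ∈ A) :
    k ∉ (s : Set ℕ) := fun hks => lt_irrefl k (h k hks k hk)

/-- the first `s.card` coordinates of `x ∈ Cyl s A` enumerate `s`. -/
lemma coords_image {s : Finset ℕ} {A : Set ℕ} (hAb : Ab s A) {x : M} (hx : x ∈ Cyl s A) :
    Finset.image x.1 (Finset.range s.card) = s := by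
  have hlt : ∀ i < s.card, x.1 i ∈ s := by
    intro i hi
    by_contra hins
    have hxiA : x.1 i ∈ A := by
      rcases hx.2 ⟨i, rfl⟩ with h | h
      · exact absurd h hins
      · exact h
    have hsub : s ⊆ Finset.image x.1 (Finset.range i) := by
      intro m hm
      obtain ⟨k, hk⟩ := hx.1 hm
      have hki : k < i := by
        rcases lt_or_ge k i with h' | h'
        · exact h'
        · exfalso
          have : x.1 i ≤ x.1 k := x.2.monotone h'
          have hmlt : m < x.1 i := hAb m hm (x.1 i) hxiA
          omega
      exact Finset.mem_image.mpr ⟨k, Finset.mem_range.mpr hki, hk⟩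
    have := Finset.card_le_card hsub
    have := Finset.card_image_le (f := x.1) (s := Finset.range i)
    simp only [Finset.card_range] at *
    omega
  have hsub : Finset.image x.1 (Finset.range s.card) ⊆ s := by
    intro m hm
    obtain ⟨i, hi, rfl⟩ := Finset.mem_image.mp hm
    exact hlt i (Finset.mem_range.mp hi)
  apply Finset.eq_of_subset_of_card_le hsub
  rw [Finset.card_image_of_injective _ x.2.injective, Finset.card_range]

lemma coords_tail {s : Finset ℕ} {A : Set ℕ} (hAb : Ab s A) {x : M} (hx : x ∈ Cyl s A)
    {i : ℕ} (hi : s.card ≤ i) : x.1 i ∈ A := by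
  rcases hx.2 ⟨i, rfl⟩ with h | h
  · exfalso
    rw [← coords_image hAb hx] at h
    obtain ⟨j, hj, hji⟩ := Finset.mem_image.mp h
    have := x.2.injective hji
    rw [Finset.mem_range] at hj
    omega
  · exact h

lemma coords_head {s : Finset ℕ} {A : Set ℕ} (hAb : Ab s A) {x : M} (hx : x ∈ Cyl s A)
    {i : ℕ} (hi : i < s.card) : x.1 i ∈ s := by
  rw [← coords_image hAb hx]
  exact Finset.mem_image.mpr ⟨i, Finset.mem_range.mpr hi, rfl⟩

lemma mono_enum_unique {f g : ℕ → ℕ} (hf : StrictMono f) (hg : StrictMono g) {l : ℕ}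
    (h : Finset.image f (Finset.range l) = Finset.image g (Finset.range l)) :
    ∀ i < l, f i = g i := by
  intro i
  induction i using Nat.strong_induction_on with
  | _ i ih =>
    intro hil
    have h1 : f i ∈ Finset.image g (Finset.range l) := by
      rw [← h]; exact Finset.mem_image.mpr ⟨i, Finset.mem_range.mpr hil, rfl⟩
    have h2 : g i ∈ Finset.image f (Finset.range l) := by
      rw [h]; exact Finset.mem_image.mpr ⟨i, Finset.mem_range.mpr hil, rfl⟩
    obtain ⟨j, hj, hjf⟩ := Finset.mem_image.mp h1
    obtain ⟨k, hk, hkg⟩ := Finset.mem_image.mp h2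
    rw [Finset.mem_range] at hj hk
    have hgj : i ≤ j := by
      by_contra h'
      push_neg at h'
      have := ih j h' (lt_trans h' hil)
      have : f j = f i := by rw [this, hjf]
      exact absurd (hf.injective this) (Nat.ne_of_lt h')
    have hfk : i ≤ k := by
      by_contra h'
      push_neg at h'
      have := ih k h' (lt_trans h' hil)
      have : g k = g i := by rw [← this, hkg]
      exact absurd (hg.injective this) (Nat.ne_of_lt h')
    have : g i ≤ f i := by rw [← hjf]; exact hg.monotone hgj
    have : f i ≤ g i := by rw [← hkg]; exact hf.monotone hfk
    omega

lemma coords_const {s : Finset ℕ} {A : Set ℕ} (hAb : Ab s A) {x y : M}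
    (hx : x ∈ Cyl s A) (hy : y ∈ Cyl s A) {i : ℕ} (hi : i < s.card) : x.1 i = y.1 i :=
  mono_enum_unique x.2 y.2 ((coords_image hAb hx).trans (coords_image hAb hy).symm) i hi

lemma gen_CR (n : ℕ) (S : Set ℕ) : CR {x : M | x.1 n ∈ S} := by
  intro s A hA hAb
  rcases lt_or_ge n s.card with hn | hn
  · -- coordinate determined by s
    rcases Set.eq_empty_or_nonempty (Cyl s A) with he | ⟨x₀, hx₀⟩
    · exact ⟨A, subset_rfl, hA, Or.inr (by rw [he]; exact Set.empty_disjoint _)⟩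
    · by_cases hc : x₀.1 n ∈ S
      · refine ⟨A, subset_rfl, hA, Or.inl fun x hx => ?_⟩
        simpa [Set.mem_setOf_eq, coords_const hAb hx hx₀ hn] using hc
      · refine ⟨A, subset_rfl, hA, Or.inr (Set.disjoint_left.mpr fun x hx hxS => ?_)⟩
        rw [Set.mem_setOf_eq, coords_const hAb hx hx₀ hn] at hxS
        exact hc hxS
  · by_cases h : (A ∩ S).Infinite
    · refine ⟨A ∩ S, Set.inter_subset_left, h, Or.inl fun x hx => ?_⟩
      have := coords_tail (Ab_mono hAb Set.inter_subset_left) hx hn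
      exact this.2
    · have h2 : (A \ S).Infinite := by
        have : A \ (A ∩ S) = A \ S := by ext k; simp only [Set.mem_diff, Set.mem_inter_iff]; tauto
        rw [← this]
        exact hA.diff (Set.not_infinite.mp h)
      refine ⟨A \ S, Set.diff_subset, h2, Or.inr (Set.disjoint_left.mpr fun x hx hxS => ?_)⟩
      have := coords_tail (Ab_mono hAb Set.diff_subset) hx hn
      exact this.2 hxS

/-- generic chain construction by recursion + choice -/
lemma chain {σ α : Type*} (Q : σ → Prop) (R : σ → α → σ → Prop)
    (step : ∀ st, Q st → ∃ a st', R st a st' ∧ Q st') (s0 : σ) (h0 : Q s0) :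
    ∃ (St : ℕ → σ) (as : ℕ → α), St 0 = s0 ∧ (∀ i, Q (St i)) ∧
      ∀ i, R (St i) (as i) (St (i+1)) := by
  classical
  let g : {st : σ // Q st} → α × {st : σ // Q st} := fun p =>
    ⟨(step p.1 p.2).choose, (step p.1 p.2).choose_spec.choose,
      (step p.1 p.2).choose_spec.choose_spec.2⟩
  let F : ℕ → {st : σ // Q st} := fun n => Nat.rec ⟨s0, h0⟩ (fun _ p => (g p).2) n
  refine ⟨fun i => (F i).1, fun i => (g (F i)).1, rfl, fun i => (F i).2, fun i => ?_⟩
  exact (step (F i).1 (F i).2).choose_spec.choose_spec.1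

/-- iterate a shrinking step over a finite list of requirements -/
lemma shrinkList {ι : Type*} (A0 : Set ℕ) (P : ι → Set ℕ → Prop)
    (hmono : ∀ j C C', C' ⊆ C → P j C → P j C')
    (L : List ι)
    (hstep : ∀ j ∈ L, ∀ C, C ⊆ A0 → C.Infinite → ∃ C', C' ⊆ C ∧ C'.Infinite ∧ P j C') :
    ∀ C, C ⊆ A0 → C.Infinite → ∃ C', C' ⊆ C ∧ C'.Infinite ∧ ∀ j ∈ L, P j C' := by
  induction L with
  | nil => exact fun C hCA hC => ⟨C, subset_rfl, hC, by simp⟩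
  | cons j L ih =>
    intro C hCA hC
    obtain ⟨C1, hC1C, hC1inf, hP⟩ := hstep j (by simp) C hCA hC
    obtain ⟨C2, hC2C1, hC2inf, hPs⟩ :=
      ih (fun j' hj' => hstep j' (by simp [hj'])) C1 (hC1C.trans hCA) hC1inf
    refine ⟨C2, hC2C1.trans hC1C, hC2inf, fun j' hj' => ?_⟩
    rcases List.mem_cons.mp hj' with rfl | hj'
    · exact hmono _ _ _ hC2C1 hP
    · exact hPs j' hj'

def IsInit (t : Finset ℕ) (x : M) : Prop :=
  ↑t ⊆ Set.range x.1 ∧ ∀ k ∈ Set.range x.1, k ∉ t → ∀ m ∈ t, m < k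

def UD (D : Set (Finset ℕ)) : Set M := {x | ∃ t ∈ D, IsInit t x}

def acc (D : Set (Finset ℕ)) (t : Finset ℕ) (C : Set ℕ) : Prop := Cyl t C ⊆ UD D

def rej (D : Set (Finset ℕ)) (t : Finset ℕ) (C : Set ℕ) : Prop :=
  ∀ C', C' ⊆ C → C'.Infinite → ¬ acc D t C'

lemma acc_mono {D t} {C C' : Set ℕ} (h : C' ⊆ C) (ha : acc D t C) : acc D t C' :=
  fun x hx => ha (Cyl_mono h hx)

lemma rej_mono {D t} {C C' : Set ℕ} (h : C' ⊆ C) (hr : rej D t C) : rej D t C' :=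
  fun C'' h'' => hr C'' (h''.trans h)

lemma rejext (D : Set (Finset ℕ)) {t : Finset ℕ} {C : Set ℕ}
    (hC : C.Infinite) (ht : Ab t C) (hrej : rej D t C) :
    ∃ B, B ⊆ C ∧ B.Infinite ∧ ∀ a ∈ B, rej D (insert a t) (B ∩ Set.Ioi a) := by
  classical
  set Q : Set ℕ → Prop := fun Cc => Cc ⊆ C ∧ Cc.Infinite with hQdef
  set R : Set ℕ → ℕ × Bool → Set ℕ → Prop := fun Cc p C' =>
    p.1 ∈ Cc ∧ C' ⊆ Cc ∩ Set.Ioi p.1 ∧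
      (p.2 = true → rej D (insert p.1 t) C') ∧
      (p.2 = false → acc D (insert p.1 t) C') with hRdef
  have step : ∀ st, Q st → ∃ a st', R st a st' ∧ Q st' := by
    intro Cc hQc
    obtain ⟨a, ha⟩ := hQc.2.nonempty
    by_cases hk : ∃ C', C' ⊆ Cc ∩ Set.Ioi a ∧ C'.Infinite ∧ rej D (insert a t) C'
    · obtain ⟨C', h1, h2, h3⟩ := hk
      exact ⟨(a, true), C', ⟨ha, h1, fun _ => h3, by simp⟩,
        (h1.trans Set.inter_subset_left).trans hQc.1, h2⟩
    · push_neg at hk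
      have h1 : ¬ rej D (insert a t) (Cc ∩ Set.Ioi a) :=
        hk _ subset_rfl (inf_inter_Ioi hQc.2 a)
      rw [rej] at h1
      push_neg at h1
      obtain ⟨C', hs', hinf', hacc'⟩ := h1
      exact ⟨(a, false), C', ⟨ha, hs', by simp, fun _ => hacc'⟩,
        (hs'.trans Set.inter_subset_left).trans hQc.1, hinf'⟩
  obtain ⟨St, ab, hSt0, hQa, hR⟩ := chain Q R step C ⟨subset_rfl, hC⟩
  set as : ℕ → ℕ := fun i => (ab i).1 with has
  have hmem : ∀ i, as i ∈ St i := fun i => (hR i).1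
  have hsubC : ∀ i, St i ⊆ C := fun i => (hQa i).1
  have hdec1 : ∀ i, St (i+1) ⊆ St i := fun i => (hR i).2.1.trans Set.inter_subset_left
  have hdec : ∀ i j, i ≤ j → St j ⊆ St i := by
    intro i j hij
    induction hij with
    | refl => exact subset_rfl
    | step hj ih => exact (hdec1 _).trans ih
  have hasmono : StrictMono as := by
    apply strictMono_nat_of_lt_succ
    intro i
    have := (hR i).2.1 (hmem (i+1))
    exact this.2
  have hStIoi : ∀ i j, i < j → as j ∈ St (i+1) := by
    intro i j hij
    exact hdec (i+1) j hij (hmem j)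
  by_cases hFin : {i | (ab i).2 = false}.Infinite
  · exfalso
    set Dst : Set ℕ := as '' {i | (ab i).2 = false} with hDst
    have hDsub : Dst ⊆ C := by
      rintro k ⟨i, hi, rfl⟩; exact hsubC i (hmem i)
    have hDinf : Dst.Infinite := hFin.image (hasmono.injective.injOn)
    refine hrej Dst hDsub hDinf ?_
    intro x hx
    have hab : Ab t Dst := Ab_mono ht hDsub
    have h5 : x.1 t.card ∈ Dst := coords_tail hab hx (le_refl t.card)
    obtain ⟨i, hifalse, hia⟩ := h5
    have hacci : acc D (insert (as i) t) (St (i+1)) := (hR i).2.2.2 hifalse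
    apply hacci
    constructor
    · rw [Finset.coe_insert, Set.insert_subset_iff]
      exact ⟨hia ▸ ⟨t.card, rfl⟩, hx.1⟩
    · rintro k ⟨j, rfl⟩
      rcases lt_trichotomy j t.card with hj | hj | hj
      · exact Or.inl (by simp [coords_head hab hx hj])
      · subst hj; exact Or.inl (by simp [hia])
      · right
        have h6 : x.1 j ∈ Dst := coords_tail hab hx hj.le
        obtain ⟨i', hi', hi'a⟩ := h6
        have : as i < as i' := by
          rw [hia, hi'a]; exact x.2 hj
        rw [← hi'a]
        exact hdec (i+1) i' (hasmono.lt_iff_lt.mp this) (hmem i')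
  · have hTrue : {i | (ab i).2 = true}.Infinite := by
      have hco : {i | (ab i).2 = true} = {i | (ab i).2 = false}ᶜ := by
        ext i; simp only [Set.mem_setOf_eq, Set.mem_compl_iff, Bool.not_eq_false]
      rw [hco]
      exact Set.Finite.infinite_compl (Set.not_infinite.mp hFin)
    refine ⟨as '' {i | (ab i).2 = true}, ?_, hTrue.image (hasmono.injective.injOn), ?_⟩
    · rintro k ⟨i, hi, rfl⟩; exact hsubC i (hmem i)
    · rintro a ⟨i, hit, rfl⟩
      have hreji : rej D (insert (as i) t) (St (i+1)) := (hR i).2.2.1 hit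
      apply rej_mono ?_ hreji
      rintro k ⟨⟨i', hi', rfl⟩, hk⟩
      exact hdec (i+1) i' (hasmono.lt_iff_lt.mp hk) (hmem i')

theorem openRamsey (D : Set (Finset ℕ)) (s : Finset ℕ) (A : Set ℕ) (hA : A.Infinite)
    (hAb : Ab s A) :
    ∃ B, B ⊆ A ∧ B.Infinite ∧ (Cyl s B ⊆ UD D ∨ Disjoint (Cyl s B) (UD D)) := by
  classical
  by_cases haccA : ∃ B, B ⊆ A ∧ B.Infinite ∧ acc D s B
  · obtain ⟨B, h1, h2, h3⟩ := haccA; exact ⟨B, h1, h2, Or.inl h3⟩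
  push_neg at haccA
  have hrej : rej D s A := fun C' h1 h2 => haccA C' h1 h2
  set Q : Finset ℕ × Set ℕ → Prop := fun p =>
    p.2 ⊆ A ∧ p.2.Infinite ∧ Ab (s ∪ p.1) p.2 ∧
      ∀ t, s ⊆ t → t ⊆ s ∪ p.1 → rej D t p.2 with hQdef
  set R : Finset ℕ × Set ℕ → ℕ → Finset ℕ × Set ℕ → Prop := fun p b p' =>
    b ∈ p.2 ∧ p'.1 = insert b p.1 ∧ p'.2 ⊆ p.2 ∩ Set.Ioi b with hRdef
  have step : ∀ st, Q st → ∃ b st', R st b st' ∧ Q st' := by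
    rintro ⟨F, Ac⟩ hQ
    obtain ⟨hsubA, hinf, hab, hrj⟩ := hQ
    set P : Finset ℕ → Set ℕ → Prop := fun t C =>
      s ⊆ t → ∀ a ∈ C, rej D (insert a t) (C ∩ Set.Ioi a) with hPdef
    have hmono : ∀ t C C', C' ⊆ C → P t C → P t C' := by
      intro t C C' hsub h hs a haC'
      exact rej_mono (Set.inter_subset_inter_left _ hsub) (h hs a (hsub haC'))
    have hstep : ∀ t ∈ (s ∪ F).powerset.toList, ∀ C, C ⊆ Ac → C.Infinite →
        ∃ C', C' ⊆ C ∧ C'.Infinite ∧ P t C' := by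
      intro t htm C hCA hCinf
      rw [Finset.mem_toList, Finset.mem_powerset] at htm
      by_cases hs : s ⊆ t
      · have habt : Ab t C := Ab_mono (Ab_mono_left htm hab) hCA
        have hrejt : rej D t C := rej_mono hCA (hrj t hs htm)
        obtain ⟨B, h1, h2, h3⟩ := rejext D hCinf habt hrejt
        exact ⟨B, h1, h2, fun _ => h3⟩
      · exact ⟨C, subset_rfl, hCinf, fun hs' => absurd hs' hs⟩
    obtain ⟨C', hC'Ac, hC'inf, hP⟩ :=
      shrinkList Ac P hmono (s ∪ F).powerset.toList hstep Ac subset_rfl hinf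
    obtain ⟨b, hb⟩ := hC'inf.nonempty
    have hbAc : b ∈ Ac := hC'Ac hb
    have hbns : b ∉ s ∪ F := fun hbs => lt_irrefl b (hab b hbs b hbAc)
    refine ⟨b, (insert b F, C' ∩ Set.Ioi b), ⟨hbAc, rfl, Set.inter_subset_inter_left _ hC'Ac⟩,
      (Set.inter_subset_left.trans hC'Ac).trans hsubA,
      inf_inter_Ioi hC'inf b, ?_, ?_⟩
    · intro m hm a ha
      rcases Finset.mem_union.mp hm with hm | hm
      · exact hab m (Finset.mem_union_left _ hm) a (hC'Ac ha.1)
      · rcases Finset.mem_insert.mp hm with rfl | hm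
        · exact ha.2
        · exact hab m (Finset.mem_union_right _ hm) a (hC'Ac ha.1)
    · intro t' hst' ht'sub
      by_cases hbt : b ∈ t'
      · set t := t'.erase b with htdef
        have hts : t ⊆ s ∪ F := by
          intro k hk
          have hk1 := Finset.mem_of_mem_erase hk
          have hk2 := Finset.ne_of_mem_erase hk
          rcases Finset.mem_union.mp (ht'sub hk1) with h | h
          · exact Finset.mem_union_left _ h
          · rcases Finset.mem_insert.mp h with rfl | h
            · exact absurd rfl hk2
            · exact Finset.mem_union_right _ h
        have hst : s ⊆ t := by
          intro k hk
          refine Finset.mem_erase.mpr ⟨?_, hst' hk⟩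
          rintro rfl
          exact hbns (Finset.mem_union_left _ hk)
        have := hP t (by rw [Finset.mem_toList, Finset.mem_powerset]; exact hts) hst b hb
        rwa [Finset.insert_erase hbt] at this
      · have ht's : t' ⊆ s ∪ F := by
          intro k hk
          rcases Finset.mem_union.mp (ht'sub hk) with h | h
          · exact Finset.mem_union_left _ h
          · rcases Finset.mem_insert.mp h with rfl | h
            · exact absurd hk hbt
            · exact Finset.mem_union_right _ h
        exact rej_mono (Set.inter_subset_left.trans hC'Ac) (hrj t' hst' ht's)
  have hQ0 : Q (∅, A) := by
    refine ⟨subset_rfl, hA, by simpa using hAb, ?_⟩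
    intro t hst hts
    rw [Finset.union_empty] at hts
    rwa [Finset.Subset.antisymm hts hst]
  obtain ⟨St, bs, hSt0, hQa, hR⟩ := chain Q R step (∅, A) hQ0
  have hmem : ∀ i, bs i ∈ (St i).2 := fun i => (hR i).1
  have hsubA : ∀ i, (St i).2 ⊆ A := fun i => (hQa i).1
  have hdec1 : ∀ i, (St (i+1)).2 ⊆ (St i).2 := fun i =>
    (hR i).2.2.trans Set.inter_subset_left
  have hdec : ∀ i j, i ≤ j → (St j).2 ⊆ (St i).2 := by
    intro i j hij
    induction hij with
    | refl => exact subset_rfl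
    | step hj ih => exact (hdec1 _).trans ih
  have hbsmono : StrictMono bs := by
    apply strictMono_nat_of_lt_succ
    intro i
    exact ((hR i).2.2 (hmem (i+1))).2
  have hF : ∀ i, (St i).1 = Finset.image bs (Finset.range i) := by
    intro i
    induction i with
    | zero => rw [hSt0]; simp
    | succ i ih => rw [(hR i).2.1, ih, Finset.range_add_one, Finset.image_insert]
  set B : Set ℕ := Set.range bs with hBdef
  have hBA : B ⊆ A := by rintro k ⟨i, rfl⟩; exact hsubA i (hmem i)
  have hAbB : Ab s B := by
    rintro m hm k ⟨i, rfl⟩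
    exact (hQa i).2.2.1 m (Finset.mem_union_left _ hm) _ (hmem i)
  refine ⟨B, hBA, Set.infinite_range_of_injective hbsmono.injective, Or.inr ?_⟩
  rw [Set.disjoint_left]
  intro x hx hxU
  obtain ⟨t₀, ht₀D, ht₀x⟩ := hxU
  set t : Finset ℕ := s ∪ t₀ with htdef
  have htrange : ↑t ⊆ Set.range x.1 := by
    rw [Finset.coe_union]
    exact Set.union_subset hx.1 ht₀x.1
  have htB : ∀ k ∈ t, k ∉ s → k ∈ B := by
    intro k hk hks
    rcases hx.2 (htrange hk) with h | h
    · exact absurd h hks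
    · exact h
  set i0 : ℕ := (t \ s).sup id + 1 with hi0def
  have hstage : t ⊆ s ∪ (St i0).1 := by
    intro k hk
    by_cases hks : k ∈ s
    · exact Finset.mem_union_left _ hks
    · obtain ⟨j, hj⟩ := htB k hk hks
      have hjk : j ≤ k := hj ▸ hbsmono.le_apply
      have hksup : k ≤ (t \ s).sup id := Finset.le_sup (f := id) (Finset.mem_sdiff.mpr ⟨hk, hks⟩)
      refine Finset.mem_union_right _ ?_
      rw [hF i0]
      exact Finset.mem_image.mpr ⟨j, Finset.mem_range.mpr (by omega), hj⟩
  have hrejt : rej D t (St i0).2 :=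
    (hQa i0).2.2.2 t Finset.subset_union_left hstage
  refine hrejt ((St i0).2 ∩ Set.Ioi (t.sup id)) Set.inter_subset_left
    (inf_inter_Ioi (hQa i0).2.1 _) ?_
  intro y hy
  refine ⟨t₀, ht₀D, (Finset.coe_subset.mpr Finset.subset_union_right).trans hy.1, ?_⟩
  intro k hk hkt₀ m hm
  by_cases hkt : k ∈ t
  · have hks : k ∈ s := by
      rcases Finset.mem_union.mp hkt with h | h
      · exact h
      · exact absurd h hkt₀
    exact ht₀x.2 k (hx.1 hks) hkt₀ m hm
  · have hkC : k ∈ (St i0).2 ∩ Set.Ioi (t.sup id) := by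
      rcases hy.2 hk with h | h
      · exact absurd h hkt
      · exact h
    have hmle : m ≤ t.sup id := Finset.le_sup (f := id) (Finset.mem_union_right _ hm)
    have := hkC.2
    rw [Set.mem_Ioi] at this
    omega


theorem crUnion (Xf : ℕ → Set M) (h : ∀ n, CR (Xf n)) : CR (⋃ n, Xf n) := by
  classical
  intro s A hA hAb
  set Q : ℕ × Finset ℕ × Set ℕ → Prop := fun p =>
    p.2.2 ⊆ A ∧ p.2.2.Infinite ∧ Ab (s ∪ p.2.1) p.2.2 with hQdef
  set R : ℕ × Finset ℕ × Set ℕ → ℕ × Set ℕ → ℕ × Finset ℕ × Set ℕ → Prop := fun p q p' =>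
    p'.1 = p.1 + 1 ∧ q.2 ⊆ p.2.2 ∧
      (∀ t n, s ⊆ t → t ⊆ s ∪ p.2.1 → n ≤ p.1 →
        (Cyl t q.2 ⊆ Xf n ∨ Disjoint (Cyl t q.2) (Xf n))) ∧
      q.1 ∈ q.2 ∧ p'.2.1 = insert q.1 p.2.1 ∧ p'.2.2 = q.2 ∩ Set.Ioi q.1 with hRdef
  have step : ∀ st, Q st → ∃ q st', R st q st' ∧ Q st' := by
    rintro ⟨i, F, Ac⟩ ⟨hsubA, hinf, hab⟩
    set P : Finset ℕ × ℕ → Set ℕ → Prop := fun tn C =>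
      s ⊆ tn.1 → (Cyl tn.1 C ⊆ Xf tn.2 ∨ Disjoint (Cyl tn.1 C) (Xf tn.2)) with hPdef
    have hmono : ∀ tn C C', C' ⊆ C → P tn C → P tn C' := by
      intro tn C C' hsub hp hs
      rcases hp hs with h' | h'
      · exact Or.inl ((Cyl_mono hsub).trans h')
      · exact Or.inr (h'.mono_left (Cyl_mono hsub))
    have hstep : ∀ tn ∈ ((s ∪ F).powerset ×ˢ Finset.range (i+1)).toList,
        ∀ C, C ⊆ Ac → C.Infinite → ∃ C', C' ⊆ C ∧ C'.Infinite ∧ P tn C' := by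
      intro tn htn C hCA hCinf
      by_cases hs : s ⊆ tn.1
      · rw [Finset.mem_toList, Finset.mem_product, Finset.mem_powerset] at htn
        have habt : Ab tn.1 C := Ab_mono (Ab_mono_left htn.1 hab) hCA
        obtain ⟨B, h1, h2, h3⟩ := h tn.2 tn.1 C hCinf habt
        exact ⟨B, h1, h2, fun _ => h3⟩
      · exact ⟨C, subset_rfl, hCinf, fun hs' => absurd hs' hs⟩
    obtain ⟨C', hC'Ac, hC'inf, hP⟩ := shrinkList Ac P hmono _ hstep Ac subset_rfl hinf
    obtain ⟨b, hb⟩ := hC'inf.nonempty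
    refine ⟨(b, C'), (i+1, insert b F, C' ∩ Set.Ioi b), ⟨rfl, hC'Ac, ?_, hb, rfl, rfl⟩,
      (Set.inter_subset_left.trans hC'Ac).trans hsubA, inf_inter_Ioi hC'inf b, ?_⟩
    · intro t n hst hts hn
      have htn : (t, n) ∈ ((s ∪ F).powerset ×ˢ Finset.range (i+1)).toList := by
        rw [Finset.mem_toList, Finset.mem_product, Finset.mem_powerset]
        exact ⟨hts, Finset.mem_range.mpr (by omega)⟩
      exact hP (t, n) htn hst
    · intro m hm a ha
      rcases Finset.mem_union.mp hm with hm | hm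
      · exact hab m (Finset.mem_union_left _ hm) a (hC'Ac ha.1)
      · rcases Finset.mem_insert.mp hm with rfl | hm
        · exact ha.2
        · exact hab m (Finset.mem_union_right _ hm) a (hC'Ac ha.1)
  have hQ0 : Q (0, ∅, A) := ⟨subset_rfl, hA, by simpa using hAb⟩
  obtain ⟨St, qs, hSt0, hQa, hR⟩ := chain Q R step (0, ∅, A) hQ0
  set bs : ℕ → ℕ := fun i => (qs i).1 with hbs
  set Ap : ℕ → Set ℕ := fun i => (qs i).2 with hApdef
  have hidx : ∀ i, (St i).1 = i := by
    intro i
    induction i with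
    | zero => rw [hSt0]
    | succ i ih => rw [(hR i).1, ih]
  have hApsub : ∀ i, Ap i ⊆ (St i).2.2 := fun i => (hR i).2.1
  have hmem : ∀ i, bs i ∈ Ap i := fun i => (hR i).2.2.2.1
  have hnext : ∀ i, (St (i+1)).2.2 = Ap i ∩ Set.Ioi (bs i) := fun i => (hR i).2.2.2.2.2
  have hsubA : ∀ i, (St i).2.2 ⊆ A := fun i => (hQa i).1
  have hdec1 : ∀ i, (St (i+1)).2.2 ⊆ (St i).2.2 := fun i =>
    (hnext i) ▸ (Set.inter_subset_left.trans (hApsub i))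
  have hdecr : ∀ i j, i ≤ j → (St j).2.2 ⊆ (St i).2.2 := by
    intro i j hij
    induction hij with
    | refl => exact subset_rfl
    | step hj ih => exact (hdec1 _).trans ih
  have hbsmono : StrictMono bs := by
    apply strictMono_nat_of_lt_succ
    intro i
    have : bs (i+1) ∈ (St (i+1)).2.2 := hApsub (i+1) (hmem (i+1))
    rw [hnext i] at this
    exact this.2
  have hF : ∀ i, (St i).2.1 = Finset.image bs (Finset.range i) := by
    intro i
    induction i with
    | zero => rw [hSt0]; simp
    | succ i ih => rw [(hR i).2.2.2.2.1, ih, Finset.range_add_one, Finset.image_insert]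
  set B : Set ℕ := Set.range bs with hBdef
  have hBA : B ⊆ A := by rintro k ⟨i, rfl⟩; exact hsubA i (hApsub i (hmem i))
  have hBinf : B.Infinite := Set.infinite_range_of_injective hbsmono.injective
  have hAbB : Ab s B := by
    rintro m hm k ⟨i, rfl⟩
    exact (hQa i).2.2 m (Finset.mem_union_left _ hm) _ (hApsub i (hmem i))
  -- key decidedness property
  have keyP : ∀ t n, s ⊆ t → ↑(t \ s) ⊆ B → n < (t \ s).card →
      ∃ C, (∀ k ∈ B, (∀ m ∈ t, m < k) → k ∈ C) ∧
        (Cyl t C ⊆ Xf n ∨ Disjoint (Cyl t C) (Xf n)) := by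
    intro t n hst htB hn
    have hne : (t \ s).Nonempty := Finset.card_pos.mp (lt_of_le_of_lt (Nat.zero_le n) hn)
    set mx := (t \ s).max' hne with hmx
    have hmxB : mx ∈ B := htB ((t \ s).max'_mem hne)
    obtain ⟨jstar, hjstar⟩ := hmxB
    have hcard : (t \ s).card ≤ jstar + 1 := by
      have hsub : t \ s ⊆ Finset.image bs (Finset.range (jstar + 1)) := by
        intro k hk
        obtain ⟨j, hj⟩ := htB hk
        have hkmx : k ≤ mx := Finset.le_max' _ _ hk
        have hjj : j ≤ jstar := hbsmono.le_iff_le.mp (by rw [hj, hjstar]; exact hkmx)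
        exact Finset.mem_image.mpr ⟨j, Finset.mem_range.mpr (by omega), hj⟩
      calc (t \ s).card ≤ (Finset.image bs (Finset.range (jstar+1))).card :=
            Finset.card_le_card hsub
        _ ≤ (Finset.range (jstar+1)).card := Finset.card_image_le
        _ = jstar + 1 := Finset.card_range _
    have hts : t ⊆ s ∪ (St (jstar+1)).2.1 := by
      intro k hk
      by_cases hks : k ∈ s
      · exact Finset.mem_union_left _ hks
      · obtain ⟨j, hj⟩ := htB (Finset.mem_sdiff.mpr ⟨hk, hks⟩)
        have hkmx : k ≤ mx := Finset.le_max' _ _ (Finset.mem_sdiff.mpr ⟨hk, hks⟩)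
        have hjj : j ≤ jstar := hbsmono.le_iff_le.mp (by rw [hj, hjstar]; exact hkmx)
        refine Finset.mem_union_right _ ?_
        rw [hF]
        exact Finset.mem_image.mpr ⟨j, Finset.mem_range.mpr (by omega), hj⟩
    have hdecide := (hR (jstar+1)).2.2.1 t n hst hts (by rw [hidx]; omega)
    refine ⟨Ap (jstar+1), ?_, hdecide⟩
    intro k hkB hkt
    obtain ⟨j, hj⟩ := hkB
    have hmxt : mx ∈ t := (Finset.mem_sdiff.mp ((t \ s).max'_mem hne)).1
    have hkmx : mx < k := hkt mx hmxt
    have hji : jstar < j := hbsmono.lt_iff_lt.mp (by rw [hj, hjstar]; exact hkmx)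
    rcases eq_or_lt_of_le (show jstar + 1 ≤ j by omega) with heq | hlt
    · rw [← hj, ← heq]; exact hmem (jstar+1)
    · have : bs j ∈ (St (jstar+2)).2.2 := hdecr (jstar+2) j hlt (hApsub j (hmem j))
      rw [hnext (jstar+1)] at this
      rw [← hj]
      exact this.1
  -- the open family
  set Bt : Finset ℕ → Set ℕ := fun t => B ∩ {k | ∀ m ∈ t, m < k} with hBtdef
  set Dfam : Set (Finset ℕ) := {t | s ⊆ t ∧ ↑(t \ s) ⊆ B ∧ ∃ n, Cyl t (Bt t) ⊆ Xf n}
    with hDfam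
  obtain ⟨C₀, hC₀B, hC₀inf, hor⟩ := openRamsey Dfam s B hBinf hAbB
  have hAbC₀ : Ab s C₀ := Ab_mono hAbB hC₀B
  rcases hor with hor | hor
  · refine ⟨C₀, hC₀B.trans hBA, hC₀inf, Or.inl ?_⟩
    intro x hx
    obtain ⟨t, htD, htx⟩ := hor hx
    obtain ⟨hst, htB', n, hCyl⟩ := htD
    refine Set.mem_iUnion.mpr ⟨n, hCyl ⟨htx.1, ?_⟩⟩
    intro k hk
    by_cases hkt : k ∈ t
    · exact Or.inl hkt
    · right
      have hkm : ∀ m ∈ t, m < k := htx.2 k hk (by simpa using hkt)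
      have hkB : k ∈ B := by
        rcases hx.2 hk with h' | h'
        · exact absurd (hst (by simpa using h')) (by simpa using hkt)
        · exact hC₀B h'
      exact ⟨hkB, hkm⟩
  · refine ⟨C₀, hC₀B.trans hBA, hC₀inf, Or.inr ?_⟩
    rw [Set.disjoint_left]
    intro x hx hxU
    obtain ⟨n, hxn⟩ := Set.mem_iUnion.mp hxU
    set l := s.card with hl
    set timg : Finset ℕ := Finset.image (fun j => x.1 (l + j)) (Finset.range (n+1))
      with htimg
    set t : Finset ℕ := s ∪ timg with ht
    have htimgC₀ : ∀ k ∈ timg, k ∈ C₀ := by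
      intro k hk
      obtain ⟨j, hj, rfl⟩ := Finset.mem_image.mp hk
      exact coords_tail hAbC₀ hx (Nat.le_add_right _ _)
    have htimgns : ∀ k ∈ timg, k ∉ s := by
      intro k hk hks
      exact lt_irrefl k (hAbC₀ k hks k (htimgC₀ k hk))
    have htsdiff : t \ s = timg := by
      ext k
      rw [Finset.mem_sdiff, ht, Finset.mem_union]
      constructor
      · rintro ⟨h1 | h1, h2⟩
        · exact absurd h1 h2
        · exact h1
      · intro h1
        exact ⟨Or.inr h1, htimgns k h1⟩
    have hinj : Function.Injective (fun j => x.1 (l + j)) := by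
      intro a b hab
      have := x.2.injective hab
      omega
    have hcard : (t \ s).card = n + 1 := by
      rw [htsdiff, htimg, Finset.card_image_of_injective _ hinj, Finset.card_range]
    have htsB : ↑(t \ s) ⊆ B := by
      rw [htsdiff]
      intro k hk
      exact hC₀B (htimgC₀ k hk)
    obtain ⟨C, hBtC, hdecide⟩ := keyP t n Finset.subset_union_left htsB (by omega)
    have hbig : ∀ k, k ∈ Set.range x.1 → k ∉ t → k ∈ C₀ ∧ ∀ m ∈ t, m < k := by
      rintro k ⟨j, rfl⟩ hkt
      have hjl : l ≤ j := by
        by_contra h'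
        push_neg at h'
        exact hkt (Finset.mem_union_left _ (coords_head hAbC₀ hx h'))
      have hjn : l + n < j := by
        by_contra h'
        push_neg at h'
        refine hkt (Finset.mem_union_right _ ?_)
        rw [htimg]
        refine Finset.mem_image.mpr ⟨j - l, Finset.mem_range.mpr (by omega), ?_⟩
        have hq : l + (j - l) = j := by omega
        simp only [hq]
      have hkC₀ : x.1 j ∈ C₀ := coords_tail hAbC₀ hx hjl
      refine ⟨hkC₀, ?_⟩
      intro m hm
      rcases Finset.mem_union.mp hm with hm | hm
      · exact hAbC₀ m hm _ hkC₀
      · obtain ⟨j', hj', rfl⟩ := Finset.mem_image.mp hm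
        rw [Finset.mem_range] at hj'
        exact x.2 (by omega)
    have hxtC : x ∈ Cyl t C := by
      refine ⟨?_, ?_⟩
      · intro k hk
        have hk' : k ∈ s ∪ timg := by rw [← ht]; exact_mod_cast hk
        rcases Finset.mem_union.mp hk' with h' | h'
        · exact hx.1 h'
        · obtain ⟨j, _, rfl⟩ := Finset.mem_image.mp h'
          exact ⟨l + j, rfl⟩
      · intro k hk
        by_cases hkt : k ∈ t
        · exact Or.inl (by simpa using hkt)
        · obtain ⟨h1, h2⟩ := hbig k hk hkt
          exact Or.inr (hBtC k (hC₀B h1) h2)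
    rcases hdecide with hdecide | hdecide
    · have htD : t ∈ Dfam := by
        refine ⟨Finset.subset_union_left, htsB, n, ?_⟩
        refine (Cyl_mono ?_).trans hdecide
        intro k hk
        exact hBtC k hk.1 hk.2
      have hxUD : x ∈ UD Dfam := by
        refine ⟨t, htD, hxtC.1, ?_⟩
        intro k hk hkt m hm
        exact (hbig k hk (by simpa using hkt)).2 m hm
      exact Set.disjoint_left.mp hor hx hxUD
    · exact Set.disjoint_left.mp hdecide hxtC hxn


lemma cr_empty : CR (∅ : Set M) := fun _ A hA _ =>
  ⟨A, subset_rfl, hA, Or.inr (Set.disjoint_empty _)⟩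

lemma cr_compl {X : Set M} (h : CR X) : CR Xᶜ := by
  intro s A hA hAb
  obtain ⟨B, h1, h2, h3⟩ := h s A hA hAb
  rcases h3 with h3 | h3
  · exact ⟨B, h1, h2, Or.inr (Set.disjoint_left.mpr fun x hx hxc => hxc (h3 hx))⟩
  · exact ⟨B, h1, h2, Or.inl fun x hx => Set.disjoint_left.mp h3 hx⟩

def mCR : MeasurableSpace M where
  MeasurableSet' := CR
  measurableSet_empty := cr_empty
  measurableSet_compl := fun _ h => cr_compl h
  measurableSet_iUnion := fun f hf => crUnion f hf

lemma hval_aux : @Measurable M (ℕ → ℕ) mCR _ Subtype.val := by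
  letI : MeasurableSpace M := mCR
  exact measurable_pi_iff.mpr fun n S hS => gen_CR n S

lemma measurable_to_CR : ∀ X : Set M, MeasurableSet X → CR X := by
  have hval := hval_aux
  intro X hX
  obtain ⟨W, hW, rfl⟩ :=
    (MeasurableSpace.measurableSet_comap (f := (Subtype.val : M → ℕ → ℕ))).mp hX
  exact hval hW

theorem main {V : Type*} [Fintype V] [MeasurableSpace V]
    [MeasurableSingletonClass V] (E : V → V → Prop)
    (S : M → M)
    (hS : ∀ x n, (S x).1 n = x.1 (n+1))
    (ψ : M → V) (hψ : Measurable ψ)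
    (hhom : ∀ y, E (ψ y) (ψ (S y))) :
    ∃ v : V, E v v := by
  classical
  set Xv : V → Set M := fun v => ψ ⁻¹' {v} with hXv
  have hCRv : ∀ v, CR (Xv v) := fun v => measurable_to_CR _ (hψ (measurableSet_singleton v))
  have hlist : ∀ L : List V, ∀ A : Set ℕ, A.Infinite →
      ∃ B, B ⊆ A ∧ B.Infinite ∧
        ∀ v ∈ L, (Cyl ∅ B ⊆ Xv v ∨ Disjoint (Cyl ∅ B) (Xv v)) := by
    intro L
    induction L with
    | nil => exact fun A hA => ⟨A, subset_rfl, hA, by simp⟩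
    | cons v L ih =>
      intro A hA
      obtain ⟨B1, h1, h2, h3⟩ := hCRv v ∅ A hA (fun m hm => absurd hm (Finset.notMem_empty m))
      obtain ⟨B2, h4, h5, h6⟩ := ih B1 h2
      refine ⟨B2, h4.trans h1, h5, ?_⟩
      intro w hw
      rcases List.mem_cons.mp hw with rfl | hw
      · rcases h3 with h3 | h3
        · exact Or.inl ((Cyl_mono h4).trans h3)
        · exact Or.inr (h3.mono_left (Cyl_mono h4))
      · exact h6 w hw
  obtain ⟨B, hBuniv, hBinf, hdec⟩ := hlist Finset.univ.toList Set.univ Set.infinite_univ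
  have hBinf' : (setOf (· ∈ B)).Infinite := hBinf
  have hBset : ∀ n, Nat.nth (· ∈ B) n ∈ B := fun n => Nat.nth_mem_of_infinite hBinf' n
  set e : M := ⟨Nat.nth (· ∈ B), Nat.nth_strictMono hBinf'⟩ with he
  have heB : e ∈ Cyl ∅ B := by
    refine ⟨by simp, ?_⟩
    rintro k ⟨n, rfl⟩
    exact Or.inr (hBset n)
  set v := ψ e with hv
  have hsub : Cyl ∅ B ⊆ Xv v := by
    rcases hdec v (by simp) with h | h
    · exact h
    · exact absurd (show e ∈ Xv v from rfl) (fun hh => Set.disjoint_left.mp h heB hh)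
  have hSe : S e ∈ Cyl ∅ B := by
    refine ⟨by simp, ?_⟩
    rintro k ⟨n, rfl⟩
    rw [hS e n]
    exact Or.inr (hBset (n+1))
  have h1 : ψ (S e) = v := hsub hSe
  refine ⟨v, ?_⟩
  have h2 := hhom e
  rwa [h1] at h2

end GP
end GalvinPrikry

theorem stmt18 {V : Type*} [Fintype V] [MeasurableSpace V]
    [MeasurableSingletonClass V] (E : V → V → Prop)
    (S : {x : ℕ → ℕ // StrictMono x} → {x : ℕ → ℕ // StrictMono x})
    (hS : ∀ x n, (S x).1 n = x.1 (n+1))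
    (ψ : {x : ℕ → ℕ // StrictMono x} → V) (hψ : Measurable ψ)
    (hhom : ∀ y, E (ψ y) (ψ (S y))) :
    ∃ v : V, E v v :=
  GP.main E S hS ψ hψ hhom
end
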